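/- arXiv:2506.19311 — 8 statements merged into one kernel-verified Lean document; each statement's English description precedes it below -/
import Mathlib

section
/- The identity ∫₀^1 (e^{-t} − 1)/t dt + ∫₁^∞ e^{-t}/t dt = −γ holds, where γ is the Euler–Mascheroni constant. -/
open MeasureTheory Real Set Filter Topology

-- integrability of log * exp(-·) on (0,1]
lemma aux_int_logexp_Ioc :
    IntegrableOn (fun t : ℝ => Real.log t * Real.exp (-t)) (Set.Ioc 0 1) := by
  have hb : IntegrableOn (fun t : ℝ => 2 * t ^ (-(1:ℝ)/2)) (Set.Ioc 0 1) := by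
    have h := intervalIntegral.intervalIntegrable_rpow' (a := 0) (b := 1)
      (r := -(1:ℝ)/2) (by norm_num)
    rw [intervalIntegrable_iff_integrableOn_Ioc_of_le zero_le_one] at h
    exact h.const_mul 2
  refine hb.mono' ((Real.measurable_log.mul (by fun_prop)).aestronglyMeasurable) ?_
  filter_upwards [ae_restrict_mem measurableSet_Ioc] with t ht
  have ht0 : (0:ℝ) < t := ht.1
  have hlog : Real.log t ≤ 0 := Real.log_nonpos ht0.le ht.2
  have hexp : Real.exp (-t) ≤ 1 := by
    rw [Real.exp_le_one_iff]; linarith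
  have hrp : (0:ℝ) < t ^ (-(1:ℝ)/2) := Real.rpow_pos_of_pos ht0 _
  have key : -Real.log t ≤ 2 * t ^ (-(1:ℝ)/2) := by
    have h1 : Real.log (t ^ (-(1:ℝ)/2)) = (-(1:ℝ)/2) * Real.log t :=
      Real.log_rpow ht0 _
    have h2 : Real.log (t ^ (-(1:ℝ)/2)) ≤ t ^ (-(1:ℝ)/2) - 1 :=
      Real.log_le_sub_one_of_pos hrp
    nlinarith
  rw [norm_mul, Real.norm_eq_abs, Real.norm_eq_abs, abs_of_nonpos hlog,
    abs_of_pos (Real.exp_pos _)]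
  calc -Real.log t * Real.exp (-t) ≤ -Real.log t * 1 := by
        apply mul_le_mul_of_nonneg_left hexp; linarith
    _ ≤ 2 * t ^ (-(1:ℝ)/2) := by rw [mul_one]; exact key

lemma aux_int_logexp_Ioi :
    IntegrableOn (fun t : ℝ => Real.log t * Real.exp (-t)) (Set.Ioi 1) := by
  have hb : IntegrableOn (fun x : ℝ => Real.exp (-x) * x ^ ((2:ℝ) - 1)) (Set.Ioi 1) :=
    (Real.GammaIntegral_convergent (by norm_num : (0:ℝ) < 2)).mono_set
      (Set.Ioi_subset_Ioi zero_le_one)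
  refine hb.mono' ((Real.measurable_log.mul (by fun_prop)).aestronglyMeasurable) ?_
  filter_upwards [ae_restrict_mem measurableSet_Ioi] with t ht
  have ht1 : (1:ℝ) < t := ht
  have ht0 : (0:ℝ) < t := by linarith
  have hlog0 : 0 ≤ Real.log t := Real.log_nonneg ht1.le
  have hlogt : Real.log t ≤ t := (Real.log_le_sub_one_of_pos ht0).trans (by linarith)
  rw [norm_mul, Real.norm_eq_abs, Real.norm_eq_abs, abs_of_nonneg hlog0,
    abs_of_pos (Real.exp_pos _)]
  have : t ^ ((2:ℝ) - 1) = t := by norm_num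
  rw [this, mul_comm (Real.exp (-t)) t]
  exact mul_le_mul_of_nonneg_right hlogt (Real.exp_pos _).le

lemma aux_int_main :
    IntegrableOn (fun t : ℝ => (Real.exp (-t) - 1) / t) (Set.Ioc 0 1) := by
  refine Measure.integrableOn_of_bounded (M := 1) (by simp) ?_ ?_
  · apply Measurable.aestronglyMeasurable; fun_prop
  · filter_upwards [ae_restrict_mem measurableSet_Ioc] with t ht
    have ht0 : (0:ℝ) < t := ht.1
    have h1 : Real.exp (-t) - 1 ≤ 0 := by
      have : Real.exp (-t) ≤ 1 := by rw [Real.exp_le_one_iff]; linarith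
      linarith
    have h2 : 1 - Real.exp (-t) ≤ t := by
      have := Real.add_one_le_exp (-t); linarith
    rw [Real.norm_eq_abs, abs_div, abs_of_nonpos h1, abs_of_pos ht0,
      div_le_one ht0]
    linarith

lemma aux_int_tail :
    IntegrableOn (fun t : ℝ => Real.exp (-t) / t) (Set.Ioi 1) := by
  have hb : IntegrableOn (fun x : ℝ => Real.exp (-1 * x)) (Set.Ioi 1) :=
    exp_neg_integrableOn_Ioi 1 one_pos
  refine hb.mono' (by apply Measurable.aestronglyMeasurable; fun_prop) ?_
  filter_upwards [ae_restrict_mem measurableSet_Ioi] with t ht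
  have ht1 : (1:ℝ) < t := ht
  rw [Real.norm_eq_abs, abs_div, abs_of_pos (Real.exp_pos _),
    abs_of_pos (by linarith : (0:ℝ) < t), neg_one_mul,
    div_le_iff₀ (by linarith)]
  nlinarith [Real.exp_pos (-t)]

lemma aux_integral_log_exp :
    ∫ t in Set.Ioi (0:ℝ), Real.log t * Real.exp (-t) = -Real.eulerMascheroniConstant := by
  have h1 : HasDerivAt Complex.GammaIntegral
      (∫ t : ℝ in Set.Ioi 0, (t:ℂ) ^ ((1:ℂ) - 1) * (Real.log t * Real.exp (-t))) 1 :=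
    Complex.hasDerivAt_GammaIntegral (by simp)
  have hmem : {s : ℂ | 0 < s.re} ∈ 𝓝 (1:ℂ) :=
    (isOpen_lt continuous_const Complex.continuous_re).mem_nhds (by simp)
  have heq : Complex.GammaIntegral =ᶠ[𝓝 (1:ℂ)] Complex.Gamma :=
    eventually_of_mem hmem fun s hs => (Complex.Gamma_eq_integral hs).symm
  have h2 := Complex.hasDerivAt_Gamma_one.congr_of_eventuallyEq heq
  have h3 := h1.unique h2
  have hco : ∀ r : ℝ, (r : ℂ) = @RCLike.ofReal ℂ _ r := fun r => rfl
  have h4 : (∫ t : ℝ in Set.Ioi 0, (t:ℂ) ^ ((1:ℂ) - 1) * (Real.log t * Real.exp (-t)))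
      = Complex.ofReal (∫ t in Set.Ioi (0:ℝ), Real.log t * Real.exp (-t)) := by
    conv_rhs => rw [hco, ← integral_ofReal]
    refine setIntegral_congr_fun measurableSet_Ioi fun t ht => ?_
    rw [← hco]
    simp
  rw [h4] at h3
  rw [show -((Real.eulerMascheroniConstant : ℝ) : ℂ)
      = ((-Real.eulerMascheroniConstant : ℝ) : ℂ) by push_cast; ring] at h3
  exact Complex.ofReal_injective h3

lemma aux_Ioc :
    ∫ t in Set.Ioc (0:ℝ) 1, (Real.exp (-t) - 1) / t
      = ∫ t in Set.Ioc (0:ℝ) 1, Real.log t * Real.exp (-t) := by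
  have hfeq : (fun t : ℝ => Real.exp (-t) * Real.log t + (1 - Real.exp (-t)) * t⁻¹)
      = fun t => Real.log t * Real.exp (-t) - (Real.exp (-t) - 1) / t := by
    funext t; rw [div_eq_mul_inv]; ring
  have hint : IntegrableOn
      (fun t : ℝ => Real.exp (-t) * Real.log t + (1 - Real.exp (-t)) * t⁻¹)
      (Set.Ioc 0 1) := by
    rw [hfeq]; exact aux_int_logexp_Ioc.sub aux_int_main
  have hderiv : ∀ x ∈ Set.Ioo (0:ℝ) 1,
      HasDerivAt (fun t : ℝ => (1 - Real.exp (-t)) * Real.log t)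
        (Real.exp (-x) * Real.log x + (1 - Real.exp (-x)) * x⁻¹) x := by
    intro x hx
    have h1 : HasDerivAt (fun t : ℝ => 1 - Real.exp (-t)) (Real.exp (-x)) x := by
      have h := (Real.hasDerivAt_exp (-x)).comp x (hasDerivAt_neg x)
      simpa using h.const_sub 1
    exact h1.mul (Real.hasDerivAt_log hx.1.ne')
  have h0 : Filter.Tendsto (fun t : ℝ => (1 - Real.exp (-t)) * Real.log t)
      (nhdsWithin 0 (Set.Ioi 0)) (nhds 0) := by
    have hbound : Filter.Tendsto (fun t : ℝ => -(t * Real.log t))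
        (nhdsWithin 0 (Set.Ioi 0)) (nhds 0) := by
      have h := (Real.continuous_mul_log.tendsto 0).neg
      simpa using h.mono_left nhdsWithin_le_nhds
    apply squeeze_zero_norm' _ hbound
    filter_upwards [Ioo_mem_nhdsGT_of_mem (Set.left_mem_Ico.2 zero_lt_one)] with t ht
    have ht0 : (0:ℝ) < t := ht.1
    have hlog : Real.log t ≤ 0 := Real.log_nonpos ht0.le ht.2.le
    have he1 : Real.exp (-t) ≤ 1 := by rw [Real.exp_le_one_iff]; linarith
    have he2 : 1 - Real.exp (-t) ≤ t := by have := Real.add_one_le_exp (-t); linarith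
    rw [Real.norm_eq_abs, abs_mul, abs_of_nonneg (by linarith : (0:ℝ) ≤ 1 - Real.exp (-t)),
      abs_of_nonpos hlog]
    nlinarith
  have h1t : Filter.Tendsto (fun t : ℝ => (1 - Real.exp (-t)) * Real.log t)
      (nhdsWithin 1 (Set.Iio 1)) (nhds 0) := by
    have hc : ContinuousAt (fun t : ℝ => (1 - Real.exp (-t)) * Real.log t) 1 := by
      exact ((continuous_const.sub (Real.continuous_exp.comp continuous_neg)).continuousAt).mul
        (Real.continuousAt_log one_ne_zero)
    have h := hc.tendsto.mono_left (nhdsWithin_le_nhds (s := Set.Iio 1))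
    simpa using h
  have key := intervalIntegral.integral_eq_sub_of_hasDerivAt_of_tendsto zero_lt_one hderiv
    ((intervalIntegrable_iff_integrableOn_Ioc_of_le zero_le_one).2 hint) h0 h1t
  rw [intervalIntegral.integral_of_le zero_le_one] at key
  rw [hfeq] at key
  rw [integral_sub aux_int_logexp_Ioc aux_int_main] at key
  linarith [key]

lemma aux_Ioi :
    ∫ t in Set.Ioi (1:ℝ), Real.exp (-t) / t
      = ∫ t in Set.Ioi (1:ℝ), Real.log t * Real.exp (-t) := by
  have hint : IntegrableOn
      (fun t : ℝ => Real.log t * Real.exp (-t) - Real.exp (-t) / t) (Set.Ioi 1) :=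
    aux_int_logexp_Ioi.sub aux_int_tail
  have hderiv : ∀ x ∈ Set.Ici (1:ℝ),
      HasDerivAt (fun t : ℝ => -(Real.exp (-t) * Real.log t))
        (Real.log x * Real.exp (-x) - Real.exp (-x) / x) x := by
    intro x hx
    have hx0 : (0:ℝ) < x := lt_of_lt_of_le one_pos hx
    have h1 : HasDerivAt (fun t : ℝ => Real.exp (-t)) (-Real.exp (-x)) x := by
      have h := (Real.hasDerivAt_exp (-x)).comp x (hasDerivAt_neg x)
      simp at h; exact h
    have h2 := (h1.mul (Real.hasDerivAt_log hx0.ne')).neg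
    have h3 := h2.congr_deriv (show _ = Real.log x * Real.exp (-x) - Real.exp (-x) / x by
      rw [div_eq_mul_inv]; ring)
    exact h3
  have htend : Filter.Tendsto (fun t : ℝ => -(Real.exp (-t) * Real.log t))
      Filter.atTop (nhds 0) := by
    have hbound : Filter.Tendsto (fun t : ℝ => t * Real.exp (-t)) Filter.atTop (nhds 0) := by
      simpa using Real.tendsto_pow_mul_exp_neg_atTop_nhds_zero 1
    apply squeeze_zero_norm' _ hbound
    filter_upwards [Filter.eventually_ge_atTop (1:ℝ)] with t ht
    have ht0 : (0:ℝ) < t := lt_of_lt_of_le one_pos ht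
    have hlog0 : 0 ≤ Real.log t := Real.log_nonneg ht
    have hlogt : Real.log t ≤ t := (Real.log_le_sub_one_of_pos ht0).trans (by linarith)
    rw [norm_neg, Real.norm_eq_abs, abs_mul, abs_of_pos (Real.exp_pos _),
      abs_of_nonneg hlog0, mul_comm]
    exact mul_le_mul_of_nonneg_right hlogt (Real.exp_pos _).le
  have key := integral_Ioi_of_hasDerivAt_of_tendsto' hderiv hint htend
  have hG1 : -(Real.exp (-(1:ℝ)) * Real.log 1) = 0 := by simp
  rw [hG1, sub_zero] at key
  rw [integral_sub aux_int_logexp_Ioi aux_int_tail] at key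
  linarith [key]

/-- `∫₀^1 (e^{-t} − 1)/t dt + ∫₁^∞ e^{-t}/t dt = −γ`, where `γ` is the
Euler–Mascheroni constant. -/
theorem integral_exp_sub_one_add_exp_int_eq_neg_eulerMascheroni :
    (∫ t in Set.Ioc (0 : ℝ) 1, (Real.exp (-t) - 1) / t) +
      (∫ t in Set.Ioi (1 : ℝ), Real.exp (-t) / t) = - Real.eulerMascheroniConstant := by
  rw [aux_Ioc, aux_Ioi, ← aux_integral_log_exp,
    ← setIntegral_union (Set.Ioc_disjoint_Ioi le_rfl) measurableSet_Ioi
      aux_int_logexp_Ioc aux_int_logexp_Ioi,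
    Set.Ioc_union_Ioi_eq_Ioi zero_le_one]
end

section
/- For every integer n ≥ 1, ∫_{1/4}^∞ ∫_s^∞ t^{n/2−1} e^{-t}/(2s) dt ds − ∫₀^{1/4} ∫₀^s t^{n/2−1} e^{-t}/(2s) dt ds = Γ'(n/2)/2 + Γ(n/2)·log 2, where Γ is the real Gamma function and Γ' its derivative. -/
open MeasureTheory Real

section GammaLogAux

open Set Complex Filter Asymptotics

/-- Mellin convergence of `log t • exp (-t)` at real `a > 0`. -/
lemma GammaLogAux.mellin_conv {a : ℝ} (ha : 0 < a) :
    MellinConvergent (fun t => Real.log t • ((Real.exp (-t) : ℝ) : ℂ)) (a : ℂ) := by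
  refine (mellin_hasDerivAt_of_isBigO_rpow (E := ℂ) (a := a + 1) (b := 0)
    ?_ ?_ ?_ ?_ ?_).1
  · refine (Continuous.continuousOn ?_).locallyIntegrableOn measurableSet_Ioi
    exact Complex.continuous_ofReal.comp (Real.continuous_exp.comp continuous_neg)
  · rw [← isBigO_norm_left]
    simp_rw [Complex.norm_real, isBigO_norm_left]
    simpa only [neg_one_mul] using (isLittleO_exp_neg_mul_rpow_atTop zero_lt_one _).isBigO
  · simpa using lt_add_one a
  · simp_rw [neg_zero, Real.rpow_zero]
    refine isBigO_const_of_tendsto (?_ : Tendsto _ _ (nhds (1 : ℂ))) one_ne_zero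
    rw [(by simp : (1 : ℂ) = Real.exp (-0))]
    exact (Complex.continuous_ofReal.comp
      (Real.continuous_exp.comp continuous_neg)).continuousWithinAt
  · simpa using ha

end GammaLogAux

namespace GammaLogAux2
open Set

noncomputable def f (a t : ℝ) : ℝ := t ^ (a - 1) * Real.exp (-t)

lemma measurable_f (a : ℝ) : Measurable (f a) := by
  unfold f; fun_prop

lemma f_nonneg {a t : ℝ} (ht : 0 < t) : 0 ≤ f a t :=
  mul_nonneg (Real.rpow_nonneg ht.le _) (Real.exp_pos _).le

lemma integrableOn_f {a : ℝ} (ha : 0 < a) : IntegrableOn (f a) (Ioi 0) := by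
  refine (Real.GammaIntegral_convergent ha).congr_fun (fun t ht => ?_) measurableSet_Ioi
  simp [f, mul_comm]

lemma integrableOn_f_abs_log {a : ℝ} (ha : 0 < a) :
    IntegrableOn (fun t => f a t * |Real.log t|) (Ioi 0) := by
  have h := (GammaLogAux.mellin_conv ha).norm
  refine h.congr (.symm ?_)
  filter_upwards [ae_restrict_mem measurableSet_Ioi] with t ht
  simp only [norm_smul, Complex.norm_real,
    Complex.norm_cpow_eq_rpow_re_of_pos ht, Real.norm_eq_abs]
  rw [Real.abs_exp, f]
  have : ((a : ℂ) - 1).re = a - 1 := by simp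
  rw [this]; ring

lemma integrableOn_f_log {a : ℝ} (ha : 0 < a) :
    IntegrableOn (fun t => f a t * Real.log t) (Ioi 0) := by
  refine (integrableOn_f_abs_log ha).mono' ?_ ?_
  · exact ((measurable_f a).mul Real.measurable_log).aestronglyMeasurable
  · filter_upwards [ae_restrict_mem measurableSet_Ioi] with t ht
    rw [Real.norm_eq_abs, abs_mul, _root_.abs_of_nonneg (f_nonneg ht)]

lemma deriv_Gamma_eq {a : ℝ} (ha : 0 < a) :
    deriv Real.Gamma a = ∫ t in Ioi 0, f a t * Real.log t := by
  have h1 : HasDerivAt Complex.Gamma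
      (∫ t : ℝ in Ioi 0, (t : ℂ) ^ ((a : ℂ) - 1) * (Real.log t * Real.exp (-t))) (a : ℝ) := by
    refine (Complex.hasDerivAt_GammaIntegral (by simpa using ha)).congr_of_eventuallyEq ?_
    filter_upwards [(isOpen_lt continuous_const Complex.continuous_re).mem_nhds
      (by simpa using ha : (0:ℝ) < ((a:ℝ):ℂ).re)] with z hz
    exact Complex.Gamma_eq_integral hz
  have h2 := h1.real_of_complex
  have h3 : (∫ t : ℝ in Ioi 0, (t : ℂ) ^ ((a : ℂ) - 1) * (Real.log t * Real.exp (-t))) =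
      ((∫ t : ℝ in Ioi 0, f a t * Real.log t : ℝ) : ℂ) := by
    rw [show (∫ t : ℝ in Ioi 0, (t : ℂ) ^ ((a : ℂ) - 1) * (Real.log t * Real.exp (-t))) =
        ∫ t : ℝ in Ioi 0, ((f a t * Real.log t : ℝ) : ℂ) from
      setIntegral_congr_fun measurableSet_Ioi (fun t ht => ?_)]
    · exact integral_ofReal
    have : ((a : ℂ) - 1) = ((a - 1 : ℝ) : ℂ) := by push_cast; ring
    rw [this, ← Complex.ofReal_cpow ht.le]
    simp only [f, ← Complex.ofReal_exp, Complex.ofReal_neg]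
    push_cast
    ring
  have : Real.Gamma = fun x : ℝ => (Complex.Gamma x).re := by
    funext x; rfl
  rw [this]
  rw [h2.deriv, h3, Complex.ofReal_re]

lemma inner1 (C c t : ℝ) (hc : 0 < c) (h : c < t) :
    ∫ s in Ioo c t, C / (2 * s) = C * (Real.log t - Real.log c) / 2 := by
  rw [← integral_Ioc_eq_integral_Ioo, ← intervalIntegral.integral_of_le h.le]
  have : ∀ s : ℝ, C / (2 * s) = (C / 2) * s⁻¹ := fun s => by ring
  simp_rw [this]
  rw [intervalIntegral.integral_const_mul, integral_inv
    (by rw [Set.uIcc_of_le h.le]; intro hx; exact absurd (hx.1) (by linarith)),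
    Real.log_div (by linarith) (by linarith)]
  ring

lemma inner2 (C c t : ℝ) (ht : 0 < t) (h : t ≤ c) :
    ∫ s in Icc t c, C / (2 * s) = C * (Real.log c - Real.log t) / 2 := by
  rw [integral_Icc_eq_integral_Ioc, ← intervalIntegral.integral_of_le h]
  have : ∀ s : ℝ, C / (2 * s) = (C / 2) * s⁻¹ := fun s => by ring
  simp_rw [this]
  rw [intervalIntegral.integral_const_mul, integral_inv
    (by rw [Set.uIcc_of_le h]; intro hx; exact absurd (hx.1) (by linarith)),
    Real.log_div (by linarith) (by linarith)]
  ring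

lemma integrableOn_inv1 (C c t : ℝ) (hc : 0 < c) :
    IntegrableOn (fun s => C / (2 * s)) (Ioo c t) := by
  rcases le_or_gt t c with h | h
  · rw [Ioo_eq_empty (fun h' => absurd h (not_le.mpr h'))]; simp
  · refine (ContinuousOn.integrableOn_Icc ?_).mono_set Ioo_subset_Icc_self
    exact continuousOn_const.div (by fun_prop) (fun s hs => by nlinarith [hs.1])

lemma integrableOn_inv2 (C c t : ℝ) (ht : 0 < t) :
    IntegrableOn (fun s => C / (2 * s)) (Icc t c) := by
  refine (ContinuousOn.integrableOn_Icc ?_)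
  exact continuousOn_const.div (by fun_prop) (fun s hs => by nlinarith [hs.1])

lemma swapA {a : ℝ} (ha : 0 < a) {c : ℝ} (hc : 0 < c) :
    (∫ s in Ioi c, ∫ t in Ioi s, f a t / (2 * s)) =
      ∫ t in Ioi c, f a t * (Real.log t - Real.log c) / 2 := by
  have hGm : AEStronglyMeasurable
      (Function.uncurry (fun s t : ℝ => if s < t then f a t / (2 * s) else 0))
      ((volume.restrict (Ioi c)).prod (volume.restrict (Ioi c))) := by
    apply Measurable.aestronglyMeasurable
    apply Measurable.ite (measurableSet_lt measurable_fst measurable_snd)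
    · exact ((measurable_f a).comp measurable_snd).div (measurable_const.mul measurable_fst)
    · exact measurable_const
  have hGs : ∀ (t : ℝ) (g : ℝ → ℝ), (fun s => if s < t then g s else 0)
      = (Iio t).indicator g := by
    intro t g; funext s; simp [Set.indicator, mem_Iio]
  have hGt : ∀ s : ℝ, (fun t => if s < t then f a t / (2 * s) else 0)
      = (Ioi s).indicator (fun t => f a t / (2 * s)) := by
    intro s; funext t; simp [Set.indicator, mem_Ioi]
  have hIio : ∀ t : ℝ, Ioi c ∩ Iio t = Ioo c t := fun t => Set.Ioi_inter_Iio
  have hint_s : ∀ (C : ℝ), ∀ t : ℝ, Integrable (fun s => if s < t then C / (2 * s) else 0)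
      (volume.restrict (Ioi c)) := by
    intro C t
    rw [hGs t _, integrable_indicator_iff measurableSet_Iio, IntegrableOn,
      Measure.restrict_restrict measurableSet_Iio, Set.inter_comm, hIio t]
    exact integrableOn_inv1 C c t hc
  have hval : ∀ (C : ℝ), ∀ t ∈ Ioi c, (∫ s in Ioi c, if s < t then C / (2 * s) else 0)
      = C * (Real.log t - Real.log c) / 2 := by
    intro C t ht
    rw [hGs t _, setIntegral_indicator measurableSet_Iio, hIio t]
    exact inner1 C c t hc ht
  have hint : Integrable (Function.uncurry (fun s t : ℝ => if s < t then f a t / (2 * s) else 0))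
      ((volume.restrict (Ioi c)).prod (volume.restrict (Ioi c))) := by
    refine (integrable_prod_iff' hGm).mpr ⟨?_, ?_⟩
    · exact Filter.Eventually.of_forall fun t => hint_s (f a t) t
    · have hnormval : ∀ t ∈ Ioi c, (∫ s in Ioi c,
          ‖Function.uncurry (fun s t : ℝ => if s < t then f a t / (2 * s) else 0) (s, t)‖)
          = |f a t| * (Real.log t - Real.log c) / 2 := by
        intro t ht
        have : (fun s => ‖Function.uncurry
            (fun s t : ℝ => if s < t then f a t / (2 * s) else 0) (s, t)‖)
            = fun s => if s < t then |f a t / (2 * s)| else 0 := by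
          funext s
          simp only [Function.uncurry_apply_pair, Real.norm_eq_abs]
          split <;> simp
        rw [this, hGs t _, setIntegral_indicator measurableSet_Iio, hIio t]
        rw [setIntegral_congr_fun measurableSet_Ioo
          (fun s hs => by
            show |f a t / (2 * s)| = |f a t| / (2 * s)
            rw [abs_div, abs_mul, abs_two, _root_.abs_of_pos (hc.trans hs.1)] :
            EqOn (fun s => |f a t / (2 * s)|) (fun s => |f a t| / (2 * s)) (Ioo c t))]
        exact inner1 _ c t hc ht
      have hNint : Integrable (fun t => |f a t| * (Real.log t - Real.log c) / 2)
          (volume.restrict (Ioi c)) := by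
        have hg : Integrable (fun t => (f a t * |Real.log t|) / 2 + |Real.log c| / 2 * f a t)
            (volume.restrict (Ioi c)) := by
          exact (((integrableOn_f_abs_log ha).mono_set (Ioi_subset_Ioi hc.le)).div_const 2).add
            (((integrableOn_f ha).mono_set (Ioi_subset_Ioi hc.le)).const_mul _)
        refine hg.mono' ?_ ?_
        · exact (((measurable_f a).abs.mul
            (Real.measurable_log.sub measurable_const)).div_const 2).aestronglyMeasurable
        · filter_upwards [ae_restrict_mem measurableSet_Ioi] with t ht
          have hf0 : 0 ≤ f a t := f_nonneg (hc.trans ht)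
          have htri : |Real.log t - Real.log c| ≤ |Real.log t| + |Real.log c| := by
            calc |Real.log t - Real.log c| = |Real.log t + -(Real.log c)| := by ring_nf
            _ ≤ |Real.log t| + |-(Real.log c)| := abs_add_le _ _
            _ = |Real.log t| + |Real.log c| := by rw [abs_neg]
          rw [Real.norm_eq_abs, abs_div, abs_two, abs_mul, abs_abs,
            _root_.abs_of_nonneg hf0]
          nlinarith [mul_le_mul_of_nonneg_left htri hf0]
      refine hNint.congr ?_
      filter_upwards [ae_restrict_mem measurableSet_Ioi] with t ht
      exact (hnormval t ht).symm
  calc (∫ s in Ioi c, ∫ t in Ioi s, f a t / (2 * s))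
      = ∫ s in Ioi c, ∫ t in Ioi c, (if s < t then f a t / (2 * s) else 0) := by
        refine setIntegral_congr_fun measurableSet_Ioi (fun s hs => ?_)
        rw [hGt s, setIntegral_indicator measurableSet_Ioi, Set.Ioi_inter_Ioi,
          sup_eq_right.mpr (le_of_lt hs)]
    _ = ∫ t in Ioi c, ∫ s in Ioi c, (if s < t then f a t / (2 * s) else 0) :=
        integral_integral_swap hint
    _ = ∫ t in Ioi c, f a t * (Real.log t - Real.log c) / 2 :=
        setIntegral_congr_fun measurableSet_Ioi (fun t ht => hval (f a t) t ht)

lemma swapB {a : ℝ} (ha : 0 < a) {c : ℝ} (hc : 0 < c) :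
    (∫ s in Ioc (0:ℝ) c, ∫ t in Ioc (0:ℝ) s, f a t / (2 * s)) =
      ∫ t in Ioc (0:ℝ) c, f a t * (Real.log c - Real.log t) / 2 := by
  have hGm : AEStronglyMeasurable
      (Function.uncurry (fun s t : ℝ => if t ≤ s then f a t / (2 * s) else 0))
      ((volume.restrict (Ioc 0 c)).prod (volume.restrict (Ioc 0 c))) := by
    apply Measurable.aestronglyMeasurable
    apply Measurable.ite (measurableSet_le measurable_snd measurable_fst)
    · exact ((measurable_f a).comp measurable_snd).div (measurable_const.mul measurable_fst)
    · exact measurable_const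
  have hGs : ∀ (t : ℝ) (g : ℝ → ℝ), (fun s => if t ≤ s then g s else 0)
      = (Ici t).indicator g := by
    intro t g; funext s; simp [Set.indicator, mem_Ici]
  have hGt : ∀ s : ℝ, (fun t => if t ≤ s then f a t / (2 * s) else 0)
      = (Iic s).indicator (fun t => f a t / (2 * s)) := by
    intro s; funext t; simp [Set.indicator, mem_Iic]
  have hIcc : ∀ t ∈ Ioc (0:ℝ) c, Ioc (0:ℝ) c ∩ Ici t = Icc t c := by
    intro t ht
    ext s
    simp only [mem_inter_iff, mem_Ioc, mem_Ici, mem_Icc]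
    exact ⟨fun h => ⟨h.2, h.1.2⟩, fun h => ⟨⟨ht.1.trans_le h.1, h.2⟩, h.1⟩⟩
  have hint_s : ∀ (C : ℝ), ∀ t ∈ Ioc (0:ℝ) c,
      Integrable (fun s => if t ≤ s then C / (2 * s) else 0)
      (volume.restrict (Ioc 0 c)) := by
    intro C t ht
    rw [hGs t _, integrable_indicator_iff measurableSet_Ici, IntegrableOn,
      Measure.restrict_restrict measurableSet_Ici, Set.inter_comm, hIcc t ht]
    exact integrableOn_inv2 C c t ht.1
  have hval : ∀ (C : ℝ), ∀ t ∈ Ioc (0:ℝ) c,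
      (∫ s in Ioc (0:ℝ) c, if t ≤ s then C / (2 * s) else 0)
      = C * (Real.log c - Real.log t) / 2 := by
    intro C t ht
    rw [hGs t _, setIntegral_indicator measurableSet_Ici, hIcc t ht]
    exact inner2 C c t ht.1 ht.2
  have hint : Integrable (Function.uncurry (fun s t : ℝ => if t ≤ s then f a t / (2 * s) else 0))
      ((volume.restrict (Ioc 0 c)).prod (volume.restrict (Ioc 0 c))) := by
    refine (integrable_prod_iff' hGm).mpr ⟨?_, ?_⟩
    · filter_upwards [ae_restrict_mem measurableSet_Ioc] with t ht
      exact hint_s (f a t) t ht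
    · have hnormval : ∀ t ∈ Ioc (0:ℝ) c, (∫ s in Ioc (0:ℝ) c,
          ‖Function.uncurry (fun s t : ℝ => if t ≤ s then f a t / (2 * s) else 0) (s, t)‖)
          = |f a t| * (Real.log c - Real.log t) / 2 := by
        intro t ht
        have : (fun s => ‖Function.uncurry
            (fun s t : ℝ => if t ≤ s then f a t / (2 * s) else 0) (s, t)‖)
            = fun s => if t ≤ s then |f a t / (2 * s)| else 0 := by
          funext s
          simp only [Function.uncurry_apply_pair, Real.norm_eq_abs]
          split <;> simp
        rw [this, hGs t _, setIntegral_indicator measurableSet_Ici, hIcc t ht]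
        rw [setIntegral_congr_fun measurableSet_Icc
          (fun s hs => by
            show |f a t / (2 * s)| = |f a t| / (2 * s)
            rw [abs_div, abs_mul, abs_two, _root_.abs_of_pos (ht.1.trans_le hs.1)] :
            EqOn (fun s => |f a t / (2 * s)|) (fun s => |f a t| / (2 * s)) (Icc t c))]
        exact inner2 _ c t ht.1 ht.2
      have hNint : Integrable (fun t => |f a t| * (Real.log c - Real.log t) / 2)
          (volume.restrict (Ioc 0 c)) := by
        have hg : Integrable (fun t => (f a t * |Real.log t|) / 2 + |Real.log c| / 2 * f a t)
            (volume.restrict (Ioc 0 c)) := by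
          exact (((integrableOn_f_abs_log ha).mono_set Ioc_subset_Ioi_self).div_const 2).add
            (((integrableOn_f ha).mono_set Ioc_subset_Ioi_self).const_mul _)
        refine hg.mono' ?_ ?_
        · exact (((measurable_f a).abs.mul
            ((measurable_const.sub Real.measurable_log))).div_const 2).aestronglyMeasurable
        · filter_upwards [ae_restrict_mem measurableSet_Ioc] with t ht
          have hf0 : 0 ≤ f a t := f_nonneg ht.1
          have htri : |Real.log c - Real.log t| ≤ |Real.log t| + |Real.log c| := by
            calc |Real.log c - Real.log t| = |(-(Real.log t)) + Real.log c| := by ring_nf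
            _ ≤ |(-(Real.log t))| + |Real.log c| := abs_add_le _ _
            _ = |Real.log t| + |Real.log c| := by rw [abs_neg]
          rw [Real.norm_eq_abs, abs_div, abs_two, abs_mul, abs_abs,
            _root_.abs_of_nonneg hf0]
          nlinarith [mul_le_mul_of_nonneg_left htri hf0]
      refine hNint.congr ?_
      filter_upwards [ae_restrict_mem measurableSet_Ioc] with t ht
      exact (hnormval t ht).symm
  calc (∫ s in Ioc (0:ℝ) c, ∫ t in Ioc (0:ℝ) s, f a t / (2 * s))
      = ∫ s in Ioc (0:ℝ) c, ∫ t in Ioc (0:ℝ) c, (if t ≤ s then f a t / (2 * s) else 0) := by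
        refine setIntegral_congr_fun measurableSet_Ioc (fun s hs => ?_)
        rw [hGt s, setIntegral_indicator measurableSet_Iic, Set.Ioc_inter_Iic,
          inf_eq_right.mpr hs.2]
    _ = ∫ t in Ioc (0:ℝ) c, ∫ s in Ioc (0:ℝ) c, (if t ≤ s then f a t / (2 * s) else 0) :=
        integral_integral_swap hint
    _ = ∫ t in Ioc (0:ℝ) c, f a t * (Real.log c - Real.log t) / 2 :=
        setIntegral_congr_fun measurableSet_Ioc (fun t ht => hval (f a t) t ht)

end GammaLogAux2

open GammaLogAux2 Set

/-- For every integer `n ≥ 1`,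
`∫_{1/4}^∞ ∫_s^∞ t^{n/2−1} e^{-t}/(2s) dt ds − ∫₀^{1/4} ∫₀^s t^{n/2−1} e^{-t}/(2s) dt ds
  = Γ'(n/2)/2 + Γ(n/2)·log 2`. -/
theorem iterated_integral_gamma_log_two (n : ℕ) (hn : 1 ≤ n) :
    (∫ s in Set.Ioi (1/4 : ℝ), ∫ t in Set.Ioi s,
        t ^ ((n : ℝ)/2 - 1) * Real.exp (-t) / (2 * s)) -
      (∫ s in Set.Ioc (0 : ℝ) (1/4), ∫ t in Set.Ioc (0 : ℝ) s,
        t ^ ((n : ℝ)/2 - 1) * Real.exp (-t) / (2 * s)) =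
    deriv Real.Gamma ((n : ℝ)/2) / 2 + Real.Gamma ((n : ℝ)/2) * Real.log 2 := by
  have hn' : (0:ℝ) < n := by exact_mod_cast hn
  set a : ℝ := (n : ℝ) / 2 with ha_def
  have ha : 0 < a := by positivity
  have hc : (0:ℝ) < 1/4 := by norm_num
  have unfold_f : ∀ t : ℝ, f a t = t ^ (a - 1) * Real.exp (-t) := fun t => rfl
  simp_rw [← unfold_f]
  rw [swapA ha hc, swapB ha hc]
  have e3 : (∫ t in Ioc (0:ℝ) (1/4), f a t * (Real.log (1/4) - Real.log t) / 2)
      = - ∫ t in Ioc (0:ℝ) (1/4), f a t * (Real.log t - Real.log (1/4)) / 2 := by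
    rw [← integral_neg]; congr 1; funext t; ring
  rw [e3, sub_neg_eq_add]
  have hh : IntegrableOn (fun t => f a t * (Real.log t - Real.log (1/4)) / 2) (Ioi 0) := by
    have : (fun t => f a t * (Real.log t - Real.log (1/4:ℝ)) / 2)
        = fun t => (f a t * Real.log t) / 2 - (Real.log (1/4:ℝ) / 2) * f a t := by
      funext t; ring
    rw [this]
    exact ((integrableOn_f_log ha).div_const 2).sub ((integrableOn_f ha).const_mul _)
  have e4 : (∫ t in Ioi (1/4:ℝ), f a t * (Real.log t - Real.log (1/4)) / 2)
      + (∫ t in Ioc (0:ℝ) (1/4), f a t * (Real.log t - Real.log (1/4)) / 2)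
      = ∫ t in Ioi (0:ℝ), f a t * (Real.log t - Real.log (1/4)) / 2 := by
    rw [add_comm, ← setIntegral_union (Set.Ioc_disjoint_Ioi le_rfl) measurableSet_Ioi
      (hh.mono_set Ioc_subset_Ioi_self) (hh.mono_set (Ioi_subset_Ioi hc.le)),
      Set.Ioc_union_Ioi_eq_Ioi hc.le]
  rw [e4]
  have e5 : (∫ t in Ioi (0:ℝ), f a t * (Real.log t - Real.log (1/4)) / 2)
      = (∫ t in Ioi (0:ℝ), f a t * Real.log t) / 2
        - (Real.log (1/4:ℝ) / 2) * ∫ t in Ioi (0:ℝ), f a t := by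
    rw [show (fun t => f a t * (Real.log t - Real.log (1/4:ℝ)) / 2) = fun t =>
      (f a t * Real.log t) / 2 - (Real.log (1/4:ℝ) / 2) * f a t from funext fun t => by ring]
    rw [integral_sub ((integrableOn_f_log ha).div_const 2) ((integrableOn_f ha).const_mul _),
      integral_div, MeasureTheory.integral_const_mul]
  rw [e5, ← deriv_Gamma_eq ha]
  have hG : Real.Gamma a = ∫ t in Ioi (0:ℝ), f a t := by
    rw [Real.Gamma_eq_integral ha]
    exact setIntegral_congr_fun measurableSet_Ioi fun t ht => by simp [f, mul_comm]
  rw [← hG]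
  have hlog : Real.log (1/4 : ℝ) = -(2 * Real.log 2) := by
    rw [show (1/4 : ℝ) = (2:ℝ)^(-2 : ℤ) by norm_num, Real.log_zpow]
    push_cast; ring
  rw [hlog]; ring
end

section
/- Let n ≥ 2 be an integer and s ≥ 0, and set I(n,r) = ∫_{r²/4}^∞ t^{n/2+s−1} e^{-t} dt for r > 0. Then for every r > √(2n+4s−4) one has 2^{2−2s−n} r^{n+2s−2} e^{−r²/4} ≤ I(n,r) ≤ 2^{2−2s−n} r^{n+2s−2} e^{−r²/4} (1 − 2(n−2+2s)/r²)^{-1}; in particular, whenever r ≥ 2√(n−2+2s), I(n,r) ≤ 2^{3−2s−n} r^{n+2s−2} e^{−r²/4}. -/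
open MeasureTheory Real

lemma integral_exp_neg_mul_Ioi' {c : ℝ} (hc : 0 < c) (x : ℝ) :
    ∫ t in Set.Ioi x, Real.exp (-(c*t)) = Real.exp (-(c*x)) / c := by
  have hint : IntegrableOn (fun t : ℝ => Real.exp (-(c*t))) (Set.Ioi x) := by
    simpa [neg_mul] using exp_neg_integrableOn_Ioi x hc
  have := integral_Ioi_of_hasDerivAt_of_tendsto
    (f := fun t : ℝ => -Real.exp (-(c*t)) / c)
    (f' := fun t : ℝ => Real.exp (-(c*t))) (a := x) (m := 0)
    ?_ ?_ hint ?_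
  · rw [this]; ring
  · exact Continuous.continuousWithinAt (by continuity)
  · intro t _
    have h1 : HasDerivAt (fun t : ℝ => -(c*t)) (-c) t := by
      simpa using ((hasDerivAt_id t).const_mul c).fun_neg
    have h2 := (h1.exp).fun_neg.div_const c
    refine h2.congr_deriv ?_
    field_simp
  · have h3 : Filter.Tendsto (fun t : ℝ => -(c*t)) Filter.atTop Filter.atBot :=
      Filter.tendsto_neg_atTop_atBot.comp (Filter.Tendsto.const_mul_atTop hc Filter.tendsto_id)
    have : Filter.Tendsto (fun t : ℝ => Real.exp (-(c*t))) Filter.atTop (nhds 0) :=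
      Real.tendsto_exp_atBot.comp h3
    simpa using (this.neg.div_const c)

/-- Tail estimate for an incomplete Gamma integral: with
`I(n,r) = ∫_{r²/4}^∞ t^{n/2+s−1} e^{-t} dt`, for `r > √(2n+4s−4)` one has two-sided bounds
`2^{2−2s−n} r^{n+2s−2} e^{−r²/4} ≤ I(n,r) ≤ 2^{2−2s−n} r^{n+2s−2} e^{−r²/4} (1−2(n−2+2s)/r²)⁻¹`;
in particular, when `r ≥ 2√(n−2+2s)`, `I(n,r) ≤ 2^{3−2s−n} r^{n+2s−2} e^{−r²/4}`. -/
theorem incompleteGamma_tail_estimate (n : ℕ) (hn : 2 ≤ n) (s : ℝ) (hs : 0 ≤ s)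
    (r : ℝ) (hr : Real.sqrt (2 * n + 4 * s - 4) < r) :
    ((2 : ℝ) ^ (2 - 2*s - (n : ℝ)) * r ^ ((n : ℝ) + 2*s - 2) * Real.exp (-(r^2)/4) ≤
        ∫ t in Set.Ioi (r^2/4), t ^ ((n : ℝ)/2 + s - 1) * Real.exp (-t)) ∧
    ((∫ t in Set.Ioi (r^2/4), t ^ ((n : ℝ)/2 + s - 1) * Real.exp (-t)) ≤
        (2 : ℝ) ^ (2 - 2*s - (n : ℝ)) * r ^ ((n : ℝ) + 2*s - 2) * Real.exp (-(r^2)/4) *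
          (1 - 2 * ((n : ℝ) - 2 + 2*s) / r^2)⁻¹) ∧
    (2 * Real.sqrt ((n : ℝ) - 2 + 2*s) ≤ r →
      (∫ t in Set.Ioi (r^2/4), t ^ ((n : ℝ)/2 + s - 1) * Real.exp (-t)) ≤
        (2 : ℝ) ^ (3 - 2*s - (n : ℝ)) * r ^ ((n : ℝ) + 2*s - 2) * Real.exp (-(r^2)/4)) := by
  have hn2 : (2:ℝ) ≤ (n:ℝ) := by exact_mod_cast hn
  set a : ℝ := (n:ℝ)/2 + s - 1 with ha_def
  clear_value a
  have ha : 0 ≤ a := by rw [ha_def]; linarith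
  have hr0 : 0 < r := lt_of_le_of_lt (Real.sqrt_nonneg _) hr
  have hxa4 : 4*a < r^2 := by
    have h1 : (Real.sqrt (4*a)) < r := by
      have : 2*(n:ℝ) + 4*s - 4 = 4*a := by rw [ha_def]; ring
      rwa [← this]
    have := (Real.sqrt_lt' hr0).mp h1
    linarith
  set x : ℝ := r^2/4 with hx_def
  clear_value x
  have hax : a < x := by rw [hx_def]; linarith
  have hx0 : 0 < x := lt_of_le_of_lt ha hax
  have hexp : -(r^2)/4 = -x := by rw [hx_def]; ring
  rw [hexp]
  -- the constant identity
  have key : (2:ℝ) ^ (2-2*s-(n:ℝ)) * r ^ ((n:ℝ)+2*s-2) = x ^ a := by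
    rw [Real.rpow_def_of_pos (by norm_num : (0:ℝ) < 2), Real.rpow_def_of_pos hr0,
        Real.rpow_def_of_pos hx0, ← Real.exp_add]
    congr 1
    have hlx : Real.log x = 2 * Real.log r - 2 * Real.log 2 := by
      rw [hx_def, show (4:ℝ) = 2^2 by norm_num,
          Real.log_div (by positivity) (by positivity), Real.log_pow, Real.log_pow]
      push_cast; ring
    rw [hlx, ha_def]; ring
  -- integrability of the main integrand
  have hint : IntegrableOn (fun t : ℝ => t ^ a * Real.exp (-t)) (Set.Ioi x) := by
    have h1 := Real.GammaIntegral_convergent (s := a+1) (by linarith)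
    have h2 := h1.mono_set (Set.Ioi_subset_Ioi hx0.le)
    apply h2.congr_fun ?_ measurableSet_Ioi
    intro t ht
    simp [mul_comm, add_sub_cancel_right]
  -- lower bound
  have hlow : x ^ a * Real.exp (-x) ≤ ∫ t in Set.Ioi x, t ^ a * Real.exp (-t) := by
    have h1 : ∫ t in Set.Ioi x, x ^ a * Real.exp (-t) = x ^ a * Real.exp (-x) := by
      rw [integral_const_mul _ _, integral_exp_neg_Ioi]
    rw [← h1]
    apply setIntegral_mono_on
    · apply Integrable.const_mul
      simpa [neg_mul, IntegrableOn] using exp_neg_integrableOn_Ioi x one_pos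
    · exact hint
    · exact measurableSet_Ioi
    · intro t ht
      have htx : x < t := ht
      exact mul_le_mul_of_nonneg_right
        (Real.rpow_le_rpow hx0.le htx.le ha) (Real.exp_pos _).le
  -- upper bound
  set c : ℝ := 1 - a/x with hc_def
  clear_value c
  have hax1 : a/x < 1 := (div_lt_one hx0).mpr hax
  have hc : 0 < c := by rw [hc_def]; linarith
  have hup : (∫ t in Set.Ioi x, t ^ a * Real.exp (-t)) ≤ x ^ a * Real.exp (-x) * c⁻¹ := by
    have hmajint : IntegrableOn (fun t : ℝ => (x ^ a * Real.exp (-a)) * Real.exp (-(c*t)))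
        (Set.Ioi x) := by
      apply Integrable.const_mul
      simpa [neg_mul, IntegrableOn] using exp_neg_integrableOn_Ioi x hc
    have h2 : ∫ t in Set.Ioi x, (x ^ a * Real.exp (-a)) * Real.exp (-(c*t))
        = x ^ a * Real.exp (-x) * c⁻¹ := by
      rw [integral_const_mul _ _, integral_exp_neg_mul_Ioi' hc x, div_eq_mul_inv]
      have h3 : Real.exp (-a) * Real.exp (-(c*x)) = Real.exp (-x) := by
        rw [← Real.exp_add]
        congr 1
        rw [hc_def]
        field_simp
        ring
      calc x ^ a * Real.exp (-a) * (Real.exp (-(c*x)) * c⁻¹)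
          = x ^ a * (Real.exp (-a) * Real.exp (-(c*x))) * c⁻¹ := by ring
        _ = x ^ a * Real.exp (-x) * c⁻¹ := by rw [h3]
    rw [← h2]
    apply setIntegral_mono_on hint hmajint measurableSet_Ioi
    intro t ht
    have htx : x < t := ht
    have ht0 : 0 < t := lt_trans hx0 htx
    rw [Real.rpow_def_of_pos ht0, Real.rpow_def_of_pos hx0, ← Real.exp_add, mul_assoc,
        ← Real.exp_add, ← Real.exp_add]
    apply Real.exp_le_exp.mpr
    have hlog : Real.log t - Real.log x ≤ t/x - 1 := by
      rw [← Real.log_div ht0.ne' hx0.ne']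
      have := Real.log_le_sub_one_of_pos (div_pos ht0 hx0)
      linarith
    have h4 : a * (Real.log t - Real.log x) ≤ a * (t/x - 1) :=
      mul_le_mul_of_nonneg_left hlog ha
    have h5 : a * (t/x) = a/x * t := by ring
    have h6 : c * t = t - a/x * t := by rw [hc_def]; ring
    linarith [h4, h5, h6]
  -- the constant c matches the statement
  have hc_eq : (1 - 2 * ((n:ℝ) - 2 + 2*s) / r^2) = c := by
    rw [hc_def, ha_def, hx_def]
    have : (r:ℝ)^2 ≠ 0 := by positivity
    field_simp
    ring
  refine ⟨?_, ?_, ?_⟩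
  · rw [key]; exact hlow
  · rw [key, hc_eq]; exact hup
  · intro h3
    have h2a0 : (0:ℝ) ≤ (n:ℝ) - 2 + 2*s := by linarith
    have hsq := Real.sq_sqrt h2a0
    have hr8 : 8*a ≤ r^2 := by
      have h2a : (n:ℝ) - 2 + 2*s = 2*a := by rw [ha_def]; ring
      nlinarith [Real.sqrt_nonneg ((n:ℝ) - 2 + 2*s), h3, hsq]
    have hcinv : c⁻¹ ≤ 2 := by
      have hc2 : (1/2 : ℝ) ≤ c := by
        rw [hc_def]
        have : a/x ≤ 1/2 := by
          rw [div_le_iff₀ hx0, hx_def]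
          linarith
        linarith
      calc c⁻¹ ≤ (1/2 : ℝ)⁻¹ := by
            apply inv_anti₀ (by norm_num) hc2
        _ = 2 := by norm_num
    have hL0 : 0 ≤ x ^ a * Real.exp (-x) := by positivity
    have hfinal : (∫ t in Set.Ioi x, t ^ a * Real.exp (-t)) ≤ x ^ a * Real.exp (-x) * 2 :=
      le_trans hup (mul_le_mul_of_nonneg_left hcinv hL0)
    have h23 : (2:ℝ) ^ (3-2*s-(n:ℝ)) = 2 * (2:ℝ) ^ (2-2*s-(n:ℝ)) := by
      rw [show (3-2*s-(n:ℝ)) = 1 + (2-2*s-(n:ℝ)) by ring, Real.rpow_add (by norm_num),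
          Real.rpow_one]
    calc (∫ t in Set.Ioi x, t ^ a * Real.exp (-t)) ≤ x ^ a * Real.exp (-x) * 2 := hfinal
      _ = 2 * ((2:ℝ) ^ (2-2*s-(n:ℝ)) * r ^ ((n:ℝ)+2*s-2)) * Real.exp (-x) := by
          rw [key]; ring
      _ = (2:ℝ) ^ (3-2*s-(n:ℝ)) * r ^ ((n:ℝ)+2*s-2) * Real.exp (-x) := by
          rw [h23]; ring
end

section
/- Let n ≥ 2 be an integer and s ≥ 0, and define J(n,r) = ∫₀^{r²/4} t^{n/2+s−1} exp(−(n−1)² r²/(16t) − t) · (1 + r + r²/(4t))^{(n−3)/2} dt for r > 0. Then there exist constants c₃, c₄ > 0 (depending only on n and s) such that c₃ r^{n+2s} ≤ J(n,r) ≤ c₄ r^{n+2s} for all 0 < r ≤ 1. -/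
open MeasureTheory Real

set_option maxHeartbeats 1000000

/-- Small-`r` asymptotics of the Laplace-type integral
`J(n,r) = ∫₀^{r²/4} t^{n/2+s−1} exp(−(n−1)²r²/(16t) − t) (1+r+r²/(4t))^{(n−3)/2} dt`:
there exist `c₃, c₄ > 0` with `c₃ r^{n+2s} ≤ J(n,r) ≤ c₄ r^{n+2s}` for all `0 < r ≤ 1`. -/
theorem laplace_integral_asymp_small (n : ℕ) (hn : 2 ≤ n) (s : ℝ) (hs : 0 ≤ s) :
    ∃ c₃ c₄ : ℝ, 0 < c₃ ∧ 0 < c₄ ∧ ∀ r : ℝ, 0 < r → r ≤ 1 →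
      (c₃ * r ^ ((n : ℝ) + 2*s) ≤
        ∫ t in Set.Ioc (0 : ℝ) (r^2/4),
          t ^ ((n : ℝ)/2 + s - 1) *
            Real.exp (-(((n : ℝ) - 1)^2 * r^2 / (16 * t)) - t) *
            (1 + r + r^2 / (4 * t)) ^ (((n : ℝ) - 3)/2)) ∧
      ((∫ t in Set.Ioc (0 : ℝ) (r^2/4),
          t ^ ((n : ℝ)/2 + s - 1) *
            Real.exp (-(((n : ℝ) - 1)^2 * r^2 / (16 * t)) - t) *
            (1 + r + r^2 / (4 * t)) ^ (((n : ℝ) - 3)/2)) ≤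
        c₄ * r ^ ((n : ℝ) + 2*s)) := by
  have hn2 : (2:ℝ) ≤ (n:ℝ) := by exact_mod_cast hn
  set e : ℝ := ((n : ℝ) - 3)/2 with he
  set p : ℝ := (n : ℝ)/2 + s - 1 with hp
  set a : ℝ := (n : ℝ)/2 + s with ha
  have hpa : p + 1 = a := by rw [hp, ha]; ring
  have hp0 : 0 ≤ p := by rw [hp, ha]; linarith
  have he2 : -(1/2 : ℝ) ≤ e := by rw [he]; linarith
  set E : ℝ := Real.exp (-(((n:ℝ)-1)^2/2) - 1/4) with hE
  set K : ℝ := (3:ℝ) ^ (max e 0) with hK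
  have hKpos : 0 < K := Real.rpow_pos_of_pos (by norm_num) _
  have hEpos : 0 < E := Real.exp_pos _
  refine ⟨(1/2) * E * (1/8 : ℝ) ^ a, K / (s + 3/2) * (1/4 : ℝ) ^ a, ?_, ?_, ?_⟩
  · have : (0:ℝ) < (1/8 : ℝ) ^ a := Real.rpow_pos_of_pos (by norm_num) _
    positivity
  · have : (0:ℝ) < (1/4 : ℝ) ^ a := Real.rpow_pos_of_pos (by norm_num) _
    positivity
  intro r hr hr1
  set b : ℝ := r^2/4 with hb
  have hbpos : 0 < b := by rw [hb]; positivity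
  set f : ℝ → ℝ := fun t =>
    t ^ p * Real.exp (-(((n : ℝ) - 1)^2 * r^2 / (16 * t)) - t) *
      (1 + r + r^2 / (4 * t)) ^ e with hf
  -- power identities
  have hr2 : (0:ℝ) < r ^ 2 := by positivity
  have hrpow : ∀ k : ℝ, 0 < k → (r^2 * k) ^ a = k ^ a * r ^ ((n:ℝ) + 2*s) := by
    intro k hk
    rw [Real.mul_rpow hr2.le hk.le, mul_comm]
    congr 1
    rw [← Real.rpow_natCast r 2, ← Real.rpow_mul hr.le]
    congr 1
    push_cast [ha]; ring
  have hb4 : b ^ a = (1/4 : ℝ) ^ a * r ^ ((n:ℝ) + 2*s) := by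
    rw [hb, show r^2/4 = r^2 * (1/4 : ℝ) by ring]
    exact hrpow _ (by norm_num)
  have hb8 : (r^2/8) ^ a = (1/8 : ℝ) ^ a * r ^ ((n:ℝ) + 2*s) := by
    rw [show r^2/8 = r^2 * (1/8 : ℝ) by ring]
    exact hrpow _ (by norm_num)
  -- the comparison function
  set g : ℝ → ℝ := fun t => K * b ^ e * t ^ (s + 1/2) with hg
  -- pointwise upper bound
  have hfg : ∀ t ∈ Set.Ioc (0:ℝ) b, f t ≤ g t := by
    rintro t ⟨ht, htb⟩
    have h4t : 0 < 4 * t := by linarith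
    set x : ℝ := r^2 / (4 * t) with hx
    have hxpos : 0 < x := by positivity
    have hx1 : 1 ≤ x := by
      rw [hx, le_div_iff₀ h4t, one_mul]
      rw [hb] at htb; linarith
    have hrx : r ≤ x := le_trans hr1 hx1
    have hBpos : 0 < 1 + r + x := by linarith
    have hexp : Real.exp (-(((n : ℝ) - 1)^2 * r^2 / (16 * t)) - t) ≤ 1 := by
      rw [Real.exp_le_one_iff]
      have h1 : 0 ≤ ((n : ℝ) - 1)^2 * r^2 / (16 * t) := by positivity
      linarith
    have hxe : x ^ e = b ^ e / t ^ e := by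
      rw [hx, hb, show r^2/(4*t) = (r^2/4)/t by rw [div_div], Real.div_rpow hbpos.le ht.le]
    have hBe : (1 + r + x) ^ e ≤ K * x ^ e := by
      rcases le_or_gt 0 e with hepos | heneg
      · have h3 : 1 + r + x ≤ 3 * x := by linarith
        calc (1 + r + x) ^ e ≤ (3 * x) ^ e := Real.rpow_le_rpow hBpos.le h3 hepos
          _ = 3 ^ e * x ^ e := Real.mul_rpow (by norm_num) hxpos.le
          _ = K * x ^ e := by rw [hK, max_eq_left hepos]
      · calc (1 + r + x) ^ e ≤ x ^ e :=
            Real.rpow_le_rpow_of_nonpos hxpos (by linarith) heneg.le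
          _ = K * x ^ e := by rw [hK, max_eq_right heneg.le, Real.rpow_zero, one_mul]
    have hkey : t ^ p * x ^ e = b ^ e * t ^ (s + 1/2) := by
      rw [hxe, ← mul_div_assoc, mul_comm (t ^ p), mul_div_assoc, ← Real.rpow_sub ht]
      congr 1
      rw [hp, he, ha]; ring
    have htp : 0 ≤ t ^ p := Real.rpow_nonneg ht.le _
    calc f t ≤ t ^ p * 1 * (1 + r + x) ^ e := by
          apply mul_le_mul_of_nonneg_right _ (Real.rpow_nonneg hBpos.le _)
          exact mul_le_mul_of_nonneg_left hexp htp
      _ = t ^ p * (1 + r + x) ^ e := by rw [mul_one]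
      _ ≤ t ^ p * (K * x ^ e) := mul_le_mul_of_nonneg_left hBe htp
      _ = K * (t ^ p * x ^ e) := by ring
      _ = g t := by rw [hkey, hg]; ring
  -- nonnegativity of f on the interval
  have hfnn : ∀ t ∈ Set.Ioc (0:ℝ) b, 0 ≤ f t := by
    rintro t ⟨ht, _⟩
    have h1 : (0:ℝ) ≤ 1 + r + r^2/(4*t) := by positivity
    exact mul_nonneg (mul_nonneg (Real.rpow_nonneg ht.le _) (Real.exp_pos _).le)
      (Real.rpow_nonneg h1 _)
  -- measurability
  have hfm : AEStronglyMeasurable f (volume.restrict (Set.Ioc (0:ℝ) b)) := by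
    apply Measurable.aestronglyMeasurable
    fun_prop
  -- integrability of g
  have hgint : IntegrableOn g (Set.Ioc (0:ℝ) b) := by
    have h1 : IntervalIntegrable (fun t : ℝ => t ^ (s + 1/2)) volume 0 b :=
      intervalIntegral.intervalIntegrable_rpow' (by linarith)
    have h2 : IntegrableOn (fun t : ℝ => t ^ (s + 1/2)) (Set.Ioc (0:ℝ) b) :=
      (intervalIntegrable_iff_integrableOn_Ioc_of_le hbpos.le).mp h1
    exact h2.const_mul _
  have hgnn : ∀ t ∈ Set.Ioc (0:ℝ) b, 0 ≤ g t := by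
    rintro t ⟨ht, _⟩
    have : 0 ≤ t ^ (s + 1/2) := Real.rpow_nonneg ht.le _
    have hbe : 0 ≤ b ^ e := Real.rpow_nonneg hbpos.le _
    positivity
  -- integrability of f
  have hfint : IntegrableOn f (Set.Ioc (0:ℝ) b) := by
    apply hgint.mono' hfm
    rw [ae_restrict_iff' measurableSet_Ioc]
    filter_upwards with t ht
    rw [Real.norm_of_nonneg (hfnn t ht)]
    exact hfg t ht
  constructor
  · -- lower bound
    set c : ℝ := (r^2/8) ^ p * E * (1/2 : ℝ) with hc
    have hsubint : Set.Ioc (r^2/8) b ⊆ Set.Ioc (0:ℝ) b :=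
      Set.Ioc_subset_Ioc_left (by positivity)
    have hptwise : ∀ t ∈ Set.Ioc (r^2/8) b, c ≤ f t := by
      rintro t ⟨ht8, htb⟩
      have ht : 0 < t := lt_trans (by positivity) ht8
      have h4t : 0 < 4 * t := by linarith
      have hx2 : r^2/(4*t) ≤ 2 := by
        rw [div_le_iff₀ h4t]; linarith
      have hxnn : 0 ≤ r^2/(4*t) := by positivity
      have hB1 : (1:ℝ) ≤ 1 + r + r^2/(4*t) := by linarith
      have hB4 : 1 + r + r^2/(4*t) ≤ 4 := by linarith
      have h1 : (r^2/8 : ℝ) ^ p ≤ t ^ p := Real.rpow_le_rpow (by positivity) ht8.le hp0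
      have h2 : E ≤ Real.exp (-(((n : ℝ) - 1)^2 * r^2 / (16 * t)) - t) := by
        rw [hE, Real.exp_le_exp]
        have hA : ((n : ℝ) - 1)^2 * r^2 / (16 * t) ≤ ((n:ℝ)-1)^2/2 := by
          rw [div_le_div_iff₀ (by linarith) (by norm_num)]
          have hrt : r^2 ≤ 8 * t := by linarith
          have : ((n:ℝ)-1)^2 * r^2 ≤ ((n:ℝ)-1)^2 * (8*t) :=
            mul_le_mul_of_nonneg_left hrt (by positivity)
          nlinarith
        have htq : t ≤ 1/4 := by
          rw [hb] at htb; nlinarith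
        linarith
      have h3 : (1/2 : ℝ) ≤ (1 + r + r^2/(4*t)) ^ e := by
        rcases le_or_gt 0 e with hepos | heneg
        · have : (1:ℝ) = (1:ℝ) ^ e := (Real.one_rpow e).symm
          calc (1/2 : ℝ) ≤ 1 := by norm_num
            _ = (1:ℝ) ^ e := (Real.one_rpow e).symm
            _ ≤ (1 + r + r^2/(4*t)) ^ e := Real.rpow_le_rpow (by norm_num) hB1 hepos
        · have h4 : (4:ℝ) ^ e ≤ (1 + r + r^2/(4*t)) ^ e :=
            Real.rpow_le_rpow_of_nonpos (by linarith) hB4 heneg.le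
          have h5 : (4:ℝ) ^ (-(1/2:ℝ)) ≤ (4:ℝ) ^ e :=
            Real.rpow_le_rpow_of_exponent_le (by norm_num) he2
          have h6 : (4:ℝ) ^ (-(1/2:ℝ)) = 1/2 := by
            rw [Real.rpow_neg (by norm_num)]
            rw [show (4:ℝ) = 2 ^ (2:ℕ) by norm_num, ← Real.rpow_natCast 2 2,
              ← Real.rpow_mul (by norm_num)]
            norm_num
          linarith
      calc c = (r^2/8) ^ p * E * (1/2 : ℝ) := hc
        _ ≤ t ^ p * Real.exp (-(((n : ℝ) - 1)^2 * r^2 / (16 * t)) - t) *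
            (1 + r + r^2/(4*t)) ^ e := by
          apply mul_le_mul _ h3 (by norm_num) _
          · exact mul_le_mul h1 h2 hEpos.le (Real.rpow_nonneg ht.le _)
          · exact mul_nonneg (Real.rpow_nonneg ht.le _) (Real.exp_pos _).le
        _ = f t := rfl
    have hmeas : (volume (Set.Ioc (r^2/8) b)).toReal = r^2/8 := by
      rw [Real.volume_Ioc, ENNReal.toReal_ofReal (by rw [hb]; linarith)]
      rw [hb]; ring
    have hlow : c * (r^2/8) ≤ ∫ t in Set.Ioc (r^2/8) b, f t := by
      have := setIntegral_ge_of_const_le_real (μ := volume) (f := f) measurableSet_Ioc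
        (by rw [Real.volume_Ioc]; exact ENNReal.ofReal_ne_top) hptwise
        (hfint.mono_set hsubint)
      rw [show volume.real (Set.Ioc (r^2/8) b) = r^2/8 from hmeas] at this; linarith
    have hmono : (∫ t in Set.Ioc (r^2/8) b, f t) ≤ ∫ t in Set.Ioc (0:ℝ) b, f t := by
      apply setIntegral_mono_set hfint
      · exact (ae_restrict_iff' measurableSet_Ioc).mpr (ae_of_all _ hfnn)
      · exact HasSubset.Subset.eventuallyLE hsubint
    have h1 : (r^2/8 : ℝ) ^ p * (r^2/8) = (1/8 : ℝ) ^ a * r ^ ((n:ℝ) + 2*s) := by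
      rw [← Real.rpow_add_one (show (r^2/8 : ℝ) ≠ 0 from (by positivity : (0:ℝ) < r^2/8).ne') p,
        hpa, hb8]
    have hval : (1/2) * E * (1/8 : ℝ) ^ a * r ^ ((n:ℝ) + 2*s) = c * (r^2/8) := by
      calc (1/2) * E * (1/8 : ℝ) ^ a * r ^ ((n:ℝ) + 2*s)
          = (1/2) * E * ((1/8 : ℝ) ^ a * r ^ ((n:ℝ) + 2*s)) := by ring
        _ = (1/2) * E * ((r^2/8 : ℝ) ^ p * (r^2/8)) := by rw [h1]
        _ = c * (r^2/8) := by rw [hc]; ring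
    calc (1/2) * E * (1/8 : ℝ) ^ a * r ^ ((n:ℝ) + 2*s) = c * (r^2/8) := hval
      _ ≤ ∫ t in Set.Ioc (r^2/8) b, f t := hlow
      _ ≤ ∫ t in Set.Ioc (0:ℝ) b, f t := hmono
  · -- upper bound
    have hint_le : (∫ t in Set.Ioc (0:ℝ) b, f t) ≤ ∫ t in Set.Ioc (0:ℝ) b, g t :=
      setIntegral_mono_on hfint hgint measurableSet_Ioc hfg
    have hgval : (∫ t in Set.Ioc (0:ℝ) b, g t) = K * b ^ e * (b ^ (s + 3/2) / (s + 3/2)) := by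
      rw [hg]
      rw [MeasureTheory.integral_const_mul]
      congr 1
      rw [← intervalIntegral.integral_of_le hbpos.le,
        integral_rpow (Or.inl (by linarith : (-1:ℝ) < s + 1/2)),
        Real.zero_rpow (by linarith : s + 1/2 + 1 ≠ 0), sub_zero,
        show s + 1/2 + 1 = s + 3/2 by ring]
    have hfinal : K * b ^ e * (b ^ (s + 3/2) / (s + 3/2)) =
        K / (s + 3/2) * (1/4 : ℝ) ^ a * r ^ ((n:ℝ) + 2*s) := by
      have hbea : b ^ e * b ^ (s + 3/2) = b ^ a := by
        rw [← Real.rpow_add hbpos]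
        congr 1
        rw [he, ha]; ring
      calc K * b ^ e * (b ^ (s + 3/2) / (s + 3/2))
          = K / (s + 3/2) * (b ^ e * b ^ (s + 3/2)) := by ring
        _ = K / (s + 3/2) * b ^ a := by rw [hbea]
        _ = K / (s + 3/2) * (1/4 : ℝ) ^ a * r ^ ((n:ℝ) + 2*s) := by rw [hb4]; ring
    calc (∫ t in Set.Ioc (0:ℝ) b, f t) ≤ ∫ t in Set.Ioc (0:ℝ) b, g t := hint_le
      _ = K * b ^ e * (b ^ (s + 3/2) / (s + 3/2)) := hgval
      _ = K / (s + 3/2) * (1/4 : ℝ) ^ a * r ^ ((n:ℝ) + 2*s) := hfinal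
end

section
/- Let H : [0,∞) → ℝ be continuously differentiable with H(0) = 1 and 0 ≤ H(t) ≤ 1 for all t ≥ 0, and suppose H(t) converges to a limit L as t → ∞. Then lim_{s→0⁺} (s/Γ(1−s)) ∫₀^∞ (1 − H(t)) t^{−1−s} dt = 1 − L. -/
open MeasureTheory Real Filter

private lemma massLoss_linBound (H : ℝ → ℝ)
    (hH : ContDiffOn ℝ 1 H (Set.Ici 0))
    (hH0 : H 0 = 1)
    (hH_bdd : ∀ t : ℝ, 0 ≤ t → 0 ≤ H t ∧ H t ≤ 1) :
    ∃ C : ℝ, 1 ≤ C ∧ ∀ t : ℝ, 0 ≤ t → 1 - H t ≤ C * t := by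
  obtain ⟨K, u, hu, hK⟩ :=
    (hH 0 (Set.self_mem_Ici)).exists_lipschitzOnWith (convex_Ici 0)
  rw [Metric.mem_nhdsWithin_iff] at hu
  obtain ⟨δ, hδ, hδu⟩ := hu
  refine ⟨max 1 (max (K:ℝ) (1/(δ/2))), le_max_left _ _, fun t ht => ?_⟩
  rcases le_or_gt t (δ/2) with h | h
  · have h0u : (0:ℝ) ∈ u := hδu ⟨Metric.mem_ball_self hδ, Set.self_mem_Ici⟩
    have htu : t ∈ u := hδu ⟨by simp [abs_of_nonneg ht]; linarith [Real.dist_eq t 0], ht⟩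
    have := hK.dist_le_mul t htu 0 h0u
    rw [Real.dist_eq, Real.dist_eq, sub_zero, abs_of_nonneg ht] at this
    calc 1 - H t = -(H t - H 0) := by rw [hH0]; ring
    _ ≤ |H t - H 0| := neg_le_abs _
    _ ≤ K * t := this
    _ ≤ max 1 (max (K:ℝ) (1/(δ/2))) * t := by
        apply mul_le_mul_of_nonneg_right _ ht
        exact le_trans (le_max_left _ _) (le_max_right _ _)
  · have : 1 - H t ≤ 1 := by linarith [(hH_bdd t ht).1]
    have h2 : (1:ℝ) ≤ (1/(δ/2)) * t := by
      rw [div_mul_eq_mul_div, one_mul, le_div_iff₀ (by linarith)]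
      linarith
    calc 1 - H t ≤ 1 := this
    _ ≤ (1/(δ/2)) * t := h2
    _ ≤ max 1 (max (K:ℝ) (1/(δ/2))) * t := by
        apply mul_le_mul_of_nonneg_right _ ht
        exact le_trans (le_max_right _ _) (le_max_right _ _)

private lemma massLoss_subst (H : ℝ → ℝ) (s : ℝ) (hs : 0 < s) :
    s * ∫ t in Set.Ioi (0:ℝ), (1 - H t) * t ^ (-1 - s)
      = ∫ x in Set.Ioi (0:ℝ), (1 - H (x ^ (1/s))) * x ^ (-2:ℝ) := by
  have hp : (1/s) ≠ 0 := one_div_ne_zero hs.ne'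
  have key := integral_comp_rpow_Ioi (fun t => (1 - H t) * t ^ (-1 - s)) hp
  simp only [smul_eq_mul] at key
  have congr1 : ∫ x in Set.Ioi (0:ℝ),
      |1/s| * x ^ (1/s - 1) * ((1 - H (x ^ (1/s))) * (x ^ (1/s)) ^ (-1 - s))
      = ∫ x in Set.Ioi (0:ℝ), (1/s) * ((1 - H (x ^ (1/s))) * x ^ (-2:ℝ)) := by
    refine setIntegral_congr_fun measurableSet_Ioi (fun x hx => ?_)
    have hx0 : (0:ℝ) < x := hx
    have e1 : (x ^ (1/s)) ^ (-1 - s) = x ^ ((1/s) * (-1 - s)) :=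
      (Real.rpow_mul hx0.le _ _).symm
    have e2 : x ^ (1/s - 1) * x ^ ((1/s) * (-1 - s)) = x ^ (-2:ℝ) := by
      rw [← Real.rpow_add hx0]
      congr 1
      field_simp
      ring
    rw [abs_of_pos (by positivity : (0:ℝ) < 1/s), e1]
    calc 1/s * x ^ (1/s - 1) * ((1 - H (x ^ (1/s))) * x ^ (1/s * (-1-s)))
        = 1/s * ((1 - H (x ^ (1/s))) * (x ^ (1/s - 1) * x ^ (1/s * (-1-s)))) := by ring
      _ = 1/s * ((1 - H (x ^ (1/s))) * x ^ (-2:ℝ)) := by rw [e2]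
  rw [congr1, integral_const_mul] at key
  rw [← key]
  field_simp

private lemma massLoss_dct (H : ℝ → ℝ) (L C : ℝ) (hC1 : 1 ≤ C)
    (hC : ∀ t : ℝ, 0 ≤ t → 1 - H t ≤ C * t)
    (hH : ContDiffOn ℝ 1 H (Set.Ici 0))
    (hH0 : H 0 = 1)
    (hH_bdd : ∀ t : ℝ, 0 ≤ t → 0 ≤ H t ∧ H t ≤ 1)
    (hH_lim : Tendsto H atTop (nhds L)) :
    Tendsto (fun s : ℝ => ∫ x in Set.Ioi (0:ℝ), (1 - H (x ^ (1/s))) * x ^ (-2:ℝ))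
      (nhdsWithin 0 (Set.Ioi 0)) (nhds (1 - L)) := by
  set flim : ℝ → ℝ := fun x => Set.indicator (Set.Ioi 1) (fun x => (1 - L) * x ^ (-2:ℝ)) x with hflim
  have hint : ∫ x in Set.Ioi (0:ℝ), flim x = 1 - L := by
    rw [hflim, setIntegral_indicator measurableSet_Ioi, Set.Ioi_inter_Ioi, integral_const_mul,
      integral_Ioi_rpow_of_lt (by norm_num) (by norm_num : (0:ℝ) < max 0 1)]
    norm_num
  have hbound_int : IntegrableOn (fun x : ℝ => if x ≤ 1 then C * x else x ^ (-2:ℝ))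
      (Set.Ioi (0:ℝ)) := by
    have h1 : IntegrableOn (fun x : ℝ => if x ≤ 1 then C * x else x ^ (-2:ℝ)) (Set.Ioc 0 1) := by
      have hcm : Continuous (fun x : ℝ => C * x) := continuous_const.mul continuous_id
      refine (hcm.integrableOn_Ioc).congr_fun (fun x hx => ?_) measurableSet_Ioc
      simp [hx.2]
    have h2 : IntegrableOn (fun x : ℝ => if x ≤ 1 then C * x else x ^ (-2:ℝ)) (Set.Ioi 1) := by
      refine (integrableOn_Ioi_rpow_of_lt (by norm_num : (-2:ℝ) < -1) one_pos).congr_fun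
        (fun x hx => ?_) measurableSet_Ioi
      simp [not_le.mpr (Set.mem_Ioi.mp hx)]
    have hsplit : Set.Ioi (0:ℝ) = Set.Ioc 0 1 ∪ Set.Ioi 1 := by
      rw [Set.Ioc_union_Ioi_eq_Ioi]; norm_num
    rw [IntegrableOn, hsplit]
    exact h1.union h2
  refine hint ▸ tendsto_integral_filter_of_dominated_convergence
    (fun x => if x ≤ 1 then C * x else x ^ (-2:ℝ)) ?_ ?_ hbound_int ?_
  · -- measurability
    filter_upwards [self_mem_nhdsWithin] with s (hs : 0 < s)
    have hcont : ContinuousOn (fun x : ℝ => (1 - H (x ^ (1/s))) * x ^ (-2:ℝ)) (Set.Ioi 0) := by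
      apply ContinuousOn.mul
      · apply continuousOn_const.sub
        apply hH.continuousOn.comp
        · intro x hx
          exact ContinuousWithinAt.rpow_const (continuousWithinAt_id) (Or.inl (ne_of_gt hx))
        · intro x hx
          exact le_of_lt (Real.rpow_pos_of_pos hx _)
      · intro x hx
        exact ContinuousWithinAt.rpow_const (continuousWithinAt_id) (Or.inl (ne_of_gt hx))
    exact hcont.aestronglyMeasurable measurableSet_Ioi
  · -- bound
    filter_upwards [Ioo_mem_nhdsGT_of_mem (by norm_num : (0:ℝ) ∈ Set.Ico 0 (1/3))]
      with s hs
    obtain ⟨hs0, hs13⟩ := hs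
    rw [ae_restrict_iff' measurableSet_Ioi]
    refine ae_of_all _ (fun x hx => ?_)
    have hx0 : (0:ℝ) < x := hx
    have hxp : (0:ℝ) < x ^ (1/s) := Real.rpow_pos_of_pos hx0 _
    have hF0 : 0 ≤ 1 - H (x ^ (1/s)) := by linarith [(hH_bdd _ hxp.le).2]
    have hF1 : 1 - H (x ^ (1/s)) ≤ 1 := by linarith [(hH_bdd _ hxp.le).1]
    rw [Real.norm_eq_abs, abs_of_nonneg (by positivity)]
    by_cases hx1 : x ≤ 1
    · simp only [hx1, if_true]
      have h3s : (3:ℝ) ≤ 1/s := by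
        rw [le_div_iff₀ hs0]; linarith
      have hxs : x ^ (1/s) ≤ x ^ (3:ℝ) :=
        Real.rpow_le_rpow_of_exponent_ge hx0 hx1 h3s
      have : 1 - H (x ^ (1/s)) ≤ C * x ^ (3:ℝ) :=
        le_trans (hC _ hxp.le) (by nlinarith [Real.rpow_nonneg hx0.le (1/s)] )
      calc (1 - H (x ^ (1/s))) * x ^ (-2:ℝ) ≤ (C * x ^ (3:ℝ)) * x ^ (-2:ℝ) := by
            apply mul_le_mul_of_nonneg_right this (Real.rpow_nonneg hx0.le _)
        _ = C * x := by
            rw [mul_assoc, ← Real.rpow_add hx0]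
            norm_num
    · simp only [hx1, if_false]
      nlinarith [Real.rpow_nonneg hx0.le (-2:ℝ), Real.rpow_pos_of_pos hx0 (-2:ℝ)]
  · -- pointwise limit
    have hne : ∀ᵐ x : ℝ ∂(volume.restrict (Set.Ioi (0:ℝ))), x ≠ 1 := by
      refine ae_restrict_of_ae ?_
      have : volume ({(1:ℝ)} : Set ℝ) = 0 := Real.volume_singleton
      rw [ae_iff]
      convert this using 2
      ext x; simp
    filter_upwards [ae_restrict_mem measurableSet_Ioi, hne] with x hx hx1
    have hx0 : (0:ℝ) < x := hx
    rcases lt_or_gt_of_ne hx1 with h | h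
    · -- x < 1 : limit 0
      have hflimx : flim x = 0 := by
        rw [hflim]; simp [Set.indicator_of_notMem, not_lt.mpr h.le]
      rw [hflimx]
      have htend : Tendsto (fun s : ℝ => x ^ (1/s)) (nhdsWithin 0 (Set.Ioi 0)) (nhds 0) := by
        have h1 : Tendsto (fun y : ℝ => x ^ y) atTop (nhds 0) :=
          tendsto_rpow_atTop_of_base_lt_one x (by linarith) h
        have h2 : Tendsto (fun s : ℝ => 1/s) (nhdsWithin 0 (Set.Ioi 0)) atTop := by
          simpa [one_div] using tendsto_inv_nhdsGT_zero
        exact h1.comp h2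
      have hHc : Tendsto (fun s : ℝ => H (x ^ (1/s))) (nhdsWithin 0 (Set.Ioi 0)) (nhds 1) := by
        have hc : ContinuousWithinAt H (Set.Ici 0) 0 := hH.continuousOn 0 Set.self_mem_Ici
        have : Tendsto (fun s : ℝ => x ^ (1/s)) (nhdsWithin 0 (Set.Ioi 0))
            (nhdsWithin 0 (Set.Ici 0)) := by
          refine tendsto_nhdsWithin_of_tendsto_nhds_of_eventually_within _ htend ?_
          exact Eventually.of_forall (fun s => (Real.rpow_pos_of_pos hx0 _).le)
        simpa [hH0, Function.comp_def] using (hc.tendsto).comp this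
      have := ((tendsto_const_nhds (x := (1:ℝ))).sub hHc).mul_const (x ^ (-2:ℝ))
      simpa using this
    · -- x > 1 : limit (1-L) * x^{-2}
      have hflimx : flim x = (1 - L) * x ^ (-2:ℝ) := by
        rw [hflim]; simp [Set.indicator_of_mem, Set.mem_Ioi.mpr h]
      rw [hflimx]
      have htend : Tendsto (fun s : ℝ => x ^ (1/s)) (nhdsWithin 0 (Set.Ioi 0)) atTop := by
        have h1 : Tendsto (fun y : ℝ => x ^ y) atTop atTop := by
          simp_rw [Real.rpow_def_of_pos hx0]
          exact tendsto_exp_atTop.comp (Tendsto.const_mul_atTop (Real.log_pos h) tendsto_id)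
        have h2 : Tendsto (fun s : ℝ => 1/s) (nhdsWithin 0 (Set.Ioi 0)) atTop := by
          simpa [one_div] using tendsto_inv_nhdsGT_zero
        exact h1.comp h2
      exact ((tendsto_const_nhds.sub (hH_lim.comp htend)).mul_const _)

/-- Mass-loss limit: if `H : [0,∞) → ℝ` is `C¹` with `H(0) = 1`, `0 ≤ H ≤ 1` on `[0,∞)`,
and `H(t) → L` as `t → ∞`, then
`lim_{s→0⁺} (s/Γ(1−s)) ∫₀^∞ (1 − H(t)) t^{−1−s} dt = 1 − L`. -/
theorem massLoss_limit (H : ℝ → ℝ) (L : ℝ)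
    (hH : ContDiffOn ℝ 1 H (Set.Ici 0))
    (hH0 : H 0 = 1)
    (hH_bdd : ∀ t : ℝ, 0 ≤ t → 0 ≤ H t ∧ H t ≤ 1)
    (hH_lim : Tendsto H atTop (nhds L)) :
    Tendsto (fun s : ℝ =>
        s / Real.Gamma (1 - s) *
          ∫ t in Set.Ioi (0 : ℝ), (1 - H t) * t ^ (-1 - s))
      (nhdsWithin 0 (Set.Ioi 0)) (nhds (1 - L)) := by
  obtain ⟨C, hC1, hC⟩ := massLoss_linBound H hH hH0 hH_bdd
  have hΦ := massLoss_dct H L C hC1 hC hH hH0 hH_bdd hH_lim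
  -- s * I s → 1 - L
  have hsI : Tendsto (fun s : ℝ => s * ∫ t in Set.Ioi (0:ℝ), (1 - H t) * t ^ (-1 - s))
      (nhdsWithin 0 (Set.Ioi 0)) (nhds (1 - L)) := by
    refine Tendsto.congr' ?_ hΦ
    filter_upwards [self_mem_nhdsWithin] with s (hs : 0 < s)
    exact (massLoss_subst H s hs).symm
  -- Γ(1-s) → 1
  have hΓ : Tendsto (fun s : ℝ => Real.Gamma (1 - s)) (nhdsWithin 0 (Set.Ioi 0)) (nhds 1) := by
    have hcont : ContinuousAt Real.Gamma 1 := by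
      refine (Real.differentiableAt_Gamma (fun m => ?_)).continuousAt
      have : (0:ℝ) ≤ m := Nat.cast_nonneg m
      intro hcontra
      linarith [hcontra]
    have h1 : Tendsto (fun s : ℝ => 1 - s) (nhdsWithin 0 (Set.Ioi 0)) (nhds 1) := by
      have hc2 : Continuous (fun s : ℝ => 1 - s) := continuous_const.sub continuous_id
      have := hc2.tendsto (0:ℝ)
      simpa using this.mono_left nhdsWithin_le_nhds
    have := hcont.tendsto.comp h1
    simpa [Real.Gamma_one, Function.comp_def] using this
  have key : Tendsto (fun s : ℝ =>
      (s * ∫ t in Set.Ioi (0:ℝ), (1 - H t) * t ^ (-1 - s)) / Real.Gamma (1 - s))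
      (nhdsWithin 0 (Set.Ioi 0)) (nhds ((1 - L) / 1)) := hsI.div hΓ one_ne_zero
  rw [div_one] at key
  refine key.congr (fun s => ?_)
  ring
end

section
/- Let n ≥ 2 be an integer, s ∈ (0,1), and define P_n(r,t) = t^{−n/2} exp(−(n−1)² t/4 − r²/(4t) − (n−1)r/2) · (1+r+t)^{(n−3)/2} · (1+r) for r, t > 0. Then there exists a constant C > 0 (depending only on n and s) such that C^{-1} r^{−n−2s} ≤ ∫₀^∞ P_n(r,t) t^{−1−s} dt ≤ C r^{−n−2s} for all 0 < r ≤ 1. -/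
open MeasureTheory Real Set

noncomputable section FKAaux

def FKAp (n : ℕ) (s : ℝ) : ℝ := -(n:ℝ)/2 - 1 - s
def FKAk (n : ℕ) : ℝ := max (((n:ℝ)-3)/2) 0
def FKAHup (n : ℕ) (s : ℝ) (u : ℝ) : ℝ :=
  u ^ FKAp n s * Real.exp (-1/(4*u)) * (2+u) ^ FKAk n * 2

lemma FKAHup_meas (n : ℕ) (s : ℝ) : Measurable (FKAHup n s) := by
  unfold FKAHup; fun_prop

lemma FKAk_nonneg (n : ℕ) : 0 ≤ FKAk n := le_max_right _ _

lemma FKAHup_integrable (n : ℕ) (hn : 2 ≤ n) {s : ℝ} (hs : s ∈ Set.Ioo (0:ℝ) 1) :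
    IntegrableOn (FKAHup n s) (Ioi (0:ℝ)) := by
  obtain ⟨hs0, hs1⟩ := hs
  have hsplit : Ioi (0:ℝ) = Ioc 0 1 ∪ Ioi 1 := (Ioc_union_Ioi_eq_Ioi zero_le_one).symm
  rw [hsplit]
  apply IntegrableOn.union
  · -- bounded on (0,1]
    apply Measure.integrableOn_of_bounded (M := ((n+2).factorial : ℝ) * 4^(n+2) * 3 ^ FKAk n * 2)
    · exact (measure_mono Ioc_subset_Icc_self).trans_lt measure_Icc_lt_top |>.ne
    · exact (FKAHup_meas n s).aestronglyMeasurable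
    · refine (ae_restrict_iff' measurableSet_Ioc).2 (Filter.Eventually.of_forall ?_)
      rintro u ⟨hu0, hu1⟩
      have h4u : (0:ℝ) < 4*u := by linarith
      have hb1 : u ^ FKAp n s * Real.exp (-1/(4*u)) ≤ ((n+2).factorial : ℝ) * 4^(n+2) := by
        have hpow : ((1/(4*u))^(n+2) / (n+2).factorial : ℝ) ≤ Real.exp (1/(4*u)) :=
          Real.pow_div_factorial_le_exp _ (by positivity) _
        have hexp : Real.exp (-1/(4*u)) ≤ ((n+2).factorial : ℝ) * (4*u)^(n+2) := by
          rw [neg_div, Real.exp_neg]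
          rw [inv_le_iff_one_le_mul₀ (Real.exp_pos _)] at *
          calc (1:ℝ) = ((1/(4*u))^(n+2) / (n+2).factorial) * (((n+2).factorial : ℝ) * (4*u)^(n+2)) := by
                have h4 : ((4*u)^(n+2)) ≠ 0 := by positivity
                have hf : ((n+2).factorial : ℝ) ≠ 0 := by positivity
                rw [one_div, inv_pow]; field_simp
            _ ≤ Real.exp (1/(4*u)) * (((n+2).factorial : ℝ) * (4*u)^(n+2)) :=
                mul_le_mul_of_nonneg_right hpow (by positivity)
            _ = ((n+2).factorial : ℝ) * (4*u)^(n+2) * Real.exp (1/(4*u)) := by ring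
        calc u ^ FKAp n s * Real.exp (-1/(4*u))
            ≤ u ^ FKAp n s * (((n+2).factorial : ℝ) * (4*u)^(n+2)) :=
              mul_le_mul_of_nonneg_left hexp (Real.rpow_nonneg hu0.le _)
          _ = ((n+2).factorial : ℝ) * 4^(n+2) * (u ^ FKAp n s * u ^ ((n+2:ℕ):ℝ)) := by
              rw [mul_pow, Real.rpow_natCast]; ring
          _ ≤ ((n+2).factorial : ℝ) * 4^(n+2) * 1 := by
              apply mul_le_mul_of_nonneg_left _ (by positivity)
              rw [← Real.rpow_add hu0]
              apply Real.rpow_le_one hu0.le hu1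
              have hn2 : (2:ℝ) ≤ (n:ℝ) := by exact_mod_cast hn
              unfold FKAp
              push_cast
              linarith
          _ = ((n+2).factorial : ℝ) * 4^(n+2) := mul_one _
      have hb2 : (2+u) ^ FKAk n ≤ 3 ^ FKAk n :=
        Real.rpow_le_rpow (by linarith) (by linarith) (FKAk_nonneg n)
      have hnn : 0 ≤ FKAHup n s u := by
        unfold FKAHup
        have := Real.rpow_nonneg hu0.le (FKAp n s)
        have := Real.rpow_nonneg (show (0:ℝ) ≤ 2+u by linarith) (FKAk n)
        positivity
      rw [Real.norm_of_nonneg hnn]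
      unfold FKAHup
      apply mul_le_mul_of_nonneg_right _ zero_le_two
      exact mul_le_mul hb1 hb2 (Real.rpow_nonneg (by linarith) _) (by positivity)
  · -- tail
    have he : FKAp n s + FKAk n < -1 := by
      have hn2 : (2:ℝ) ≤ (n:ℝ) := by exact_mod_cast hn
      unfold FKAp FKAk
      rcases le_or_gt 3 n with h3 | h3
      · have h3' : (3:ℝ) ≤ (n:ℝ) := by exact_mod_cast h3
        rw [max_eq_left (by linarith)]
        linarith
      · interval_cases n
        · rw [max_eq_right (by norm_num)]
          norm_num
          linarith
    have hg : IntegrableOn (fun u : ℝ => 2 * 3 ^ FKAk n * u ^ (FKAp n s + FKAk n)) (Ioi 1) :=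
      (integrableOn_Ioi_rpow_of_lt he one_pos).const_mul _
    apply Integrable.mono' hg ((FKAHup_meas n s).aestronglyMeasurable)
    refine (ae_restrict_iff' measurableSet_Ioi).2 (Filter.Eventually.of_forall ?_)
    intro u hu
    rw [mem_Ioi] at hu
    have hu0 : (0:ℝ) < u := lt_trans one_pos hu
    have hnn : 0 ≤ FKAHup n s u := by
      unfold FKAHup
      have := Real.rpow_nonneg hu0.le (FKAp n s)
      have := Real.rpow_nonneg (show (0:ℝ) ≤ 2+u by linarith) (FKAk n)
      positivity
    rw [Real.norm_of_nonneg hnn]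
    unfold FKAHup
    calc u ^ FKAp n s * Real.exp (-1/(4*u)) * (2+u) ^ FKAk n * 2
        ≤ u ^ FKAp n s * 1 * (3*u) ^ FKAk n * 2 := by
          apply mul_le_mul_of_nonneg_right _ zero_le_two
          apply mul_le_mul
          · apply mul_le_mul_of_nonneg_left _ (Real.rpow_nonneg hu0.le _)
            apply Real.exp_le_one_iff.2
            rw [neg_div]
            simp only [Left.neg_nonpos_iff]
            positivity
          · exact Real.rpow_le_rpow (by linarith) (by linarith) (FKAk_nonneg n)
          · exact Real.rpow_nonneg (by linarith) _
          · positivity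
      _ = 2 * 3 ^ FKAk n * u ^ (FKAp n s + FKAk n) := by
          rw [Real.mul_rpow (by norm_num) hu0.le, Real.rpow_add hu0]
          ring


def FKAHlow (n : ℕ) (s : ℝ) (u : ℝ) : ℝ :=
  u ^ FKAp n s * Real.exp (-(((n:ℝ)-1)^2 * u / 4) - 1/(4*u) - ((n:ℝ)-1)/2) *
    (2+u) ^ (-(1:ℝ)/2)

lemma FKAHlow_meas (n : ℕ) (s : ℝ) : Measurable (FKAHlow n s) := by
  unfold FKAHlow; fun_prop

def FKAG (n : ℕ) (s r u : ℝ) : ℝ :=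
  u ^ FKAp n s *
    Real.exp (-(((n:ℝ)-1)^2 * (r^2*u) / 4) - 1/(4*u) - ((n:ℝ)-1)*r/2) *
    (1 + r + r^2*u) ^ (((n:ℝ)-3)/2) * (1+r)

lemma FKAG_meas (n : ℕ) (s r : ℝ) : Measurable (FKAG n s r) := by
  unfold FKAG; fun_prop

lemma FKAG_nonneg (n : ℕ) (s : ℝ) {r u : ℝ} (hr : 0 < r) (hu : 0 < u) :
    0 ≤ FKAG n s r u := by
  unfold FKAG
  have h1 := Real.rpow_nonneg hu.le (FKAp n s)
  have h2 : (0:ℝ) ≤ 1 + r + r^2*u := by positivity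
  have h3 := Real.rpow_nonneg h2 (((n:ℝ)-3)/2)
  positivity

lemma FKAHlow_le_G (n : ℕ) (hn : 2 ≤ n) (s : ℝ) {r u : ℝ} (hr0 : 0 < r) (hr1 : r ≤ 1)
    (hu : 0 < u) : FKAHlow n s u ≤ FKAG n s r u := by
  have hn2 : (2:ℝ) ≤ (n:ℝ) := by exact_mod_cast hn
  have hr2 : r^2 ≤ 1 := by nlinarith
  have hru : r^2*u ≤ u := by nlinarith [mul_le_mul_of_nonneg_right hr2 hu.le]
  have hB1 : (1:ℝ) ≤ 1 + r + r^2*u := by nlinarith [mul_nonneg (sq_nonneg r) hu.le]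
  have hB2 : 1 + r + r^2*u ≤ 2 + u := by linarith
  have hexp : Real.exp (-(((n:ℝ)-1)^2 * u / 4) - 1/(4*u) - ((n:ℝ)-1)/2)
      ≤ Real.exp (-(((n:ℝ)-1)^2 * (r^2*u) / 4) - 1/(4*u) - ((n:ℝ)-1)*r/2) := by
    apply Real.exp_le_exp.2
    have h1 : ((n:ℝ)-1)^2 * (r^2*u) ≤ ((n:ℝ)-1)^2 * u :=
      mul_le_mul_of_nonneg_left hru (sq_nonneg _)
    have h2 : ((n:ℝ)-1)*r ≤ ((n:ℝ)-1) := by nlinarith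
    linarith
  have hbr : (2+u) ^ (-(1:ℝ)/2) ≤ (1 + r + r^2*u) ^ (((n:ℝ)-3)/2) := by
    rcases le_or_gt 3 n with h3 | h3
    · have h3' : (3:ℝ) ≤ (n:ℝ) := by exact_mod_cast h3
      calc (2+u) ^ (-(1:ℝ)/2) ≤ 1 := Real.rpow_le_one_of_one_le_of_nonpos (by linarith) (by norm_num)
        _ = (1 + r + r^2*u) ^ (0:ℝ) := (Real.rpow_zero _).symm
        _ ≤ (1 + r + r^2*u) ^ (((n:ℝ)-3)/2) :=
            Real.rpow_le_rpow_of_exponent_le hB1 (by linarith)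
    · interval_cases n
      have : ((2:ℕ):ℝ) = (2:ℝ) := by norm_num
      rw [this]
      norm_num
      exact Real.rpow_le_rpow_of_nonpos (by linarith) hB2 (by norm_num)
  calc FKAHlow n s u ≤ u ^ FKAp n s *
        Real.exp (-(((n:ℝ)-1)^2 * (r^2*u) / 4) - 1/(4*u) - ((n:ℝ)-1)*r/2) *
        (1 + r + r^2*u) ^ (((n:ℝ)-3)/2) := by
        unfold FKAHlow
        apply mul_le_mul
        · exact mul_le_mul_of_nonneg_left hexp (Real.rpow_nonneg hu.le _)
        · exact hbr
        · exact Real.rpow_nonneg (by linarith) _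
        · positivity
    _ ≤ FKAG n s r u := by
        unfold FKAG
        apply le_mul_of_one_le_right _ (by linarith)
        have h1 := Real.rpow_nonneg hu.le (FKAp n s)
        have h3 := Real.rpow_nonneg (show (0:ℝ) ≤ 1 + r + r^2*u by positivity) (((n:ℝ)-3)/2)
        positivity

lemma FKAG_le_Hup (n : ℕ) (hn : 2 ≤ n) (s : ℝ) {r u : ℝ} (hr0 : 0 < r) (hr1 : r ≤ 1)
    (hu : 0 < u) : FKAG n s r u ≤ FKAHup n s u := by
  have hn2 : (2:ℝ) ≤ (n:ℝ) := by exact_mod_cast hn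
  have hr2 : r^2 ≤ 1 := by nlinarith
  have hru : r^2*u ≤ u := by nlinarith [mul_le_mul_of_nonneg_right hr2 hu.le]
  have hB1 : (1:ℝ) ≤ 1 + r + r^2*u := by nlinarith [mul_nonneg (sq_nonneg r) hu.le]
  have hB2 : 1 + r + r^2*u ≤ 2 + u := by linarith
  have hexp : Real.exp (-(((n:ℝ)-1)^2 * (r^2*u) / 4) - 1/(4*u) - ((n:ℝ)-1)*r/2)
      ≤ Real.exp (-1/(4*u)) := by
    apply Real.exp_le_exp.2
    have h1 : (0:ℝ) ≤ ((n:ℝ)-1)^2 * (r^2*u) / 4 := by positivity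
    have h2 : (0:ℝ) ≤ ((n:ℝ)-1)*r/2 := by nlinarith
    rw [neg_div]
    linarith
  have hbr : (1 + r + r^2*u) ^ (((n:ℝ)-3)/2) ≤ (2+u) ^ FKAk n := by
    rcases le_or_gt 3 n with h3 | h3
    · have h3' : (3:ℝ) ≤ (n:ℝ) := by exact_mod_cast h3
      have hk : FKAk n = ((n:ℝ)-3)/2 := max_eq_left (by linarith)
      rw [hk]
      exact Real.rpow_le_rpow (by linarith) hB2 (by linarith)
    · interval_cases n
      have hk : FKAk 2 = 0 := max_eq_right (by norm_num)
      rw [hk, Real.rpow_zero]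
      apply Real.rpow_le_one_of_one_le_of_nonpos hB1
      norm_num
  unfold FKAG FKAHup
  calc u ^ FKAp n s *
        Real.exp (-(((n:ℝ)-1)^2 * (r^2*u) / 4) - 1/(4*u) - ((n:ℝ)-1)*r/2) *
        (1 + r + r^2*u) ^ (((n:ℝ)-3)/2) * (1+r)
      ≤ u ^ FKAp n s * Real.exp (-1/(4*u)) * (2+u) ^ FKAk n * 2 := by
        apply mul_le_mul
        · apply mul_le_mul
          · exact mul_le_mul_of_nonneg_left hexp (Real.rpow_nonneg hu.le _)
          · exact hbr
          · exact Real.rpow_nonneg (by linarith) _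
          · positivity
        · linarith
        · linarith
        · have h1 := Real.rpow_nonneg hu.le (FKAp n s)
          have h3 := Real.rpow_nonneg (show (0:ℝ) ≤ 2+u by linarith) (FKAk n)
          positivity

lemma FKAHlow_pos (n : ℕ) (s : ℝ) {u : ℝ} (hu : 0 < u) : 0 < FKAHlow n s u := by
  unfold FKAHlow
  have h1 := Real.rpow_pos_of_pos hu (FKAp n s)
  have h2 := Real.exp_pos (-(((n:ℝ)-1)^2 * u / 4) - 1/(4*u) - ((n:ℝ)-1)/2)
  have h3 := Real.rpow_pos_of_pos (show (0:ℝ) < 2+u by linarith) (-(1:ℝ)/2)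
  positivity

lemma FKAHlow_le_Hup (n : ℕ) (hn : 2 ≤ n) (s : ℝ) {u : ℝ} (hu : 0 < u) :
    FKAHlow n s u ≤ FKAHup n s u := by
  have hn2 : (2:ℝ) ≤ (n:ℝ) := by exact_mod_cast hn
  unfold FKAHlow FKAHup
  have hb : (2+u) ^ (-(1:ℝ)/2) ≤ (2+u) ^ FKAk n := by
    apply Real.rpow_le_rpow_of_exponent_le (by linarith)
    have := FKAk_nonneg n
    linarith
  have hexp : Real.exp (-(((n:ℝ)-1)^2 * u / 4) - 1/(4*u) - ((n:ℝ)-1)/2)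
      ≤ Real.exp (-1/(4*u)) := by
    apply Real.exp_le_exp.2
    have h1 : (0:ℝ) ≤ ((n:ℝ)-1)^2 * u / 4 := by positivity
    rw [neg_div]
    linarith
  calc u ^ FKAp n s * Real.exp (-(((n:ℝ)-1)^2 * u / 4) - 1/(4*u) - ((n:ℝ)-1)/2) *
        (2+u) ^ (-(1:ℝ)/2)
      ≤ u ^ FKAp n s * Real.exp (-1/(4*u)) * (2+u) ^ FKAk n := by
        apply mul_le_mul
        · exact mul_le_mul_of_nonneg_left hexp (Real.rpow_nonneg hu.le _)
        · exact hb
        · exact Real.rpow_nonneg (by linarith) _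
        · have h1 := Real.rpow_nonneg hu.le (FKAp n s)
          positivity
    _ ≤ u ^ FKAp n s * Real.exp (-1/(4*u)) * (2+u) ^ FKAk n * 2 := by
        apply le_mul_of_one_le_right _ one_le_two
        have h1 := Real.rpow_nonneg hu.le (FKAp n s)
        have h3 := Real.rpow_nonneg (show (0:ℝ) ≤ 2+u by linarith) (FKAk n)
        positivity

lemma FKAHlow_integrable (n : ℕ) (hn : 2 ≤ n) {s : ℝ} (hs : s ∈ Set.Ioo (0:ℝ) 1) :
    IntegrableOn (FKAHlow n s) (Ioi (0:ℝ)) := by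
  apply Integrable.mono' (FKAHup_integrable n hn hs) (FKAHlow_meas n s).aestronglyMeasurable
  refine (ae_restrict_iff' measurableSet_Ioi).2 (Filter.Eventually.of_forall ?_)
  intro u hu
  rw [mem_Ioi] at hu
  rw [Real.norm_of_nonneg (FKAHlow_pos n s hu).le]
  exact FKAHlow_le_Hup n hn s hu

lemma FKAHlow_integral_pos (n : ℕ) (hn : 2 ≤ n) {s : ℝ} (hs : s ∈ Set.Ioo (0:ℝ) 1) :
    0 < ∫ u in Ioi (0:ℝ), FKAHlow n s u := by
  rw [setIntegral_pos_iff_support_of_nonneg_ae]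
  · have hsub : Ioi (0:ℝ) ⊆ Function.support (FKAHlow n s) ∩ Ioi 0 := by
      intro u hu
      exact ⟨(FKAHlow_pos n s hu).ne', hu⟩
    calc (0:ENNReal) < volume (Ioi (0:ℝ)) := by simp
      _ ≤ volume (Function.support (FKAHlow n s) ∩ Ioi 0) := measure_mono hsub
  · refine (ae_restrict_iff' measurableSet_Ioi).2 (Filter.Eventually.of_forall ?_)
    intro u hu
    exact (FKAHlow_pos n s hu).le
  · exact FKAHlow_integrable n hn hs


lemma FKA_pointwise (n : ℕ) {s r x : ℝ} (hr0 : 0 < r) (hx : 0 < x) :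
    ((r^2*x) ^ (-(n : ℝ)/2) *
        Real.exp (-(((n : ℝ) - 1)^2 * (r^2*x) / 4) - r^2 / (4 * (r^2*x)) - ((n : ℝ) - 1) * r / 2) *
        (1 + r + (r^2*x)) ^ (((n : ℝ) - 3)/2) * (1 + r)) * (r^2*x) ^ (-1 - s)
      = r ^ (-(n:ℝ) - 2 - 2*s) * FKAG n s r x := by
  have hmul : ∀ c : ℝ, (r^2*x) ^ c = r ^ (2*c) * x ^ c := by
    intro c
    rw [Real.mul_rpow (by positivity) hx.le, ← Real.rpow_natCast r 2,
      ← Real.rpow_mul hr0.le]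
    norm_num
  have e2 : r^2/(4*(r^2*x)) = 1/(4*x) := by
    rw [div_eq_div_iff (by positivity) (by positivity)]; ring
  rw [hmul, hmul, e2]
  unfold FKAG
  rw [show (-(n:ℝ) - 2 - 2*s) = 2*(-(n:ℝ)/2) + 2*(-1-s) by ring, Real.rpow_add hr0,
    show FKAp n s = (-(n:ℝ)/2) + (-1-s) by unfold FKAp; ring, Real.rpow_add hx]
  ring

lemma FKA_key (n : ℕ) {s r : ℝ} (hr0 : 0 < r) :
    (∫ t in Set.Ioi (0 : ℝ),
        (t ^ (-(n : ℝ)/2) *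
          Real.exp (-(((n : ℝ) - 1)^2 * t / 4) - r^2 / (4 * t) - ((n : ℝ) - 1) * r / 2) *
          (1 + r + t) ^ (((n : ℝ) - 3)/2) * (1 + r)) * t ^ (-1 - s))
      = r ^ (-(n:ℝ) - 2*s) * ∫ u in Set.Ioi (0:ℝ), FKAG n s r u := by
  set f : ℝ → ℝ := fun t =>
    (t ^ (-(n : ℝ)/2) *
      Real.exp (-(((n : ℝ) - 1)^2 * t / 4) - r^2 / (4 * t) - ((n : ℝ) - 1) * r / 2) *
      (1 + r + t) ^ (((n : ℝ) - 3)/2) * (1 + r)) * t ^ (-1 - s) with hf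
  have hr2 : (0:ℝ) < r^2 := by positivity
  have hsub := integral_comp_mul_left_Ioi f 0 hr2
  rw [mul_zero] at hsub
  have h1 : (∫ x in Set.Ioi (0:ℝ), f (r^2 * x))
      = ∫ x in Set.Ioi (0:ℝ), r ^ (-(n:ℝ) - 2 - 2*s) * FKAG n s r x := by
    apply setIntegral_congr_fun measurableSet_Ioi
    intro x hx
    exact FKA_pointwise n hr0 hx
  rw [h1, integral_const_mul, smul_eq_mul] at hsub
  have h2 : (∫ x in Set.Ioi (0:ℝ), f x)
      = r^2 * (r ^ (-(n:ℝ) - 2 - 2*s) * ∫ u in Set.Ioi (0:ℝ), FKAG n s r u) := by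
    rw [hsub]
    field_simp
  rw [h2, ← mul_assoc, ← Real.rpow_natCast r 2, ← Real.rpow_add hr0]
  congr 1
  push_cast
  ring

end FKAaux


/-- Small-`r` asymptotics of the fractional kernel on `ℍⁿ` built from the
Davies–Mandouvalos comparison function `P_n`: there is `C > 0` with
`C⁻¹ r^{−n−2s} ≤ ∫₀^∞ P_n(r,t) t^{−1−s} dt ≤ C r^{−n−2s}` for all `0 < r ≤ 1`. -/
theorem fractional_kernel_asymp_small (n : ℕ) (hn : 2 ≤ n) (s : ℝ)
    (hs : s ∈ Set.Ioo (0 : ℝ) 1) :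
    ∃ C : ℝ, 0 < C ∧ ∀ r : ℝ, 0 < r → r ≤ 1 →
      (C⁻¹ * r ^ (-(n : ℝ) - 2*s) ≤
        ∫ t in Set.Ioi (0 : ℝ),
          (t ^ (-(n : ℝ)/2) *
            Real.exp (-(((n : ℝ) - 1)^2 * t / 4) - r^2 / (4 * t) - ((n : ℝ) - 1) * r / 2) *
            (1 + r + t) ^ (((n : ℝ) - 3)/2) * (1 + r)) * t ^ (-1 - s)) ∧
      ((∫ t in Set.Ioi (0 : ℝ),
          (t ^ (-(n : ℝ)/2) *
            Real.exp (-(((n : ℝ) - 1)^2 * t / 4) - r^2 / (4 * t) - ((n : ℝ) - 1) * r / 2) *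
            (1 + r + t) ^ (((n : ℝ) - 3)/2) * (1 + r)) * t ^ (-1 - s)) ≤
        C * r ^ (-(n : ℝ) - 2*s)) := by
  classical
  set c0 : ℝ := ∫ u in Set.Ioi (0:ℝ), FKAHlow n s u with hc0def
  set C0 : ℝ := ∫ u in Set.Ioi (0:ℝ), FKAHup n s u with hC0def
  have hc0 : 0 < c0 := FKAHlow_integral_pos n hn hs
  refine ⟨max C0 c0⁻¹, lt_of_lt_of_le (inv_pos.2 hc0) (le_max_right _ _), ?_⟩
  intro r hr0 hr1
  have hrpow : 0 < r ^ (-(n : ℝ) - 2*s) := Real.rpow_pos_of_pos hr0 _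
  have hGint : IntegrableOn (FKAG n s r) (Set.Ioi (0:ℝ)) := by
    apply Integrable.mono' (FKAHup_integrable n hn hs) (FKAG_meas n s r).aestronglyMeasurable
    refine (ae_restrict_iff' measurableSet_Ioi).2 (Filter.Eventually.of_forall ?_)
    intro u hu
    rw [Set.mem_Ioi] at hu
    rw [Real.norm_of_nonneg (FKAG_nonneg n s hr0 hu)]
    exact FKAG_le_Hup n hn s hr0 hr1 hu
  have hlow : c0 ≤ ∫ u in Set.Ioi (0:ℝ), FKAG n s r u := by
    apply setIntegral_mono_on (FKAHlow_integrable n hn hs) hGint measurableSet_Ioi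
    intro u hu
    exact FKAHlow_le_G n hn s hr0 hr1 hu
  have hup : (∫ u in Set.Ioi (0:ℝ), FKAG n s r u) ≤ C0 := by
    apply setIntegral_mono_on hGint (FKAHup_integrable n hn hs) measurableSet_Ioi
    intro u hu
    exact FKAG_le_Hup n hn s hr0 hr1 hu
  rw [FKA_key n hr0]
  constructor
  · have h1 : (max C0 c0⁻¹)⁻¹ ≤ c0 := by
      have h2 : c0⁻¹ ≤ max C0 c0⁻¹ := le_max_right _ _
      calc (max C0 c0⁻¹)⁻¹ ≤ (c0⁻¹)⁻¹ := by
            apply inv_anti₀ (inv_pos.2 hc0) h2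
        _ = c0 := inv_inv c0
    calc (max C0 c0⁻¹)⁻¹ * r ^ (-(n : ℝ) - 2*s) ≤ c0 * r ^ (-(n : ℝ) - 2*s) :=
          mul_le_mul_of_nonneg_right h1 hrpow.le
      _ ≤ (∫ u in Set.Ioi (0:ℝ), FKAG n s r u) * r ^ (-(n : ℝ) - 2*s) :=
          mul_le_mul_of_nonneg_right hlow hrpow.le
      _ = r ^ (-(n : ℝ) - 2*s) * ∫ u in Set.Ioi (0:ℝ), FKAG n s r u := mul_comm _ _
  · calc r ^ (-(n : ℝ) - 2*s) * ∫ u in Set.Ioi (0:ℝ), FKAG n s r u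
        ≤ r ^ (-(n : ℝ) - 2*s) * C0 := mul_le_mul_of_nonneg_left hup hrpow.le
      _ ≤ max C0 c0⁻¹ * r ^ (-(n : ℝ) - 2*s) := by
          rw [mul_comm]
          exact mul_le_mul_of_nonneg_right (le_max_left _ _) hrpow.le
end

section
/- Let n ≥ 2 be an integer, s ∈ (0,1), and define P_n(r,t) = t^{−n/2} exp(−(n−1)² t/4 − r²/(4t) − (n−1)r/2) · (1+r+t)^{(n−3)/2} · (1+r) for r, t > 0. Then there exists a constant C > 0 (depending only on n and s) such that C^{-1} r^{−1−s} e^{−(n−1)r} ≤ ∫₀^∞ P_n(r,t) t^{−1−s} dt ≤ C r^{−1−s} e^{−(n−1)r} for all r ≥ 1. -/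
open MeasureTheory Real Set

/-- The "Gaussian part" of the Davies–Mandouvalos integrand, after extracting
the factor `exp (-(ν-1) r)`. -/
noncomputable def DMG (ν s r t : ℝ) : ℝ :=
  t ^ (-ν/2 - 1 - s) * Real.exp (-(((ν-1)*t - r)^2/(4*t))) *
    (1+r+t) ^ ((ν-3)/2) * (1+r)

private lemma pow_le_factorial_mul_exp {x : ℝ} (hx : 0 ≤ x) (m : ℕ) :
    x ^ m ≤ m.factorial * Real.exp x := by
  have h := Real.sum_le_exp_of_nonneg hx (m+1)
  have h2 : x ^ m / m.factorial ≤ ∑ i ∈ Finset.range (m+1), x ^ i / i.factorial :=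
    Finset.single_le_sum (f := fun i => x ^ i / (i.factorial : ℝ))
      (fun i _ => by positivity) (Finset.self_mem_range_succ m)
  have hm : (0:ℝ) < m.factorial := by exact_mod_cast m.factorial_pos
  rw [div_le_iff₀ hm] at h2
  calc x ^ m ≤ Real.exp x * m.factorial := le_trans h2 (by gcongr)
    _ = m.factorial * Real.exp x := by ring

private lemma rpow_le_exp_aux (m : ℕ) {c r β : ℝ} (hc : 0 < c) (hr : 1 ≤ r)
    (hβ : β ≤ m) : r ^ β ≤ (m.factorial * c⁻¹ ^ m) * Real.exp (c * r) := by
  have hr0 : (0:ℝ) < r := lt_of_lt_of_le one_pos hr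
  have h1 : r ^ β ≤ r ^ (m:ℝ) := Real.rpow_le_rpow_of_exponent_le hr hβ
  rw [Real.rpow_natCast] at h1
  have h2 : (c*r) ^ m ≤ m.factorial * Real.exp (c*r) :=
    pow_le_factorial_mul_exp (by positivity) m
  have h3 : r ^ m = c⁻¹ ^ m * (c*r) ^ m := by
    rw [mul_pow, ← mul_assoc, ← mul_pow, inv_mul_cancel₀ hc.ne', one_pow, one_mul]
  calc r ^ β ≤ r ^ m := h1
    _ = c⁻¹ ^ m * (c*r) ^ m := h3
    _ ≤ c⁻¹ ^ m * (m.factorial * Real.exp (c*r)) := by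
        have : (0:ℝ) ≤ c⁻¹ ^ m := by positivity
        exact mul_le_mul_of_nonneg_left h2 this
    _ = (m.factorial * c⁻¹ ^ m) * Real.exp (c * r) := by ring

private lemma exp_le_rpow_aux (m : ℕ) {c r β : ℝ} (hc : 0 < c) (hr : 1 ≤ r)
    (hβm : β ≤ m) :
    Real.exp (-(c*r)) ≤ (m.factorial * c⁻¹ ^ m) * r ^ (-β) := by
  have hr0 : (0:ℝ) < r := lt_of_lt_of_le one_pos hr
  have h := rpow_le_exp_aux m hc hr hβm
  have hrb : (0:ℝ) < r ^ β := Real.rpow_pos_of_pos hr0 β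
  have hD : (0:ℝ) < (m.factorial : ℝ) * c⁻¹ ^ m := by positivity
  rw [Real.rpow_neg hr0.le, Real.exp_neg, ← div_eq_mul_inv, le_div_iff₀ hrb,
    inv_mul_eq_div, div_le_iff₀ (Real.exp_pos _)]
  linarith [h]

private lemma rpow_sandwich {K q y x : ℝ} (hy : 0 < y) (hK : 1 ≤ K)
    (h1 : y ≤ x) (h2 : x ≤ K * y) :
    K ^ (-|q|) * y ^ q ≤ x ^ q ∧ x ^ q ≤ K ^ |q| * y ^ q := by
  have hx : 0 < x := lt_of_lt_of_le hy h1
  have hK0 : (0:ℝ) < K := lt_of_lt_of_le one_pos hK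
  rcases le_or_gt 0 q with hq | hq
  · rw [abs_of_nonneg hq]
    constructor
    · have hA : y ^ q ≤ x ^ q := Real.rpow_le_rpow hy.le h1 hq
      have hB : K ^ (-q) ≤ 1 :=
        Real.rpow_le_one_of_one_le_of_nonpos hK (neg_nonpos.mpr hq)
      nlinarith [Real.rpow_nonneg hy.le q, Real.rpow_pos_of_pos hK0 (-q)]
    · calc x ^ q ≤ (K*y) ^ q := Real.rpow_le_rpow hx.le h2 hq
        _ = K ^ q * y ^ q := Real.mul_rpow hK0.le hy.le
  · rw [abs_of_neg hq]
    constructor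
    · have : (K*y) ^ q ≤ x ^ q := Real.rpow_le_rpow_of_nonpos hx h2 hq.le
      calc K ^ (-(-q)) * y ^ q = (K*y) ^ q := by
            rw [neg_neg, ← Real.mul_rpow hK0.le hy.le]
        _ ≤ x ^ q := this
    · have hA : x ^ q ≤ y ^ q := Real.rpow_le_rpow_of_nonpos hy h1 hq.le
      have hB : (1:ℝ) ≤ K ^ (-q) := by
        calc (1:ℝ) = K ^ (0:ℝ) := (Real.rpow_zero K).symm
          _ ≤ K ^ (-q) := Real.rpow_le_rpow_of_exponent_le hK (by linarith)
      nlinarith [Real.rpow_nonneg hy.le q]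

private lemma DMG_nonneg {ν s r t : ℝ} (hr : 0 ≤ r) (ht : 0 ≤ t) :
    0 ≤ DMG ν s r t := by
  unfold DMG
  have h1 : (0:ℝ) ≤ 1 + r + t := by linarith
  positivity

private lemma DMG_contOn (ν s r : ℝ) (hr : 0 ≤ r) :
    ContinuousOn (fun t => DMG ν s r t) (Set.Ioi (0:ℝ)) := by
  unfold DMG
  have c1 : ContinuousOn (fun t : ℝ => t ^ (-ν/2 - 1 - s)) (Set.Ioi 0) :=
    ContinuousOn.rpow_const continuousOn_id (fun x hx => Or.inl (ne_of_gt hx))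
  have c2 : ContinuousOn (fun t : ℝ => Real.exp (-(((ν-1)*t - r)^2/(4*t))))
      (Set.Ioi 0) := by
    apply Real.continuous_exp.comp_continuousOn
    apply ContinuousOn.neg
    apply ContinuousOn.div
    · fun_prop
    · fun_prop
    · intro x hx
      have : (0:ℝ) < x := hx
      positivity
  have c3 : ContinuousOn (fun t : ℝ => (1+r+t) ^ ((ν-3)/2)) (Set.Ioi 0) := by
    apply ContinuousOn.rpow_const (by fun_prop)
    intro x hx
    have : (0:ℝ) < x := hx
    left
    positivity
  exact ((c1.mul c2).mul c3).mul continuousOn_const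

private lemma phi_contOn (e : ℝ) :
    ContinuousOn (fun t : ℝ => t ^ e * Real.exp (-(1/(16*t)))) (Set.Ioi (0:ℝ)) := by
  apply ContinuousOn.mul
  · exact ContinuousOn.rpow_const continuousOn_id (fun x hx => Or.inl (ne_of_gt hx))
  · apply Real.continuous_exp.comp_continuousOn
    apply ContinuousOn.neg
    apply ContinuousOn.div continuousOn_const (by fun_prop)
    intro x hx
    have : (0:ℝ) < x := hx
    positivity

private lemma phi_pt_bound {e t : ℝ} (ht0 : 0 < t) (ht1 : t ≤ 1) :
    t ^ e * Real.exp (-(1/(16*t))) ≤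
      16 ^ (Nat.ceil (-e)) * (Nat.ceil (-e)).factorial := by
  set m := Nat.ceil (-e) with hm
  have h1 : t ^ e ≤ t ^ (-(m:ℝ)) :=
    Real.rpow_le_rpow_of_exponent_ge ht0 ht1 (by
      have := Nat.le_ceil (-e); rw [← hm] at this; linarith)
  have h2 : t ^ (-(m:ℝ)) = (t⁻¹) ^ m := by
    rw [Real.rpow_neg ht0.le, Real.rpow_natCast, inv_pow]
  have h3 : (t⁻¹ : ℝ) = 16 * (1/(16*t)) := by field_simp
  set u : ℝ := 1/(16*t) with hu
  have hu0 : 0 < u := by positivity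
  have h4 : u ^ m ≤ m.factorial * Real.exp u := pow_le_factorial_mul_exp hu0.le m
  have h5 : u ^ m * Real.exp (-u) ≤ m.factorial := by
    have := mul_le_mul_of_nonneg_right h4 (Real.exp_nonneg (-u))
    rwa [mul_assoc, ← Real.exp_add, add_neg_cancel, Real.exp_zero, mul_one] at this
  calc t ^ e * Real.exp (-u) ≤ t ^ (-(m:ℝ)) * Real.exp (-u) := by
        gcongr
    _ = (16:ℝ) ^ m * (u ^ m * Real.exp (-u)) := by
        rw [h2, h3, mul_pow]; ring
    _ ≤ 16 ^ m * (m.factorial : ℝ) := by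
        have : (0:ℝ) ≤ (16:ℝ) ^ m := by positivity
        exact mul_le_mul_of_nonneg_left h5 this

private lemma phi_integrableOn {e : ℝ} (he : e < -1) :
    IntegrableOn (fun t : ℝ => t ^ e * Real.exp (-(1/(16*t)))) (Set.Ioi (0:ℝ)) := by
  rw [show Set.Ioi (0:ℝ) = Set.Ioc 0 1 ∪ Set.Ioi 1 from
    (Set.Ioc_union_Ioi_eq_Ioi zero_le_one).symm]
  apply MeasureTheory.IntegrableOn.union
  · apply Integrable.mono' (g := fun _ : ℝ =>
      (16:ℝ) ^ (Nat.ceil (-e)) * (Nat.ceil (-e)).factorial)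
      (integrableOn_const measure_Ioc_lt_top.ne)
    · exact (((phi_contOn e).mono Set.Ioc_subset_Ioi_self)).aestronglyMeasurable
        measurableSet_Ioc
    · refine (ae_restrict_iff' measurableSet_Ioc).2 (ae_of_all _ fun t ht => ?_)
      rw [Real.norm_eq_abs, abs_of_nonneg
        (mul_nonneg (Real.rpow_nonneg ht.1.le e) (Real.exp_nonneg _))]
      exact phi_pt_bound ht.1 ht.2
  · apply Integrable.mono' (g := fun t : ℝ => t ^ e)
      (integrableOn_Ioi_rpow_of_lt he one_pos)
    · exact (((phi_contOn e).mono (show Set.Ioi (1:ℝ) ⊆ Set.Ioi 0 from fun x (hx : (1:ℝ) < x) =>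
        show (0:ℝ) < x from lt_trans one_pos hx))).aestronglyMeasurable measurableSet_Ioi
    · refine (ae_restrict_iff' measurableSet_Ioi).2 (ae_of_all _ fun t ht => ?_)
      have ht0 : (0:ℝ) < t := lt_trans one_pos ht
      rw [Real.norm_eq_abs, abs_of_nonneg
        (mul_nonneg (Real.rpow_nonneg ht0.le e) (Real.exp_nonneg _))]
      calc t ^ e * Real.exp (-(1/(16*t))) ≤ t ^ e * 1 :=
            mul_le_mul_of_nonneg_left
              (Real.exp_le_one_iff.mpr (neg_nonpos.mpr (by positivity)))
              (Real.rpow_nonneg ht0.le e)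
        _ = t ^ e := mul_one _

private lemma keyBoundA {ν s r : ℝ} (hν : 2 ≤ ν) (hs0 : 0 < s) (hr : 1 ≤ r) :
    ∀ t ∈ Set.Ioc (0:ℝ) (r/(4*(ν-1))),
      DMG ν s r t ≤
        (2 * 6 ^ |(ν-3)/2| * r ^ ((ν-1)/2) * Real.exp (-(r/4))) *
          (t ^ (-ν/2 - 1 - s) * Real.exp (-(1/(16*t)))) := by
  intro t ht
  obtain ⟨ht0, hta⟩ := ht
  have hw : (1:ℝ) ≤ ν - 1 := by linarith
  have hw0 : (0:ℝ) < ν - 1 := by linarith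
  have hr0 : (0:ℝ) < r := lt_of_lt_of_le one_pos hr
  have hta' : t*(4*(ν-1)) ≤ r := by rwa [le_div_iff₀ (by positivity)] at hta
  have h4 : (ν-1)*t ≤ r/4 := by
    rw [le_div_iff₀ (by norm_num : (0:ℝ) < 4)]
    nlinarith
  have h5 : t ≤ r/4 := by nlinarith
  -- exponential bound
  have hE : Real.exp (-(((ν-1)*t - r)^2/(4*t))) ≤
      Real.exp (-(r/4)) * Real.exp (-(1/(16*t))) := by
    rw [← Real.exp_add]
    apply Real.exp_le_exp.mpr
    have hsq : (3*r/4)^2 ≤ ((ν-1)*t - r)^2 := by nlinarith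
    have key : r/4 + 1/(16*t) ≤ ((ν-1)*t - r)^2/(4*t) := by
      rw [le_div_iff₀ (by positivity : (0:ℝ) < 4*t)]
      have : (r/4 + 1/(16*t)) * (4*t) = r*t + 1/4 := by field_simp; ring
      rw [this]
      nlinarith
    linarith
  -- the (1+r+t) factor
  have hQ : (1+r+t) ^ ((ν-3)/2) ≤ 6 ^ |(ν-3)/2| * r ^ ((ν-3)/2) :=
    (rpow_sandwich (q := (ν-3)/2) hr0 (by norm_num) (by linarith)
      (by nlinarith)).2
  have h1r : 1 + r ≤ 2 * r := by linarith
  have hQ0 : (0:ℝ) ≤ 6 ^ |(ν-3)/2| * r ^ ((ν-3)/2) := by positivity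
  have hE0 : (0:ℝ) ≤ Real.exp (-(r/4)) * Real.exp (-(1/(16*t))) := by positivity
  have hT0 : (0:ℝ) ≤ t ^ (-ν/2 - 1 - s) := Real.rpow_nonneg ht0.le _
  have step : DMG ν s r t ≤
      t ^ (-ν/2 - 1 - s) * (Real.exp (-(r/4)) * Real.exp (-(1/(16*t)))) *
        (6 ^ |(ν-3)/2| * r ^ ((ν-3)/2)) * (2*r) := by
    unfold DMG
    have hExp0 : (0:ℝ) ≤ Real.exp (-(((ν-1)*t - r)^2/(4*t))) := Real.exp_nonneg _
    have hB0 : (0:ℝ) ≤ (1+r+t) ^ ((ν-3)/2) := Real.rpow_nonneg (by linarith) _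
    have m1 : t ^ (-ν/2 - 1 - s) * Real.exp (-(((ν-1)*t - r)^2/(4*t))) ≤
        t ^ (-ν/2 - 1 - s) * (Real.exp (-(r/4)) * Real.exp (-(1/(16*t)))) :=
      mul_le_mul_of_nonneg_left hE hT0
    have m2 := mul_le_mul m1 hQ hB0 (by positivity)
    exact mul_le_mul m2 h1r (by linarith) (by positivity)
  have hmerge : r ^ ((ν-3)/2) * r = r ^ ((ν-1)/2) := by
    nth_rewrite 2 [← Real.rpow_one r]
    rw [← Real.rpow_add hr0]
    congr 1
    ring
  calc DMG ν s r t ≤ _ := step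
    _ = (2 * 6 ^ |(ν-3)/2| * (r ^ ((ν-3)/2) * r) * Real.exp (-(r/4))) *
        (t ^ (-ν/2 - 1 - s) * Real.exp (-(1/(16*t)))) := by ring
    _ = _ := by rw [hmerge]

private lemma keyBoundB {ν s r : ℝ} (hν : 2 ≤ ν) (hs0 : 0 < s) (hr : 1 ≤ r) :
    ∀ t ∈ Set.Ioc (r/(4*(ν-1))) (4*r/(ν-1)),
      DMG ν s r t ≤
        (2 * 6 ^ |(ν-3)/2| * (r/(4*(ν-1))) ^ (-ν/2 - 1 - s) * r ^ ((ν-1)/2)) *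
          Real.exp (-((ν-1)^3/(16*r)) * (t - r/(ν-1))^2) := by
  intro t ht
  obtain ⟨hta, htb⟩ := ht
  have hw : (1:ℝ) ≤ ν - 1 := by linarith
  have hw0 : (0:ℝ) < ν - 1 := by linarith
  have hr0 : (0:ℝ) < r := lt_of_lt_of_le one_pos hr
  have ha0 : (0:ℝ) < r/(4*(ν-1)) := by positivity
  have ht0 : (0:ℝ) < t := lt_trans ha0 hta
  have htb' : (ν-1)*t ≤ 4*r := by
    have := (le_div_iff₀ hw0).mp htb
    nlinarith
  have hT : t ^ (-ν/2 - 1 - s) ≤ (r/(4*(ν-1))) ^ (-ν/2 - 1 - s) :=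
    Real.rpow_le_rpow_of_nonpos ha0 hta.le (by linarith)
  have hE : Real.exp (-(((ν-1)*t - r)^2/(4*t))) ≤
      Real.exp (-((ν-1)^3/(16*r)) * (t - r/(ν-1))^2) := by
    apply Real.exp_le_exp.mpr
    rw [neg_mul, neg_le_neg_iff]
    have hsq : ((ν-1)*t - r)^2 = (ν-1)^2 * (t - r/(ν-1))^2 := by
      field_simp
    rw [hsq]
    rw [div_mul_eq_mul_div, div_le_div_iff₀ (by positivity) (by positivity)]
    have hX : (0:ℝ) ≤ (t - r/(ν-1))^2 := sq_nonneg _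
    nlinarith [mul_nonneg (mul_nonneg (sq_nonneg (ν-1)) hX) (sub_nonneg.mpr htb')]
  have hQ : (1+r+t) ^ ((ν-3)/2) ≤ 6 ^ |(ν-3)/2| * r ^ ((ν-3)/2) := by
    apply (rpow_sandwich (q := (ν-3)/2) hr0 (by norm_num) (by linarith) ?_).2
    have : t ≤ 4*r := by nlinarith
    nlinarith
  have h1r : 1 + r ≤ 2 * r := by linarith
  have step : DMG ν s r t ≤
      (r/(4*(ν-1))) ^ (-ν/2 - 1 - s) *
        Real.exp (-((ν-1)^3/(16*r)) * (t - r/(ν-1))^2) *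
        (6 ^ |(ν-3)/2| * r ^ ((ν-3)/2)) * (2*r) := by
    unfold DMG
    have hB0 : (0:ℝ) ≤ (1+r+t) ^ ((ν-3)/2) := Real.rpow_nonneg (by linarith) _
    have m1 : t ^ (-ν/2 - 1 - s) * Real.exp (-(((ν-1)*t - r)^2/(4*t))) ≤
        (r/(4*(ν-1))) ^ (-ν/2 - 1 - s) *
          Real.exp (-((ν-1)^3/(16*r)) * (t - r/(ν-1))^2) :=
      mul_le_mul hT hE (Real.exp_nonneg _) (by positivity)
    have m2 := mul_le_mul m1 hQ hB0 (by positivity)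
    exact mul_le_mul m2 h1r (by linarith) (by positivity)
  have hmerge : r ^ ((ν-3)/2) * r = r ^ ((ν-1)/2) := by
    nth_rewrite 2 [← Real.rpow_one r]
    rw [← Real.rpow_add hr0]
    congr 1
    ring
  calc DMG ν s r t ≤ _ := step
    _ = (2 * 6 ^ |(ν-3)/2| * (r/(4*(ν-1))) ^ (-ν/2 - 1 - s) *
          (r ^ ((ν-3)/2) * r)) *
        Real.exp (-((ν-1)^3/(16*r)) * (t - r/(ν-1))^2) := by ring
    _ = _ := by rw [hmerge]

private lemma keyBoundC {ν s r : ℝ} (hν : 2 ≤ ν) (hs0 : 0 < s) (hr : 1 ≤ r) :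
    ∀ t ∈ Set.Ioi (4*r/(ν-1)),
      DMG ν s r t ≤
        (ν ^ |(ν-3)/2| * ν * (max 1 ((4/(ν-1)) ^ (-(3:ℝ)/2 - s))) *
          Real.exp (-(r/(4*(ν-1))))) * Real.exp (-(t/16)) := by
  intro t ht
  have hw : (1:ℝ) ≤ ν - 1 := by linarith
  have hw0 : (0:ℝ) < ν - 1 := by linarith
  have hr0 : (0:ℝ) < r := lt_of_lt_of_le one_pos hr
  have htb : 4*r/(ν-1) < t := ht
  have ht0 : (0:ℝ) < t := lt_trans (by positivity) htb
  have h4r : 4*r ≤ (ν-1)*t := by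
    have := (div_le_iff₀ hw0).mp htb.le
    nlinarith
  have hr4 : r ≤ (ν-1)*t/4 := by linarith
  have h14 : (1:ℝ) ≤ (ν-1)*t/4 := le_trans hr hr4
  have hE : Real.exp (-(((ν-1)*t - r)^2/(4*t))) ≤
      Real.exp (-(r/(4*(ν-1)))) * Real.exp (-(t/16)) := by
    rw [← Real.exp_add]
    apply Real.exp_le_exp.mpr
    have key1 : r/(4*(ν-1)) ≤ t/16 := by
      rw [div_le_div_iff₀ (by positivity) (by norm_num)]
      nlinarith
    have key2 : t/16 + t/16 ≤ ((ν-1)*t - r)^2/(4*t) := by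
      rw [le_div_iff₀ (by positivity : (0:ℝ) < 4*t)]
      have hA : 3/4*((ν-1)*t) ≤ (ν-1)*t - r := by linarith
      have hApos : (0:ℝ) ≤ 3/4*((ν-1)*t) := by positivity
      have hw2 : (0:ℝ) ≤ (ν-1)^2 - 1 := by nlinarith
      nlinarith [mul_self_le_mul_self hApos hA,
        mul_nonneg hw2 (sq_nonneg t)]
    linarith
  have hQ : (1+r+t) ^ ((ν-3)/2) ≤ ν ^ |(ν-3)/2| * t ^ ((ν-3)/2) := by
    apply (rpow_sandwich (q := (ν-3)/2) ht0 (by linarith) (by linarith) ?_).2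
    nlinarith
  have h1r : 1 + r ≤ ν * t := by nlinarith
  have step : DMG ν s r t ≤
      t ^ (-ν/2 - 1 - s) *
        (Real.exp (-(r/(4*(ν-1)))) * Real.exp (-(t/16))) *
        (ν ^ |(ν-3)/2| * t ^ ((ν-3)/2)) * (ν * t) := by
    unfold DMG
    have hT0 : (0:ℝ) ≤ t ^ (-ν/2 - 1 - s) := Real.rpow_nonneg ht0.le _
    have hB0 : (0:ℝ) ≤ (1+r+t) ^ ((ν-3)/2) := Real.rpow_nonneg (by linarith) _
    have m1 : t ^ (-ν/2 - 1 - s) * Real.exp (-(((ν-1)*t - r)^2/(4*t))) ≤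
        t ^ (-ν/2 - 1 - s) * (Real.exp (-(r/(4*(ν-1)))) * Real.exp (-(t/16))) :=
      mul_le_mul_of_nonneg_left hE hT0
    have m2 := mul_le_mul m1 hQ hB0 (by positivity)
    exact mul_le_mul m2 h1r (by linarith) (by positivity)
  -- merge the powers of t
  have hmerge : t ^ (-ν/2 - 1 - s) * t ^ ((ν-3)/2) * t = t ^ (-(3:ℝ)/2 - s) := by
    nth_rewrite 3 [← Real.rpow_one t]
    rw [← Real.rpow_add ht0, ← Real.rpow_add ht0]
    congr 1
    ring
  have hc3 : t ^ (-(3:ℝ)/2 - s) ≤ max 1 ((4/(ν-1)) ^ (-(3:ℝ)/2 - s)) := by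
    rcases le_or_gt 1 t with h1t | h1t
    · exact le_trans (Real.rpow_le_one_of_one_le_of_nonpos h1t (by linarith))
        (le_max_left _ _)
    · refine le_trans ?_ (le_max_right _ _)
      apply Real.rpow_le_rpow_of_nonpos (by positivity) ?_ (by linarith)
      rw [div_le_iff₀ hw0]
      nlinarith
  calc DMG ν s r t ≤ _ := step
    _ = (t ^ (-ν/2 - 1 - s) * t ^ ((ν-3)/2) * t) *
        (ν ^ |(ν-3)/2| * ν * Real.exp (-(r/(4*(ν-1))))) * Real.exp (-(t/16)) := by
        ring
    _ ≤ (max 1 ((4/(ν-1)) ^ (-(3:ℝ)/2 - s))) *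
        (ν ^ |(ν-3)/2| * ν * Real.exp (-(r/(4*(ν-1))))) * Real.exp (-(t/16)) := by
        rw [hmerge]
        have hν0 : (0:ℝ) < ν := by linarith
        apply mul_le_mul_of_nonneg_right _ (Real.exp_nonneg _)
        apply mul_le_mul_of_nonneg_right hc3 (by positivity)
    _ = _ := by ring

private lemma keyBoundLow {ν s r : ℝ} (hν : 2 ≤ ν) (hs0 : 0 < s) (hr : 1 ≤ r) :
    ∀ t ∈ Set.Ioc (r/(ν-1)) (r/(ν-1) + Real.sqrt (r/(ν-1))),
      (3*r) ^ (-ν/2 - 1 - s) * Real.exp (-((ν-1)^2/4)) *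
        (6 ^ (-|(ν-3)/2|) * r ^ ((ν-3)/2)) * r ≤ DMG ν s r t := by
  intro t ht
  obtain ⟨hta, htb⟩ := ht
  have hw : (1:ℝ) ≤ ν - 1 := by linarith
  have hw0 : (0:ℝ) < ν - 1 := by linarith
  have hr0 : (0:ℝ) < r := lt_of_lt_of_le one_pos hr
  have ht₀0 : (0:ℝ) < r/(ν-1) := by positivity
  have ht0 : (0:ℝ) < t := lt_trans ht₀0 hta
  have ht₀r : r/(ν-1) ≤ r := by
    rw [div_le_iff₀ hw0]; nlinarith
  have hsq : Real.sqrt (r/(ν-1)) ≤ r := by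
    have h1 : r/(ν-1) ≤ r^2 := by nlinarith
    calc Real.sqrt (r/(ν-1)) ≤ Real.sqrt (r^2) := Real.sqrt_le_sqrt h1
      _ = r := by rw [Real.sqrt_sq hr0.le]
  have ht3r : t ≤ 3*r := by nlinarith
  have hT : (3*r) ^ (-ν/2 - 1 - s) ≤ t ^ (-ν/2 - 1 - s) :=
    Real.rpow_le_rpow_of_nonpos ht0 ht3r (by linarith)
  have hE : Real.exp (-((ν-1)^2/4)) ≤ Real.exp (-(((ν-1)*t - r)^2/(4*t))) := by
    apply Real.exp_le_exp.mpr
    rw [neg_le_neg_iff]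
    have hdev : ((ν-1)*t - r)^2 = (ν-1)^2 * (t - r/(ν-1))^2 := by
      field_simp
    rw [hdev, div_le_div_iff₀ (by positivity) (by norm_num)]
    have hd1 : 0 ≤ t - r/(ν-1) := by linarith
    have hd2 : t - r/(ν-1) ≤ Real.sqrt (r/(ν-1)) := by linarith
    have hd3 : (t - r/(ν-1))^2 ≤ r/(ν-1) := by
      nlinarith [Real.sq_sqrt ht₀0.le, Real.sqrt_nonneg (r/(ν-1))]
    nlinarith [sq_nonneg (ν-1)]
  have hQ : 6 ^ (-|(ν-3)/2|) * r ^ ((ν-3)/2) ≤ (1+r+t) ^ ((ν-3)/2) :=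
    (rpow_sandwich (q := (ν-3)/2) hr0 (by norm_num) (by linarith)
      (by nlinarith)).1
  have h1r : r ≤ 1 + r := by linarith
  have hq0 : (0:ℝ) ≤ 6 ^ (-|(ν-3)/2|) * r ^ ((ν-3)/2) := by positivity
  unfold DMG
  have m1 : (3*r) ^ (-ν/2 - 1 - s) * Real.exp (-((ν-1)^2/4)) ≤
      t ^ (-ν/2 - 1 - s) * Real.exp (-(((ν-1)*t - r)^2/(4*t))) :=
    mul_le_mul hT hE (Real.exp_nonneg _) (Real.rpow_nonneg ht0.le _)
  have m2 := mul_le_mul m1 hQ hq0 (by positivity)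
  exact mul_le_mul m2 h1r hr0.le (by positivity)

private lemma DMG_eq {ν s r t : ℝ} (ht : 0 < t) :
    (t ^ (-ν/2) * Real.exp (-((ν-1)^2 * t / 4) - r^2 / (4*t) - (ν-1)*r/2) *
      (1+r+t) ^ ((ν-3)/2) * (1+r)) * t ^ (-1-s)
    = Real.exp (-(ν-1)*r) * DMG ν s r t := by
  unfold DMG
  have h1 : t ^ (-ν/2 - 1 - s) = t ^ (-ν/2) * t ^ (-1-s) := by
    rw [← Real.rpow_add ht]
    congr 1
    ring
  have h2 : -((ν-1)^2 * t / 4) - r^2/(4*t) - (ν-1)*r/2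
      = -(((ν-1)*t - r)^2/(4*t)) + (-(ν-1)*r) := by
    field_simp
    ring
  rw [h1, h2, Real.exp_add]
  ring

set_option maxHeartbeats 1000000 in
/-- Large-`r` asymptotics of the fractional kernel on `ℍⁿ` built from the
Davies–Mandouvalos comparison function `P_n`: there is `C > 0` with
`C⁻¹ r^{−1−s} e^{−(n−1)r} ≤ ∫₀^∞ P_n(r,t) t^{−1−s} dt ≤ C r^{−1−s} e^{−(n−1)r}`
for all `r ≥ 1`. -/
theorem fractional_kernel_asymp_large (n : ℕ) (hn : 2 ≤ n) (s : ℝ)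
    (hs : s ∈ Set.Ioo (0 : ℝ) 1) :
    ∃ C : ℝ, 0 < C ∧ ∀ r : ℝ, 1 ≤ r →
      (C⁻¹ * r ^ (-1 - s) * Real.exp (-((n : ℝ) - 1) * r) ≤
        ∫ t in Set.Ioi (0 : ℝ),
          (t ^ (-(n : ℝ)/2) *
            Real.exp (-(((n : ℝ) - 1)^2 * t / 4) - r^2 / (4 * t) - ((n : ℝ) - 1) * r / 2) *
            (1 + r + t) ^ (((n : ℝ) - 3)/2) * (1 + r)) * t ^ (-1 - s)) ∧
      ((∫ t in Set.Ioi (0 : ℝ),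
          (t ^ (-(n : ℝ)/2) *
            Real.exp (-(((n : ℝ) - 1)^2 * t / 4) - r^2 / (4 * t) - ((n : ℝ) - 1) * r / 2) *
            (1 + r + t) ^ (((n : ℝ) - 3)/2) * (1 + r)) * t ^ (-1 - s)) ≤
        C * r ^ (-1 - s) * Real.exp (-((n : ℝ) - 1) * r)) := by
  obtain ⟨hs0, hs1⟩ := hs
  set ν : ℝ := (n : ℝ) with hνdef
  have hν : (2:ℝ) ≤ ν := by rw [hνdef]; exact_mod_cast hn
  have hw0 : (0:ℝ) < ν - 1 := by linarith
  have hw1 : (1:ℝ) ≤ ν - 1 := by linarith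
  have hν0 : (0:ℝ) < ν := by linarith
  have he : -ν/2 - 1 - s < -1 := by linarith
  -- global constants
  set Iφ : ℝ := ∫ t in Set.Ioi (0:ℝ), t ^ (-ν/2 - 1 - s) * Real.exp (-(1/(16*t)))
    with hIφdef
  have hφint := phi_integrableOn he
  have hφnn : 0 ≤ᵐ[volume.restrict (Set.Ioi (0:ℝ))]
      (fun t : ℝ => t ^ (-ν/2 - 1 - s) * Real.exp (-(1/(16*t)))) :=
    (ae_restrict_iff' measurableSet_Ioi).2 (ae_of_all _ fun x hx =>
      mul_nonneg (Real.rpow_nonneg (le_of_lt hx) _) (Real.exp_nonneg _))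
  have hIφ0 : 0 ≤ Iφ := integral_nonneg_of_ae hφnn
  set IE : ℝ := ∫ t in Set.Ioi (0:ℝ), Real.exp (-(t/16)) with hIEdef
  have hEint : IntegrableOn (fun t : ℝ => Real.exp (-(t/16))) (Set.Ioi (0:ℝ)) := by
    have h := exp_neg_integrableOn_Ioi (0:ℝ) (show (0:ℝ) < 1/16 by norm_num)
    have : (fun x : ℝ => Real.exp (-(1/16) * x)) = fun t : ℝ => Real.exp (-(t/16)) := by
      funext x
      congr 1
      ring
    rwa [this] at h
  have hIE0 : 0 ≤ IE :=
    integral_nonneg_of_ae (ae_of_all _ fun x => Real.exp_nonneg _)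
  set q : ℝ := (ν-3)/2 with hqdef
  set m1 : ℕ := n + 2 with hm1def
  have hm1 : (ν-1)/2 + 1 + s ≤ (m1 : ℝ) := by
    rw [hm1def, hνdef]
    push_cast
    linarith only [hs1, show (0:ℝ) ≤ (n:ℝ) from Nat.cast_nonneg n]
  set D1 : ℝ := m1.factorial * ((1:ℝ)/4)⁻¹ ^ m1 with hD1def
  have hD10 : 0 < D1 := by positivity
  set D2 : ℝ := (Nat.factorial 2) * ((1/(4*(ν-1)))⁻¹)^2 with hD2def
  have hD20 : 0 < D2 := by positivity
  set c3 : ℝ := max 1 ((4/(ν-1)) ^ (-(3:ℝ)/2 - s)) with hc3def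
  have hc30 : 0 < c3 := lt_of_lt_of_le one_pos (le_max_left _ _)
  set CA : ℝ := 2 * 6 ^ |q| * Iφ * D1 with hCAdef
  set CB : ℝ := 2 * 6 ^ |q| * (4*(ν-1)) ^ (ν/2 + 1 + s) *
    Real.sqrt (16*Real.pi/(ν-1)^3) with hCBdef
  set CC : ℝ := ν ^ |q| * ν * c3 * IE * D2 with hCCdef
  set CL : ℝ := 3 ^ (-ν/2 - 1 - s) * Real.exp (-((ν-1)^2/4)) * 6 ^ (-|q|) *
    (Real.sqrt ν)⁻¹ with hCLdef
  have hCA0 : 0 ≤ CA := by positivity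
  have hCB0 : 0 ≤ CB := by positivity
  have hCC0 : 0 ≤ CC := by positivity
  have hCL0 : 0 < CL := by positivity
  refine ⟨max (CA + CB + CC) CL⁻¹,
    lt_of_lt_of_le (inv_pos.mpr hCL0) (le_max_right _ _), ?_⟩
  intro r hr
  set C : ℝ := max (CA + CB + CC) CL⁻¹ with hCdef
  have hC0 : 0 < C := lt_of_lt_of_le (inv_pos.mpr hCL0) (le_max_right _ _)
  have hr0 : (0:ℝ) < r := lt_of_lt_of_le one_pos hr
  set a : ℝ := r/(4*(ν-1)) with hadef
  set b : ℝ := 4*r/(ν-1) with hbdef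
  set t₀ : ℝ := r/(ν-1) with ht₀def
  have ha0 : 0 < a := by positivity
  have hb0 : 0 < b := by positivity
  have hab : a ≤ b := by
    rw [hadef, hbdef, div_le_div_iff₀ (by positivity) hw0]
    nlinarith only [mul_pos hr0 hw0]
  have ht₀0 : 0 < t₀ := by positivity
  -- rewrite the integral
  have hIeq : (∫ t in Set.Ioi (0:ℝ),
      (t ^ (-ν/2) * Real.exp (-((ν-1)^2 * t / 4) - r^2 / (4*t) - (ν-1)*r/2) *
        (1+r+t) ^ ((ν-3)/2) * (1+r)) * t ^ (-1-s))
      = Real.exp (-(ν-1)*r) * ∫ t in Set.Ioi (0:ℝ), DMG ν s r t := by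
    rw [← integral_const_mul]
    exact setIntegral_congr_fun measurableSet_Ioi (fun t ht => DMG_eq ht)
  -- constants for the regions
  set KA : ℝ := 2 * 6 ^ |q| * r ^ ((ν-1)/2) * Real.exp (-(r/4)) with hKAdef
  have hKA0 : 0 ≤ KA := by positivity
  set KB : ℝ := 2 * 6 ^ |q| * a ^ (-ν/2 - 1 - s) * r ^ ((ν-1)/2) with hKBdef
  have hKB0 : 0 ≤ KB := by positivity
  set KC : ℝ := ν ^ |q| * ν * c3 * Real.exp (-(r/(4*(ν-1)))) with hKCdef
  have hKC0 : 0 ≤ KC := by positivity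
  set cB : ℝ := (ν-1)^3/(16*r) with hcBdef
  have hcB0 : 0 < cB := by positivity
  have hgauss_int : Integrable (fun t : ℝ => Real.exp (-cB * (t - t₀)^2)) :=
    (integrable_exp_neg_mul_sq hcB0).comp_sub_right t₀
  have hgauss_val : (∫ t : ℝ, Real.exp (-cB * (t - t₀)^2)) = Real.sqrt (Real.pi/cB) := by
    calc (∫ t : ℝ, Real.exp (-cB * (t - t₀)^2))
        = ∫ t : ℝ, Real.exp (-cB * t^2) :=
          integral_sub_right_eq_self (fun u : ℝ => Real.exp (-cB * u^2)) t₀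
      _ = Real.sqrt (Real.pi/cB) := integral_gaussian cB
  -- integrability on the three regions
  have hDMGnn : ∀ t ∈ Set.Ioi (0:ℝ), 0 ≤ DMG ν s r t := fun t ht =>
    DMG_nonneg hr0.le (le_of_lt ht)
  have intA : IntegrableOn (fun t => DMG ν s r t) (Set.Ioc 0 a) := by
    apply Integrable.mono'
      (g := fun t : ℝ => KA * (t ^ (-ν/2 - 1 - s) * Real.exp (-(1/(16*t)))))
      ((hφint.mono_set Set.Ioc_subset_Ioi_self).const_mul KA)
    · exact ((DMG_contOn ν s r hr0.le).mono
        Set.Ioc_subset_Ioi_self).aestronglyMeasurable measurableSet_Ioc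
    · refine (ae_restrict_iff' measurableSet_Ioc).2 (ae_of_all _ fun t ht => ?_)
      rw [Real.norm_eq_abs, abs_of_nonneg (DMG_nonneg hr0.le ht.1.le)]
      exact keyBoundA hν hs0 hr t ht
  have intB : IntegrableOn (fun t => DMG ν s r t) (Set.Ioc a b) := by
    apply Integrable.mono'
      (g := fun t : ℝ => KB * Real.exp (-cB * (t - t₀)^2))
      ((hgauss_int.const_mul KB).integrableOn)
    · exact ((DMG_contOn ν s r hr0.le).mono
        (fun x hx => lt_trans ha0 hx.1)).aestronglyMeasurable measurableSet_Ioc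
    · refine (ae_restrict_iff' measurableSet_Ioc).2 (ae_of_all _ fun t ht => ?_)
      rw [Real.norm_eq_abs, abs_of_nonneg
        (DMG_nonneg hr0.le (le_of_lt (lt_trans ha0 ht.1)))]
      exact keyBoundB hν hs0 hr t ht
  have intC : IntegrableOn (fun t => DMG ν s r t) (Set.Ioi b) := by
    apply Integrable.mono'
      (g := fun t : ℝ => KC * Real.exp (-(t/16)))
      ((hEint.mono_set (Set.Ioi_subset_Ioi hb0.le)).const_mul KC)
    · exact ((DMG_contOn ν s r hr0.le).mono
        (fun x hx => lt_trans hb0 hx)).aestronglyMeasurable measurableSet_Ioi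
    · refine (ae_restrict_iff' measurableSet_Ioi).2 (ae_of_all _ fun t ht => ?_)
      rw [Real.norm_eq_abs, abs_of_nonneg
        (DMG_nonneg hr0.le (le_of_lt (lt_trans hb0 ht)))]
      exact keyBoundC hν hs0 hr t ht
  have intAB : IntegrableOn (fun t => DMG ν s r t) (Set.Ioc 0 b) := by
    rw [← Set.Ioc_union_Ioc_eq_Ioc ha0.le hab]
    exact intA.union intB
  have intAll : IntegrableOn (fun t => DMG ν s r t) (Set.Ioi 0) := by
    rw [← Set.Ioc_union_Ioi_eq_Ioi hb0.le]
    exact intAB.union intC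
  have hDMGnn_ae : 0 ≤ᵐ[volume.restrict (Set.Ioi (0:ℝ))] fun t => DMG ν s r t :=
    (ae_restrict_iff' measurableSet_Ioi).2 (ae_of_all _ hDMGnn)
  -- splitting
  have hdisj1 : Disjoint (Set.Ioc (0:ℝ) a) (Set.Ioc a b) :=
    Set.disjoint_left.mpr (fun x hx hx' => absurd hx'.1 (not_lt.mpr hx.2))
  have hdisj2 : Disjoint (Set.Ioc (0:ℝ) b) (Set.Ioi b) :=
    Set.disjoint_left.mpr (fun x hx hx' => absurd hx' (not_lt.mpr hx.2))
  have hsplit : (∫ t in Set.Ioi (0:ℝ), DMG ν s r t)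
      = (∫ t in Set.Ioc 0 a, DMG ν s r t) + (∫ t in Set.Ioc a b, DMG ν s r t) +
        (∫ t in Set.Ioi b, DMG ν s r t) := by
    rw [← Set.Ioc_union_Ioi_eq_Ioi hb0.le,
      setIntegral_union hdisj2 measurableSet_Ioi intAB intC,
      ← Set.Ioc_union_Ioc_eq_Ioc ha0.le hab,
      setIntegral_union hdisj1 measurableSet_Ioc intA intB]
  -- upper bounds for the three regions
  have upA : (∫ t in Set.Ioc (0:ℝ) a, DMG ν s r t) ≤ KA * Iφ := by
    calc (∫ t in Set.Ioc (0:ℝ) a, DMG ν s r t)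
        ≤ ∫ t in Set.Ioc (0:ℝ) a,
            KA * (t ^ (-ν/2 - 1 - s) * Real.exp (-(1/(16*t)))) :=
          setIntegral_mono_on intA
            ((hφint.mono_set Set.Ioc_subset_Ioi_self).const_mul KA)
            measurableSet_Ioc (keyBoundA hν hs0 hr)
      _ = KA * ∫ t in Set.Ioc (0:ℝ) a,
            t ^ (-ν/2 - 1 - s) * Real.exp (-(1/(16*t))) :=
          integral_const_mul _ _
      _ ≤ KA * Iφ := by
          apply mul_le_mul_of_nonneg_left _ hKA0
          exact setIntegral_mono_set hφint hφnn
            (HasSubset.Subset.eventuallyLE Set.Ioc_subset_Ioi_self)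
  have upB : (∫ t in Set.Ioc a b, DMG ν s r t) ≤ KB * Real.sqrt (Real.pi/cB) := by
    calc (∫ t in Set.Ioc a b, DMG ν s r t)
        ≤ ∫ t in Set.Ioc a b, KB * Real.exp (-cB * (t - t₀)^2) :=
          setIntegral_mono_on intB ((hgauss_int.const_mul KB).integrableOn)
            measurableSet_Ioc (by
              intro t ht
              have h := keyBoundB hν hs0 hr t ht
              rw [hcBdef, ht₀def]
              exact h)
      _ = KB * ∫ t in Set.Ioc a b, Real.exp (-cB * (t - t₀)^2) :=
          integral_const_mul _ _
      _ ≤ KB * ∫ t : ℝ, Real.exp (-cB * (t - t₀)^2) := by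
          apply mul_le_mul_of_nonneg_left _ hKB0
          exact setIntegral_le_integral hgauss_int
            (ae_of_all _ fun x => Real.exp_nonneg _)
      _ = KB * Real.sqrt (Real.pi/cB) := by rw [hgauss_val]
  have upC : (∫ t in Set.Ioi b, DMG ν s r t) ≤ KC * IE := by
    calc (∫ t in Set.Ioi b, DMG ν s r t)
        ≤ ∫ t in Set.Ioi b, KC * Real.exp (-(t/16)) :=
          setIntegral_mono_on intC
            ((hEint.mono_set (Set.Ioi_subset_Ioi hb0.le)).const_mul KC)
            measurableSet_Ioi (keyBoundC hν hs0 hr)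
      _ = KC * ∫ t in Set.Ioi b, Real.exp (-(t/16)) :=
          integral_const_mul _ _
      _ ≤ KC * IE := by
          apply mul_le_mul_of_nonneg_left _ hKC0
          exact setIntegral_mono_set hEint
            (ae_of_all _ fun x => Real.exp_nonneg _)
            (HasSubset.Subset.eventuallyLE (Set.Ioi_subset_Ioi hb0.le))
  -- conversions to powers of r
  have convA : KA * Iφ ≤ CA * r ^ (-1-s) := by
    have hsplitpow : r ^ ((ν-1)/2) = r ^ ((ν-1)/2 + 1 + s) * r ^ (-1-s) := by
      rw [← Real.rpow_add hr0]
      congr 1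
      ring
    have hpoly : r ^ ((ν-1)/2 + 1 + s) ≤ D1 * Real.exp (1/4*r) :=
      rpow_le_exp_aux m1 (show (0:ℝ) < 1/4 by norm_num) hr hm1
    have key : r ^ ((ν-1)/2) * Real.exp (-(r/4)) ≤ D1 * r ^ (-1-s) := by
      calc r ^ ((ν-1)/2) * Real.exp (-(r/4))
          = r ^ ((ν-1)/2 + 1 + s) * r ^ (-1-s) * Real.exp (-(r/4)) := by
            rw [← hsplitpow]
        _ ≤ (D1 * Real.exp (1/4*r)) * r ^ (-1-s) * Real.exp (-(r/4)) := by
            apply mul_le_mul_of_nonneg_right _ (Real.exp_nonneg _)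
            exact mul_le_mul_of_nonneg_right hpoly (Real.rpow_nonneg hr0.le _)
        _ = D1 * r ^ (-1-s) * (Real.exp (1/4*r) * Real.exp (-(r/4))) := by ring
        _ = D1 * r ^ (-1-s) := by
            rw [← Real.exp_add, show 1/4*r + -(r/4) = 0 by ring, Real.exp_zero,
              mul_one]
    calc KA * Iφ = (2 * 6 ^ |q| * Iφ) * (r ^ ((ν-1)/2) * Real.exp (-(r/4))) := by
          rw [hKAdef]; ring
      _ ≤ (2 * 6 ^ |q| * Iφ) * (D1 * r ^ (-1-s)) :=
          mul_le_mul_of_nonneg_left key (by positivity)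
      _ = CA * r ^ (-1-s) := by rw [hCAdef]; ring
  have convB : KB * Real.sqrt (Real.pi/cB) ≤ CB * r ^ (-1-s) := by
    have h1 : a ^ (-ν/2 - 1 - s) = r ^ (-ν/2 - 1 - s) * (4*(ν-1)) ^ (ν/2 + 1 + s) := by
      rw [hadef, Real.div_rpow hr0.le (by positivity), div_eq_mul_inv,
        ← Real.rpow_neg (by positivity)]
      congr 2
      ring
    have h2 : Real.pi/cB = (16*Real.pi/(ν-1)^3) * r := by
      rw [hcBdef]
      field_simp
    have h3 : Real.sqrt (Real.pi/cB) = Real.sqrt (16*Real.pi/(ν-1)^3) * r ^ ((1:ℝ)/2) := by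
      rw [h2, Real.sqrt_mul (by positivity) r, Real.sqrt_eq_rpow r]
    have h4 : r ^ (-ν/2 - 1 - s) * r ^ ((ν-1)/2) * r ^ ((1:ℝ)/2) = r ^ (-1-s) := by
      rw [← Real.rpow_add hr0, ← Real.rpow_add hr0]
      congr 1
      ring
    refine le_of_eq ?_
    calc KB * Real.sqrt (Real.pi/cB)
        = (2 * 6 ^ |q| * (4*(ν-1)) ^ (ν/2 + 1 + s) * Real.sqrt (16*Real.pi/(ν-1)^3)) *
            (r ^ (-ν/2 - 1 - s) * r ^ ((ν-1)/2) * r ^ ((1:ℝ)/2)) := by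
          rw [hKBdef, h1, h3]; ring
      _ = CB * r ^ (-1-s) := by rw [hCBdef, h4]
  have convC : KC * IE ≤ CC * r ^ (-1-s) := by
    have hc : (0:ℝ) < 1/(4*(ν-1)) := by positivity
    have hβm : (1 + s : ℝ) ≤ ((2:ℕ) : ℝ) := by push_cast; linarith only [hs1]
    have hexp := exp_le_rpow_aux 2 hc hr hβm
    have hexp' : Real.exp (-(r/(4*(ν-1)))) ≤ D2 * r ^ (-1-s) := by
      rw [show -(r/(4*(ν-1))) = -(1/(4*(ν-1))*r) by ring]
      calc Real.exp (-(1/(4*(ν-1))*r)) ≤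
          ((Nat.factorial 2 : ℝ) * ((1/(4*(ν-1)))⁻¹)^2) * r ^ (-(1+s)) := hexp
        _ = D2 * r ^ (-1-s) := by
            rw [hD2def, show -(1+s) = -1-s by ring]
    calc KC * IE = (ν ^ |q| * ν * c3 * IE) * Real.exp (-(r/(4*(ν-1)))) := by
          rw [hKCdef]; ring
      _ ≤ (ν ^ |q| * ν * c3 * IE) * (D2 * r ^ (-1-s)) :=
          mul_le_mul_of_nonneg_left hexp' (by positivity)
      _ = CC * r ^ (-1-s) := by rw [hCCdef]; ring
  have hUpper : (∫ t in Set.Ioi (0:ℝ), DMG ν s r t) ≤ (CA + CB + CC) * r ^ (-1-s) := by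
    rw [hsplit]
    have h := add_le_add (add_le_add (le_trans upA convA) (le_trans upB convB))
      (le_trans upC convC)
    calc (∫ t in Set.Ioc (0:ℝ) a, DMG ν s r t) + (∫ t in Set.Ioc a b, DMG ν s r t) +
        (∫ t in Set.Ioi b, DMG ν s r t)
        ≤ CA * r ^ (-1-s) + CB * r ^ (-1-s) + CC * r ^ (-1-s) := h
      _ = (CA + CB + CC) * r ^ (-1-s) := by ring
  -- lower bound
  have hJsub : Set.Ioc t₀ (t₀ + Real.sqrt t₀) ⊆ Set.Ioi (0:ℝ) :=
    fun x hx => lt_trans ht₀0 hx.1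
  set mlow : ℝ := (3*r) ^ (-ν/2 - 1 - s) * Real.exp (-((ν-1)^2/4)) *
    (6 ^ (-|q|) * r ^ ((ν-3)/2)) * r with hmlowdef
  have hlow1 : mlow * Real.sqrt t₀ ≤ ∫ t in Set.Ioc t₀ (t₀ + Real.sqrt t₀),
      DMG ν s r t := by
    have hvol : (volume (Set.Ioc t₀ (t₀ + Real.sqrt t₀))).toReal = Real.sqrt t₀ := by
      rw [Real.volume_Ioc, show t₀ + Real.sqrt t₀ - t₀ = Real.sqrt t₀ by ring,
        ENNReal.toReal_ofReal (Real.sqrt_nonneg _)]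
    have := setIntegral_ge_of_const_le (c := mlow) measurableSet_Ioc
      (measure_Ioc_lt_top).ne (keyBoundLow hν hs0 hr) (intAll.mono_set hJsub)
    have hvol' : volume.real (Set.Ioc t₀ (t₀ + Real.sqrt t₀)) = Real.sqrt t₀ := hvol
    calc mlow * Real.sqrt t₀ = volume.real (Set.Ioc t₀ (t₀ + Real.sqrt t₀)) • mlow := by
          rw [hvol', smul_eq_mul, mul_comm]
      _ ≤ _ := this
  have hlow2 : (∫ t in Set.Ioc t₀ (t₀ + Real.sqrt t₀), DMG ν s r t) ≤
      ∫ t in Set.Ioi (0:ℝ), DMG ν s r t :=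
    setIntegral_mono_set intAll hDMGnn_ae
      (HasSubset.Subset.eventuallyLE hJsub)
  have convL : CL * r ^ (-1-s) ≤ mlow * Real.sqrt t₀ := by
    have h1 : (3*r) ^ (-ν/2 - 1 - s) = 3 ^ (-ν/2 - 1 - s) * r ^ (-ν/2 - 1 - s) :=
      Real.mul_rpow (by norm_num) hr0.le
    have hsq2 : (Real.sqrt ν)⁻¹ * r ^ ((1:ℝ)/2) ≤ Real.sqrt t₀ := by
      have ha2 : r/ν ≤ t₀ := by
        rw [ht₀def, div_le_div_iff₀ hν0 hw0]
        nlinarith only [hr0]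
      have hb2 : Real.sqrt (r/ν) = Real.sqrt r * (Real.sqrt ν)⁻¹ := by
        rw [div_eq_mul_inv, Real.sqrt_mul hr0.le, Real.sqrt_inv]
      calc (Real.sqrt ν)⁻¹ * r ^ ((1:ℝ)/2) = Real.sqrt (r/ν) := by
            rw [hb2, ← Real.sqrt_eq_rpow]; ring
        _ ≤ Real.sqrt t₀ := Real.sqrt_le_sqrt ha2
    have hmerge : r ^ (-ν/2 - 1 - s) * r ^ ((ν-3)/2) * r * r ^ ((1:ℝ)/2)
        = r ^ (-1-s) := by
      nth_rewrite 3 [← Real.rpow_one r]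
      rw [← Real.rpow_add hr0, ← Real.rpow_add hr0, ← Real.rpow_add hr0]
      congr 1
      ring
    calc CL * r ^ (-1-s)
        = (3 ^ (-ν/2 - 1 - s) * Real.exp (-((ν-1)^2/4)) * 6 ^ (-|q|)) *
            (r ^ (-ν/2 - 1 - s) * r ^ ((ν-3)/2) * r) *
            ((Real.sqrt ν)⁻¹ * r ^ ((1:ℝ)/2)) := by
          rw [hCLdef, ← hmerge]; ring
      _ ≤ (3 ^ (-ν/2 - 1 - s) * Real.exp (-((ν-1)^2/4)) * 6 ^ (-|q|)) *
            (r ^ (-ν/2 - 1 - s) * r ^ ((ν-3)/2) * r) * Real.sqrt t₀ := by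
          apply mul_le_mul_of_nonneg_left hsq2 (by positivity)
      _ = mlow * Real.sqrt t₀ := by
          rw [hmlowdef, h1]; ring
  have hLower : CL * r ^ (-1-s) ≤ ∫ t in Set.Ioi (0:ℝ), DMG ν s r t :=
    le_trans convL (le_trans hlow1 hlow2)
  have hCinv : C⁻¹ ≤ CL := by
    have h1 : CL⁻¹ ≤ C := le_max_right _ _
    calc C⁻¹ ≤ (CL⁻¹)⁻¹ := inv_anti₀ (inv_pos.mpr hCL0) h1
      _ = CL := inv_inv CL
  have hCup : CA + CB + CC ≤ C := le_max_left _ _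
  constructor
  · rw [hIeq]
    calc C⁻¹ * r ^ (-1-s) * Real.exp (-(ν-1)*r)
        = Real.exp (-(ν-1)*r) * (C⁻¹ * r ^ (-1-s)) := by ring
      _ ≤ Real.exp (-(ν-1)*r) * (∫ t in Set.Ioi (0:ℝ), DMG ν s r t) := by
          apply mul_le_mul_of_nonneg_left _ (Real.exp_nonneg _)
          calc C⁻¹ * r ^ (-1-s) ≤ CL * r ^ (-1-s) :=
              mul_le_mul_of_nonneg_right hCinv (Real.rpow_nonneg hr0.le _)
            _ ≤ _ := hLower
  · rw [hIeq]
    calc Real.exp (-(ν-1)*r) * (∫ t in Set.Ioi (0:ℝ), DMG ν s r t)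
        ≤ Real.exp (-(ν-1)*r) * ((CA+CB+CC) * r ^ (-1-s)) :=
          mul_le_mul_of_nonneg_left hUpper (Real.exp_nonneg _)
      _ ≤ Real.exp (-(ν-1)*r) * (C * r ^ (-1-s)) :=
          mul_le_mul_of_nonneg_left
            (mul_le_mul_of_nonneg_right hCup (Real.rpow_nonneg hr0.le _))
            (Real.exp_nonneg _)
      _ = C * r ^ (-1-s) * Real.exp (-(ν-1)*r) := by ring
end

section
/- Let n ≥ 2 be an integer and define P_n(r,t) = t^{−n/2} exp(−(n−1)² t/4 − r²/(4t) − (n−1)r/2) · (1+r+t)^{(n−3)/2} · (1+r) for r, t > 0. Then there exists a constant C > 0 (depending only on n) such that C^{-1} r^{−n} ≤ ∫₀^1 P_n(r,t)/t dt ≤ C r^{−n} for all 0 < r ≤ 1. -/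
open MeasureTheory Real

private lemma aux_pow_le_exp (n : ℕ) (hn : 1 ≤ n) (x : ℝ) (hx : 0 ≤ x) :
    x ^ n ≤ (n : ℝ) ^ n * Real.exp x := by
  have hn' : (0 : ℝ) < n := by exact_mod_cast hn
  have h1 : x / n ≤ Real.exp (x / n) := by
    have h := Real.add_one_le_exp (x / n - 1)
    have h2 : Real.exp (x / n - 1) ≤ Real.exp (x / n) := by
      apply Real.exp_le_exp.2; linarith
    linarith
  have h2 : x ≤ (n : ℝ) * Real.exp (x / n) := by
    calc x = (n : ℝ) * (x / n) := by field_simp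
    _ ≤ (n : ℝ) * Real.exp (x / n) := by
        exact mul_le_mul_of_nonneg_left h1 hn'.le
  calc x ^ n ≤ ((n : ℝ) * Real.exp (x / n)) ^ n := pow_le_pow_left₀ hx h2 n
  _ = (n : ℝ) ^ n * Real.exp x := by
      rw [mul_pow, ← Real.exp_nat_mul]
      congr 2
      field_simp

private lemma aux_exp_le (n : ℕ) (hn : 1 ≤ n) {x y : ℝ} (hx : 0 < x) (hy : 0 < y) :
    Real.exp (-(y / x)) ≤ (n : ℝ) ^ n * x ^ n / y ^ n := by
  have h1 : y ^ n ≤ (n : ℝ) ^ n * Real.exp (y / x) * x ^ n := by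
    have h := aux_pow_le_exp n hn (y / x) (by positivity)
    calc y ^ n = (y / x) ^ n * x ^ n := by
          rw [div_pow]; field_simp
    _ ≤ ((n : ℝ) ^ n * Real.exp (y / x)) * x ^ n :=
          mul_le_mul_of_nonneg_right h (by positivity)
  have key : Real.exp (-(y / x)) * y ^ n ≤ (n : ℝ) ^ n * x ^ n := by
    calc Real.exp (-(y / x)) * y ^ n
        ≤ Real.exp (-(y / x)) * ((n : ℝ) ^ n * Real.exp (y / x) * x ^ n) :=
          mul_le_mul_of_nonneg_left h1 (Real.exp_nonneg _)
    _ = (n : ℝ) ^ n * x ^ n := by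
        rw [Real.exp_neg]
        field_simp
  have hyn : (0 : ℝ) < y ^ n := by positivity
  exact (le_div_iff₀ hyn).2 key

private lemma aux_rpow_sq (r : ℝ) (hr : 0 < r) (z : ℝ) : (r ^ 2 : ℝ) ^ z = r ^ (2 * z) := by
  rw [← Real.rpow_natCast r 2, ← Real.rpow_mul hr.le]
  norm_num

private lemma aux_base (n : ℕ) (hn : 2 ≤ n) {b : ℝ} (h1 : 1 ≤ b) (h3 : b ≤ 3) :
    (3 : ℝ) ^ (-(n : ℝ)) ≤ b ^ (((n : ℝ) - 3) / 2) ∧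
      b ^ (((n : ℝ) - 3) / 2) ≤ (3 : ℝ) ^ (n : ℝ) := by
  have hn2 : (2 : ℝ) ≤ n := by exact_mod_cast hn
  have hq1 : ((n : ℝ) - 3) / 2 ≤ (n : ℝ) := by linarith
  have hq2 : -(n : ℝ) ≤ ((n : ℝ) - 3) / 2 := by linarith
  have hb0 : (0 : ℝ) < b := lt_of_lt_of_le one_pos h1
  constructor
  · calc (3 : ℝ) ^ (-(n : ℝ)) ≤ b ^ (-(n : ℝ)) :=
        Real.rpow_le_rpow_of_nonpos hb0 h3 (by linarith)
    _ ≤ b ^ (((n : ℝ) - 3) / 2) := Real.rpow_le_rpow_of_exponent_le h1 hq2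
  · calc b ^ (((n : ℝ) - 3) / 2) ≤ b ^ (n : ℝ) :=
        Real.rpow_le_rpow_of_exponent_le h1 hq1
    _ ≤ (3 : ℝ) ^ (n : ℝ) := Real.rpow_le_rpow (by linarith) h3 (by positivity)

set_option maxHeartbeats 1000000 in
/-- Small-`r` asymptotics of the short-time logarithmic kernel `K₁(r) = ∫₀^1 P_n(r,t)/t dt`
built from the Davies–Mandouvalos comparison function: there is `C > 0` with
`C⁻¹ r^{−n} ≤ K₁(r) ≤ C r^{−n}` for all `0 < r ≤ 1`. -/
theorem log_kernel_K1_asymp_small (n : ℕ) (hn : 2 ≤ n) :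
    ∃ C : ℝ, 0 < C ∧ ∀ r : ℝ, 0 < r → r ≤ 1 →
      (C⁻¹ * r ^ (-(n : ℝ)) ≤
        ∫ t in Set.Ioc (0 : ℝ) 1,
          (t ^ (-(n : ℝ)/2) *
            Real.exp (-(((n : ℝ) - 1)^2 * t / 4) - r^2 / (4 * t) - ((n : ℝ) - 1) * r / 2) *
            (1 + r + t) ^ (((n : ℝ) - 3)/2) * (1 + r)) / t) ∧
      ((∫ t in Set.Ioc (0 : ℝ) 1,
          (t ^ (-(n : ℝ)/2) *
            Real.exp (-(((n : ℝ) - 1)^2 * t / 4) - r^2 / (4 * t) - ((n : ℝ) - 1) * r / 2) *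
            (1 + r + t) ^ (((n : ℝ) - 3)/2) * (1 + r)) / t) ≤
        C * r ^ (-(n : ℝ))) := by
  have hn2 : (2 : ℝ) ≤ (n : ℝ) := by exact_mod_cast hn
  have hn1 : 1 ≤ n := le_trans (by norm_num) hn
  -- constants
  obtain ⟨C₁, hC₁def⟩ : ∃ c : ℝ, c = 2 * (3 : ℝ) ^ (n : ℝ) * (n : ℝ) ^ n * 4 ^ n := ⟨_, rfl⟩
  obtain ⟨C₂, hC₂def⟩ : ∃ c : ℝ, c = 2 * (3 : ℝ) ^ (n : ℝ) := ⟨_, rfl⟩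
  obtain ⟨cL, hcLdef⟩ : ∃ c : ℝ, c = (3 : ℝ) ^ (-(n : ℝ)) *
      Real.exp (-(((n : ℝ) - 1)^2 / 4) - 1/2 - ((n : ℝ) - 1) / 2) := ⟨_, rfl⟩
  have hC₁pos : 0 < C₁ := by
    rw [hC₁def]
    have : (0 : ℝ) < (n : ℝ) := by linarith
    positivity
  have hC₂pos : 0 < C₂ := by rw [hC₂def]; positivity
  have hcLpos : 0 < cL := by rw [hcLdef]; positivity
  refine ⟨max (C₁ + C₂) (2 / cL), lt_of_lt_of_le (by positivity) (le_max_left _ _), ?_⟩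
  intro r hr hr1
  set q : ℝ := ((n : ℝ) - 3) / 2 with hqdef
  set f : ℝ → ℝ := fun t =>
    (t ^ (-(n : ℝ)/2) *
      Real.exp (-(((n : ℝ) - 1)^2 * t / 4) - r^2 / (4 * t) - ((n : ℝ) - 1) * r / 2) *
      (1 + r + t) ^ q * (1 + r)) / t with hfdef
  have hr2 : (0 : ℝ) < r ^ 2 := by positivity
  have hr21 : r ^ 2 ≤ 1 := by nlinarith
  have hrn : (0 : ℝ) < r ^ (-(n : ℝ)) := Real.rpow_pos_of_pos hr _
  -- basic pointwise facts
  have hfnn : ∀ t ∈ Set.Ioc (0 : ℝ) 1, 0 ≤ f t := by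
    intro t ht
    have ht0 : 0 < t := ht.1
    apply div_nonneg _ ht0.le
    have h1 : (0 : ℝ) ≤ t ^ (-(n : ℝ)/2) := Real.rpow_nonneg ht0.le _
    have h2 : (0 : ℝ) ≤ (1 + r + t) ^ q := Real.rpow_nonneg (by linarith) _
    positivity
  -- core upper bound
  have hcore : ∀ t ∈ Set.Ioc (0 : ℝ) 1,
      f t ≤ C₁ * t ^ ((n : ℝ)/2 - 1) / (r ^ 2) ^ n := by
    intro t ht
    have ht0 : 0 < t := ht.1
    have hbase1 : (1 : ℝ) ≤ 1 + r + t := by linarith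
    have hbase3 : 1 + r + t ≤ 3 := by linarith [ht.2]
    have hB := (aux_base n hn hbase1 hbase3).2
    have hE : Real.exp (-(((n : ℝ) - 1)^2 * t / 4) - r^2 / (4 * t) - ((n : ℝ) - 1) * r / 2)
        ≤ Real.exp (-(r ^ 2 / (4 * t))) := by
      apply Real.exp_le_exp.2
      have h1 : 0 ≤ ((n : ℝ) - 1)^2 * t / 4 := by positivity
      have h2 : 0 ≤ ((n : ℝ) - 1) * r / 2 := by
        have : (0 : ℝ) ≤ (n : ℝ) - 1 := by linarith
        positivity
      linarith
    have hexp : Real.exp (-(r ^ 2 / (4 * t))) ≤ (n : ℝ) ^ n * (4 * t) ^ n / (r ^ 2) ^ n :=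
      aux_exp_le n hn1 (by positivity) hr2
    have htp : (0 : ℝ) ≤ t ^ (-(n : ℝ)/2) := Real.rpow_nonneg ht0.le _
    have step1 : f t ≤ (t ^ (-(n : ℝ)/2) / t) *
        (((n : ℝ) ^ n * (4 * t) ^ n / (r ^ 2) ^ n) * ((3 : ℝ) ^ (n : ℝ) * 2)) := by
      have hfr : f t = (t ^ (-(n : ℝ)/2) / t) *
          (Real.exp (-(((n : ℝ) - 1)^2 * t / 4) - r^2 / (4 * t) - ((n : ℝ) - 1) * r / 2) *
            ((1 + r + t) ^ q * (1 + r))) := by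
        rw [hfdef]; ring
      rw [hfr]
      apply mul_le_mul_of_nonneg_left _ (by positivity)
      have hr2' : 1 + r ≤ 2 := by linarith
      have hEnn := Real.exp_nonneg (-(((n : ℝ) - 1)^2 * t / 4) - r^2 / (4 * t) - ((n : ℝ) - 1) * r / 2)
      have hBnn : (0 : ℝ) ≤ (1 + r + t) ^ q := Real.rpow_nonneg (by linarith) _
      calc Real.exp (-(((n : ℝ) - 1)^2 * t / 4) - r^2 / (4 * t) - ((n : ℝ) - 1) * r / 2) *
            ((1 + r + t) ^ q * (1 + r))
          ≤ Real.exp (-(r ^ 2 / (4 * t))) * ((3 : ℝ) ^ (n : ℝ) * 2) := by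
            apply mul_le_mul hE _ (by positivity) (Real.exp_nonneg _)
            apply mul_le_mul hB hr2' (by linarith) (by positivity)
      _ ≤ ((n : ℝ) ^ n * (4 * t) ^ n / (r ^ 2) ^ n) * ((3 : ℝ) ^ (n : ℝ) * 2) :=
            mul_le_mul_of_nonneg_right hexp (by positivity)
    calc f t ≤ (t ^ (-(n : ℝ)/2) / t) *
        (((n : ℝ) ^ n * (4 * t) ^ n / (r ^ 2) ^ n) * ((3 : ℝ) ^ (n : ℝ) * 2)) := step1
    _ = C₁ * t ^ ((n : ℝ)/2 - 1) / (r ^ 2) ^ n := by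
        have e1 : t ^ (-(n : ℝ)/2) / t = t ^ (-(n : ℝ)/2 - 1) := by
          rw [Real.rpow_sub ht0, Real.rpow_one]
        have e2 : (4 * t) ^ n = 4 ^ n * t ^ (n : ℝ) := by
          rw [mul_pow, Real.rpow_natCast]
        have e3 : t ^ (-(n : ℝ)/2 - 1) * t ^ (n : ℝ) = t ^ ((n : ℝ)/2 - 1) := by
          rw [← Real.rpow_add ht0]; ring_nf
        calc t ^ (-(n : ℝ)/2) / t * ((n : ℝ) ^ n * (4 * t) ^ n / (r ^ 2) ^ n * ((3:ℝ) ^ (n:ℝ) * 2))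
            = (t ^ (-(n : ℝ)/2 - 1) * t ^ (n : ℝ)) *
              (2 * (3 : ℝ) ^ (n : ℝ) * (n : ℝ) ^ n * 4 ^ n) / (r ^ 2) ^ n := by
              rw [e1, e2]; ring
        _ = C₁ * t ^ ((n : ℝ)/2 - 1) / (r ^ 2) ^ n := by rw [e3, hC₁def]; ring
  -- bound on (0, r²]
  have hup1 : ∀ t ∈ Set.Ioc (0 : ℝ) (r ^ 2), f t ≤ C₁ * r ^ (-(n : ℝ) - 2) := by
    intro t ht
    have ht' : t ∈ Set.Ioc (0 : ℝ) 1 := ⟨ht.1, le_trans ht.2 hr21⟩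
    have h1 := hcore t ht'
    have h2 : t ^ ((n : ℝ)/2 - 1) ≤ (r ^ 2) ^ ((n : ℝ)/2 - 1) :=
      Real.rpow_le_rpow ht.1.le ht.2 (by linarith)
    have h3 : C₁ * t ^ ((n : ℝ)/2 - 1) / (r ^ 2) ^ n ≤
        C₁ * (r ^ 2) ^ ((n : ℝ)/2 - 1) / (r ^ 2) ^ n := by
      apply div_le_div_of_nonneg_right _ (by positivity)
      exact mul_le_mul_of_nonneg_left h2 hC₁pos.le
    have h4 : C₁ * (r ^ 2) ^ ((n : ℝ)/2 - 1) / (r ^ 2) ^ n = C₁ * r ^ (-(n : ℝ) - 2) := by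
      rw [← Real.rpow_natCast (r ^ 2) n, mul_div_assoc, ← Real.rpow_sub hr2,
        aux_rpow_sq r hr]
      ring_nf
    calc f t ≤ C₁ * t ^ ((n : ℝ)/2 - 1) / (r ^ 2) ^ n := h1
    _ ≤ C₁ * (r ^ 2) ^ ((n : ℝ)/2 - 1) / (r ^ 2) ^ n := h3
    _ = C₁ * r ^ (-(n : ℝ) - 2) := h4
  -- bound on (r², 1]
  have hup2 : ∀ t ∈ Set.Ioc (r ^ 2) 1, f t ≤ C₂ * t ^ (-(n : ℝ)/2 - 1) := by
    intro t ht
    have ht0 : 0 < t := lt_trans hr2 ht.1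
    have hbase1 : (1 : ℝ) ≤ 1 + r + t := by linarith
    have hbase3 : 1 + r + t ≤ 3 := by linarith [ht.2]
    have hB := (aux_base n hn hbase1 hbase3).2
    have hE : Real.exp (-(((n : ℝ) - 1)^2 * t / 4) - r^2 / (4 * t) - ((n : ℝ) - 1) * r / 2)
        ≤ 1 := by
      rw [Real.exp_le_one_iff]
      have h1 : 0 ≤ ((n : ℝ) - 1)^2 * t / 4 := by positivity
      have h2 : 0 ≤ ((n : ℝ) - 1) * r / 2 := by
        have : (0 : ℝ) ≤ (n : ℝ) - 1 := by linarith
        positivity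
      have h3 : 0 ≤ r ^ 2 / (4 * t) := by positivity
      linarith
    have hfr : f t = (t ^ (-(n : ℝ)/2) / t) *
        (Real.exp (-(((n : ℝ) - 1)^2 * t / 4) - r^2 / (4 * t) - ((n : ℝ) - 1) * r / 2) *
          ((1 + r + t) ^ q * (1 + r))) := by
      rw [hfdef]; ring
    have e1 : t ^ (-(n : ℝ)/2) / t = t ^ (-(n : ℝ)/2 - 1) := by
      rw [Real.rpow_sub ht0, Real.rpow_one]
    rw [hfr, e1]
    have hstep : Real.exp (-(((n : ℝ) - 1)^2 * t / 4) - r^2 / (4 * t) - ((n : ℝ) - 1) * r / 2) *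
        ((1 + r + t) ^ q * (1 + r)) ≤ (3 : ℝ) ^ (n : ℝ) * 2 := by
      have hr2' : 1 + r ≤ 2 := by linarith
      have hBnn : (0 : ℝ) ≤ (1 + r + t) ^ q := Real.rpow_nonneg (by linarith) _
      calc Real.exp (-(((n : ℝ) - 1)^2 * t / 4) - r^2 / (4 * t) - ((n : ℝ) - 1) * r / 2) *
            ((1 + r + t) ^ q * (1 + r))
          ≤ 1 * ((3 : ℝ) ^ (n : ℝ) * 2) := by
            apply mul_le_mul hE _ (by positivity) (by norm_num)
            apply mul_le_mul hB hr2' (by linarith) (by positivity)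
      _ = (3 : ℝ) ^ (n : ℝ) * 2 := by ring
    calc t ^ (-(n : ℝ)/2 - 1) *
          (Real.exp (-(((n : ℝ) - 1)^2 * t / 4) - r^2 / (4 * t) - ((n : ℝ) - 1) * r / 2) *
            ((1 + r + t) ^ q * (1 + r)))
        ≤ t ^ (-(n : ℝ)/2 - 1) * ((3 : ℝ) ^ (n : ℝ) * 2) :=
          mul_le_mul_of_nonneg_left hstep (Real.rpow_nonneg ht0.le _)
    _ = C₂ * t ^ (-(n : ℝ)/2 - 1) := by rw [hC₂def]; ring
  -- global bound on (0,1] for integrability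
  have hbd : ∀ t ∈ Set.Ioc (0 : ℝ) 1, f t ≤ C₁ / (r ^ 2) ^ n := by
    intro t ht
    have h1 := hcore t ht
    have h2 : t ^ ((n : ℝ)/2 - 1) ≤ 1 :=
      Real.rpow_le_one ht.1.le ht.2 (by linarith)
    calc f t ≤ C₁ * t ^ ((n : ℝ)/2 - 1) / (r ^ 2) ^ n := h1
    _ ≤ C₁ * 1 / (r ^ 2) ^ n := by
        apply div_le_div_of_nonneg_right _ (by positivity)
        exact mul_le_mul_of_nonneg_left h2 hC₁pos.le
    _ = C₁ / (r ^ 2) ^ n := by ring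
  -- measurability and integrability
  have hmeas : Measurable f := by rw [hfdef]; fun_prop
  have hint : IntegrableOn f (Set.Ioc (0 : ℝ) 1) := by
    apply Integrable.mono' (g := fun _ => C₁ / (r ^ 2) ^ n)
    · exact integrableOn_const measure_Ioc_lt_top.ne
    · exact hmeas.aestronglyMeasurable
    · rw [ae_restrict_iff' measurableSet_Ioc]
      filter_upwards with t
      intro ht
      rw [Real.norm_eq_abs, abs_of_nonneg (hfnn t ht)]
      exact hbd t ht
  -- lower pointwise bound on (r²/2, r²]
  have hlow : ∀ t ∈ Set.Ioc (r ^ 2 / 2) (r ^ 2), cL * r ^ (-(n : ℝ) - 2) ≤ f t := by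
    intro t ht
    have ht0 : 0 < t := lt_of_le_of_lt (by positivity) ht.1
    have ht1 : t ≤ 1 := le_trans ht.2 hr21
    have hbase1 : (1 : ℝ) ≤ 1 + r + t := by linarith
    have hbase3 : 1 + r + t ≤ 3 := by linarith
    have hB := (aux_base n hn hbase1 hbase3).1
    have hE : Real.exp (-(((n : ℝ) - 1)^2 / 4) - 1/2 - ((n : ℝ) - 1) / 2) ≤
        Real.exp (-(((n : ℝ) - 1)^2 * t / 4) - r^2 / (4 * t) - ((n : ℝ) - 1) * r / 2) := by
      apply Real.exp_le_exp.2
      have h1 : ((n : ℝ) - 1)^2 * t / 4 ≤ ((n : ℝ) - 1)^2 / 4 := by nlinarith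
      have h2 : r ^ 2 / (4 * t) ≤ 1/2 := by
        rw [div_le_iff₀ (by positivity)]
        nlinarith [ht.1]
      have h3 : ((n : ℝ) - 1) * r / 2 ≤ ((n : ℝ) - 1) / 2 := by nlinarith
      linarith
    have hT : (r ^ 2) ^ (-(n : ℝ)/2 - 1) ≤ t ^ (-(n : ℝ)/2 - 1) :=
      Real.rpow_le_rpow_of_nonpos ht0 ht.2 (by linarith)
    have e1 : t ^ (-(n : ℝ)/2) / t = t ^ (-(n : ℝ)/2 - 1) := by
      rw [Real.rpow_sub ht0, Real.rpow_one]
    have hfr : f t = t ^ (-(n : ℝ)/2 - 1) *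
        (Real.exp (-(((n : ℝ) - 1)^2 * t / 4) - r^2 / (4 * t) - ((n : ℝ) - 1) * r / 2) *
          ((1 + r + t) ^ q * (1 + r))) := by
      rw [← e1, hfdef]
      ring
    have hsq : (r ^ 2) ^ (-(n : ℝ)/2 - 1) = r ^ (-(n : ℝ) - 2) := by
      rw [aux_rpow_sq r hr]; ring_nf
    have hlow2 : cL ≤
        Real.exp (-(((n : ℝ) - 1)^2 * t / 4) - r^2 / (4 * t) - ((n : ℝ) - 1) * r / 2) *
          ((1 + r + t) ^ q * (1 + r)) := by
      rw [hcLdef]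
      have h1r : (1 : ℝ) ≤ 1 + r := by linarith
      calc (3 : ℝ) ^ (-(n : ℝ)) * Real.exp (-(((n : ℝ) - 1)^2 / 4) - 1/2 - ((n : ℝ) - 1) / 2)
          ≤ ((1 + r + t) ^ q * (1 + r)) *
            Real.exp (-(((n : ℝ) - 1)^2 * t / 4) - r^2 / (4 * t) - ((n : ℝ) - 1) * r / 2) := by
            apply mul_le_mul _ hE (Real.exp_nonneg _) _
            · calc (3 : ℝ) ^ (-(n : ℝ)) ≤ (1 + r + t) ^ q := hB
              _ = (1 + r + t) ^ q * 1 := by ring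
              _ ≤ (1 + r + t) ^ q * (1 + r) :=
                  mul_le_mul_of_nonneg_left h1r (Real.rpow_nonneg (by linarith) _)
            · positivity
      _ = Real.exp (-(((n : ℝ) - 1)^2 * t / 4) - r^2 / (4 * t) - ((n : ℝ) - 1) * r / 2) *
            ((1 + r + t) ^ q * (1 + r)) := by ring
    rw [hfr, ← hsq]
    calc cL * (r ^ 2) ^ (-(n : ℝ)/2 - 1) ≤ cL * t ^ (-(n : ℝ)/2 - 1) :=
        mul_le_mul_of_nonneg_left hT hcLpos.le
    _ = t ^ (-(n : ℝ)/2 - 1) * cL := by ring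
    _ ≤ t ^ (-(n : ℝ)/2 - 1) *
          (Real.exp (-(((n : ℝ) - 1)^2 * t / 4) - r^2 / (4 * t) - ((n : ℝ) - 1) * r / 2) *
            ((1 + r + t) ^ q * (1 + r))) :=
        mul_le_mul_of_nonneg_left hlow2 (Real.rpow_nonneg ht0.le _)
  -- the split of the integral
  have hsplit : ∫ t in Set.Ioc (0 : ℝ) 1, f t =
      (∫ t in Set.Ioc (0 : ℝ) (r ^ 2), f t) + ∫ t in Set.Ioc (r ^ 2) 1, f t := by
    rw [← Set.Ioc_union_Ioc_eq_Ioc hr2.le hr21] at hint ⊢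
    exact setIntegral_union (Set.Ioc_disjoint_Ioc_of_le le_rfl) measurableSet_Ioc
      (hint.mono_set Set.subset_union_left) (hint.mono_set Set.subset_union_right)
  -- upper bound for the first piece
  have hpiece1 : (∫ t in Set.Ioc (0 : ℝ) (r ^ 2), f t) ≤ C₁ * r ^ (-(n : ℝ)) := by
    have h1 : (∫ t in Set.Ioc (0 : ℝ) (r ^ 2), f t) ≤
        ∫ _t in Set.Ioc (0 : ℝ) (r ^ 2), C₁ * r ^ (-(n : ℝ) - 2) := by
      apply setIntegral_mono_on
        (hint.mono_set (Set.Ioc_subset_Ioc le_rfl hr21))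
        (integrableOn_const measure_Ioc_lt_top.ne) measurableSet_Ioc hup1
    have h2 : (∫ _t in Set.Ioc (0 : ℝ) (r ^ 2), C₁ * r ^ (-(n : ℝ) - 2)) =
        C₁ * r ^ (-(n : ℝ)) := by
      rw [setIntegral_const, measureReal_def, Real.volume_Ioc, smul_eq_mul,
        ENNReal.toReal_ofReal (by linarith)]
      have : (r ^ 2 - 0) = r ^ (2 : ℝ) := by
        rw [← Real.rpow_natCast r 2]; norm_num
      rw [this, mul_comm, mul_assoc, ← Real.rpow_add hr]
      norm_num
    linarith
  -- upper bound for the second piece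
  have hrpowval : (r ^ 2) ^ (-(n : ℝ)/2) = r ^ (-(n : ℝ)) := by
    rw [aux_rpow_sq r hr]; ring_nf
  have hpiece2 : (∫ t in Set.Ioc (r ^ 2) 1, f t) ≤ C₂ * r ^ (-(n : ℝ)) := by
    have hgint : IntegrableOn (fun t : ℝ => C₂ * t ^ (-(n : ℝ)/2 - 1)) (Set.Ioc (r ^ 2) 1) := by
      apply IntegrableOn.mono_set _ Set.Ioc_subset_Icc_self
      apply ContinuousOn.integrableOn_Icc
      apply ContinuousOn.mul continuousOn_const
      apply ContinuousOn.rpow_const continuousOn_id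
      intro x hx
      exact Or.inl (ne_of_gt (lt_of_lt_of_le hr2 hx.1))
    have h1 : (∫ t in Set.Ioc (r ^ 2) 1, f t) ≤
        ∫ t in Set.Ioc (r ^ 2) 1, C₂ * t ^ (-(n : ℝ)/2 - 1) := by
      apply setIntegral_mono_on (hint.mono_set (Set.Ioc_subset_Ioc hr2.le le_rfl))
        hgint measurableSet_Ioc hup2
    have h2 : (∫ t in Set.Ioc (r ^ 2) 1, (t : ℝ) ^ (-(n : ℝ)/2 - 1)) =
        ((r ^ 2) ^ (-(n : ℝ)/2) - 1) / ((n : ℝ)/2) := by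
      rw [← intervalIntegral.integral_of_le hr21]
      have hne : -(n : ℝ)/2 - 1 ≠ -1 := by
        apply ne_of_lt; linarith
      have hmem : (0 : ℝ) ∉ Set.uIcc (r ^ 2) 1 := by
        rw [Set.uIcc_of_le hr21]
        intro h
        exact absurd h.1 (not_le.2 hr2)
      rw [integral_rpow (Or.inr ⟨hne, hmem⟩)]
      have e1 : -(n : ℝ)/2 - 1 + 1 = -(n : ℝ)/2 := by ring
      rw [e1, Real.one_rpow]
      rw [div_eq_div_iff (ne_of_lt (by linarith : -(n : ℝ)/2 < 0))
        (ne_of_gt (by linarith : (0 : ℝ) < (n : ℝ)/2))]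
      ring
    have hX1 : (1 : ℝ) ≤ r ^ (-(n : ℝ)) := by
      rw [← Real.rpow_zero r]
      exact Real.rpow_le_rpow_of_exponent_ge hr hr1 (by linarith)
    have h3 : ((r ^ 2) ^ (-(n : ℝ)/2) - 1) / ((n : ℝ)/2) ≤ r ^ (-(n : ℝ)) := by
      rw [hrpowval]
      calc (r ^ (-(n : ℝ)) - 1) / ((n : ℝ)/2) ≤ r ^ (-(n : ℝ)) - 1 :=
          div_le_self (by linarith) (by linarith)
      _ ≤ r ^ (-(n : ℝ)) := by linarith
    calc (∫ t in Set.Ioc (r ^ 2) 1, f t)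
        ≤ ∫ t in Set.Ioc (r ^ 2) 1, C₂ * t ^ (-(n : ℝ)/2 - 1) := h1
    _ = C₂ * ∫ t in Set.Ioc (r ^ 2) 1, (t : ℝ) ^ (-(n : ℝ)/2 - 1) := integral_const_mul _ _
    _ = C₂ * (((r ^ 2) ^ (-(n : ℝ)/2) - 1) / ((n : ℝ)/2)) := by rw [h2]
    _ ≤ C₂ * r ^ (-(n : ℝ)) := mul_le_mul_of_nonneg_left h3 hC₂pos.le
  -- upper bound
  have hupper : (∫ t in Set.Ioc (0 : ℝ) 1, f t) ≤ (C₁ + C₂) * r ^ (-(n : ℝ)) := by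
    rw [hsplit]
    calc (∫ t in Set.Ioc (0 : ℝ) (r ^ 2), f t) + ∫ t in Set.Ioc (r ^ 2) 1, f t
        ≤ C₁ * r ^ (-(n : ℝ)) + C₂ * r ^ (-(n : ℝ)) := add_le_add hpiece1 hpiece2
    _ = (C₁ + C₂) * r ^ (-(n : ℝ)) := by ring
  -- lower bound
  have hsub : Set.Ioc (r ^ 2 / 2) (r ^ 2) ⊆ Set.Ioc (0 : ℝ) 1 :=
    Set.Ioc_subset_Ioc (by positivity) hr21
  have hvol : (volume (Set.Ioc (r ^ 2 / 2) (r ^ 2))).toReal = r ^ 2 / 2 := by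
    rw [Real.volume_Ioc, ENNReal.toReal_ofReal (by linarith)]
    ring
  have hlb : cL * r ^ (-(n : ℝ) - 2) * (r ^ 2 / 2) ≤
      ∫ t in Set.Ioc (r ^ 2 / 2) (r ^ 2), f t := by
    have h := setIntegral_ge_of_const_le (μ := volume) measurableSet_Ioc
      (ne_of_lt measure_Ioc_lt_top) hlow (hint.mono_set hsub)
    rwa [measureReal_def, hvol, smul_eq_mul, mul_comm] at h
  have hmono : (∫ t in Set.Ioc (r ^ 2 / 2) (r ^ 2), f t) ≤
      ∫ t in Set.Ioc (0 : ℝ) 1, f t := by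
    apply setIntegral_mono_set hint
    · rw [Filter.EventuallyLE, ae_restrict_iff' measurableSet_Ioc]
      filter_upwards with t
      intro ht
      exact hfnn t ht
    · exact HasSubset.Subset.eventuallyLE hsub
  have hrid : r ^ (-(n : ℝ) - 2) * (r ^ 2 / 2) = r ^ (-(n : ℝ)) / 2 := by
    have e2 : r ^ (-(n : ℝ) - 2) * r ^ ((2 : ℕ) : ℝ) = r ^ (-(n : ℝ)) := by
      rw [← Real.rpow_add hr]; norm_num
    rw [← Real.rpow_natCast r 2]
    calc r ^ (-(n : ℝ) - 2) * (r ^ ((2 : ℕ) : ℝ) / 2)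
        = (r ^ (-(n : ℝ) - 2) * r ^ ((2 : ℕ) : ℝ)) / 2 := by ring
    _ = r ^ (-(n : ℝ)) / 2 := by rw [e2]
  have hlower : cL / 2 * r ^ (-(n : ℝ)) ≤ ∫ t in Set.Ioc (0 : ℝ) 1, f t := by
    have : cL * r ^ (-(n : ℝ) - 2) * (r ^ 2 / 2) = cL / 2 * r ^ (-(n : ℝ)) := by
      rw [mul_assoc, hrid]; ring
    rw [← this]
    exact le_trans hlb hmono
  constructor
  · calc (max (C₁ + C₂) (2 / cL))⁻¹ * r ^ (-(n : ℝ))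
        ≤ cL / 2 * r ^ (-(n : ℝ)) := by
          apply mul_le_mul_of_nonneg_right _ hrn.le
          have h1 : 2 / cL ≤ max (C₁ + C₂) (2 / cL) := le_max_right _ _
          have h2 : (0 : ℝ) < 2 / cL := by positivity
          calc (max (C₁ + C₂) (2 / cL))⁻¹ ≤ (2 / cL)⁻¹ :=
            inv_anti₀ h2 h1
          _ = cL / 2 := by rw [inv_div]
    _ ≤ _ := hlower
  · calc (∫ t in Set.Ioc (0 : ℝ) 1, f t) ≤ (C₁ + C₂) * r ^ (-(n : ℝ)) := hupper
    _ ≤ max (C₁ + C₂) (2 / cL) * r ^ (-(n : ℝ)) :=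
        mul_le_mul_of_nonneg_right (le_max_left _ _) hrn.le
end
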